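/- arXiv:1510.06574 — 7 statements merged into one kernel-verified Lean document; each statement's English description precedes it below -/
import Mathlib

section
/- For every fixed real p with 0 < p < 1 there is a constant C > 0 such that asymptotically almost surely the random graph G(n,p) has the following property: for every vertex set S with |S| ≤ C · log log n and every subset A ⊆ S, there exists a vertex v ∉ S such that N(v) ∩ S = A. -/
open MeasureTheory Filter

/-- The Erdős–Rényi measure `G(n,p)`: each potential edge (element of `Sym2 (Fin n)`)
is present independently with probability `p`. -/
noncomputable def gnp (n : ℕ) (p : ℝ) (hp : p ≤ 1) : Measure (Sym2 (Fin n) → Bool) :=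
  Measure.pi fun _ => (PMF.bernoulli (Real.toNNReal p) (Real.toNNReal_le_one.mpr hp)).toMeasure

/-- The simple graph determined by an edge-indicator function. -/
def graphOf {n : ℕ} (ω : Sym2 (Fin n) → Bool) : SimpleGraph (Fin n) where
  Adj x y := x ≠ y ∧ ω s(x, y) = true
  symm := ⟨fun x y => by
    rintro ⟨h1, h2⟩
    exact ⟨h1.symm, by rwa [Sym2.eq_swap]⟩⟩
  loopless := ⟨fun x => by simp⟩

instance {n : ℕ} (ω : Sym2 (Fin n) → Bool) : DecidableRel (graphOf ω).Adj :=
  fun x y => inferInstanceAs (Decidable (x ≠ y ∧ ω s(x, y) = true))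



lemma measurableSet_all {γ : Type*} [MeasurableSpace γ] [MeasurableSingletonClass γ] [Countable γ]
    (s : Set γ) : MeasurableSet s := s.to_countable.measurableSet

lemma pi_cylinder {ι β : Type*} [Fintype ι] [DecidableEq ι] [DecidableEq β]
    (μ : ι → Measure Bool)
    [∀ i, IsProbabilityMeasure (μ i)] (E : Finset β) (g : β → ι)
    (hg : Set.InjOn g E) (c : β → Bool) :
    Measure.pi μ {ω | ∀ u ∈ E, ω (g u) = c u} = ∏ u ∈ E, μ (g u) {c u} := by
  classical
  set t : ι → Set Bool := fun i => {y | ∀ u ∈ E, g u = i → y = c u} with ht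
  have hset : {ω : ι → Bool | ∀ u ∈ E, ω (g u) = c u} = Set.pi Set.univ t := by
    ext ω
    simp only [Set.mem_setOf_eq, Set.mem_pi, Set.mem_univ, forall_true_left, ht]
    constructor
    · rintro h i u hu rfl; exact h u hu
    · intro h u hu; exact h (g u) u hu rfl
  rw [hset, Measure.pi_pi]
  have h1 : ∏ i, μ i (t i) = ∏ i ∈ E.image g, μ i (t i) := by
    refine (Finset.prod_subset (Finset.subset_univ _) ?_).symm
    intro i _ hi
    have : t i = Set.univ := by
      ext y
      simp only [ht, Set.mem_setOf_eq, Set.mem_univ, iff_true]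
      intro u hu hgu
      exact absurd (Finset.mem_image_of_mem g hu) (by rwa [hgu] at *)
    rw [this]; exact measure_univ
  rw [h1, Finset.prod_image (fun u hu v hv h => hg hu hv h)]
  refine Finset.prod_congr rfl fun u hu => ?_
  congr 1
  ext y
  simp only [ht, Set.mem_setOf_eq, Set.mem_singleton_iff]
  constructor
  · intro h; exact h u hu rfl
  · rintro rfl u' hu' h
    rw [hg hu' hu h]

lemma pi_inter_of_disjoint {ι : Type*} [Fintype ι] (μ : ι → Measure Bool)
    [∀ i, IsProbabilityMeasure (μ i)] (E : Finset ι) (B R : Set (ι → Bool))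
    (hB : ∀ ω ω' : ι → Bool, (∀ i ∈ E, ω i = ω' i) → ω ∈ B → ω' ∈ B)
    (hR : ∀ ω ω' : ι → Bool, (∀ i ∉ E, ω i = ω' i) → ω ∈ R → ω' ∈ R) :
    Measure.pi μ (B ∩ R) = Measure.pi μ B * Measure.pi μ R := by
  classical
  set pE : ι → Prop := fun i => i ∈ E with hpE
  haveI : DecidablePred pE := fun i => inferInstanceAs (Decidable (i ∈ E))
  set e := MeasurableEquiv.piEquivPiSubtypeProd (fun _ : ι => Bool) pE with he
  have hmp := measurePreserving_piEquivPiSubtypeProd μ pE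
  set B₁ : Set (∀ _ : Subtype pE, Bool) := {x | ∃ ω ∈ B, ∀ i : Subtype pE, x i = ω i} with hB₁
  set R₁ : Set (∀ _ : {i // ¬ pE i}, Bool) := {x | ∃ ω ∈ R, ∀ i : {i // ¬ pE i}, x i = ω i} with hR₁
  have hBm : ∀ ω : ι → Bool, (e ω).1 ∈ B₁ ↔ ω ∈ B := by
    intro ω
    constructor
    · rintro ⟨ω', hω', hagree⟩
      refine hB ω' ω (fun i hi => ?_) hω'
      exact (hagree ⟨i, hi⟩).symm
    · intro h; exact ⟨ω, h, fun i => rfl⟩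
  have hRm : ∀ ω : ι → Bool, (e ω).2 ∈ R₁ ↔ ω ∈ R := by
    intro ω
    constructor
    · rintro ⟨ω', hω', hagree⟩
      refine hR ω' ω (fun i hi => ?_) hω'
      exact (hagree ⟨i, hi⟩).symm
    · intro h; exact ⟨ω, h, fun i => rfl⟩
  have key : ∀ (S₁ : Set (∀ _ : Subtype pE, Bool)) (S₂ : Set (∀ _ : {i // ¬ pE i}, Bool)),
      Measure.pi μ (e ⁻¹' (S₁ ×ˢ S₂)) =
        (Measure.pi fun i : Subtype pE => μ i) S₁ * (Measure.pi fun i : {i // ¬ pE i} => μ i) S₂ := by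
    intro S₁ S₂
    rw [hmp.measure_preimage (measurableSet_all _).nullMeasurableSet, Measure.prod_prod]
    congr!
  have hBR : B ∩ R = e ⁻¹' (B₁ ×ˢ R₁) := by
    ext ω; simp only [Set.mem_inter_iff, Set.mem_preimage, Set.mem_prod, hBm, hRm]
  have hBeq : B = e ⁻¹' (B₁ ×ˢ Set.univ) := by
    ext ω; simp only [Set.mem_preimage, Set.mem_prod, Set.mem_univ, and_true, hBm]
  have hReq : R = e ⁻¹' ((Set.univ : Set (∀ _ : Subtype pE, Bool)) ×ˢ R₁) := by
    ext ω; simp only [Set.mem_preimage, Set.mem_prod, Set.mem_univ, true_and, hRm]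
  rw [hBR, hBeq, hReq, key, key, key, measure_univ, measure_univ]
  ring

lemma pi_iInter_blocks {ι κ : Type*} [Fintype ι] [DecidableEq ι] [DecidableEq κ]
    (μ : ι → Measure Bool)
    [∀ i, IsProbabilityMeasure (μ i)] (T : Finset κ) (E : κ → Finset ι)
    (B : κ → Set (ι → Bool)) :
    (∀ u ∈ T, ∀ v ∈ T, u ≠ v → Disjoint (E u) (E v)) →
    (∀ v ∈ T, ∀ ω ω' : ι → Bool, (∀ i ∈ E v, ω i = ω' i) → ω ∈ B v → ω' ∈ B v) →
    Measure.pi μ (⋂ v ∈ T, B v) = ∏ v ∈ T, Measure.pi μ (B v) := by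
  classical
  induction T using Finset.induction_on with
  | empty => intro _ _; simp
  | @insert a T' ha ih =>
    intro hdisj hB
    rw [Finset.set_biInter_insert, Finset.prod_insert ha]
    rw [pi_inter_of_disjoint μ (E a) (B a) (⋂ v ∈ T', B v)
        (hB a (Finset.mem_insert_self a T'))
        (by
          intro ω ω' hagree hω
          simp only [Set.mem_iInter] at hω ⊢
          intro v hv
          refine hB v (Finset.mem_insert_of_mem hv) ω ω' (fun i hi => ?_) (hω v hv)
          refine hagree i fun hiEa => ?_
          have hne : v ≠ a := fun h => ha (h ▸ hv)
          exact (Finset.disjoint_left.mp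
            (hdisj v (Finset.mem_insert_of_mem hv) a (Finset.mem_insert_self a T') hne)) hi hiEa)]
    rw [ih (fun u hu v hv huv => hdisj u (Finset.mem_insert_of_mem hu) v (Finset.mem_insert_of_mem hv) huv)
        (fun v hv => hB v (Finset.mem_insert_of_mem hv))]

def GoodSet (n : ℕ) (S A : Finset (Fin n)) (v : Fin n) : Set (Sym2 (Fin n) → Bool) :=
  {ω | ∀ u ∈ S, ω s(v, u) = decide (u ∈ A)}

def BadSet (n : ℕ) (S A : Finset (Fin n)) : Set (Sym2 (Fin n) → Bool) :=
  ⋂ v ∈ Sᶜ, (GoodSet n S A v)ᶜ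

instance gnp_prob (n : ℕ) (p : ℝ) (hp : p ≤ 1) :
    IsProbabilityMeasure (gnp n p hp) := by
  unfold gnp; infer_instance

lemma goodSet_iff {n : ℕ} {S A : Finset (Fin n)} (hA : A ⊆ S) {v : Fin n} (hv : v ∉ S)
    (ω : Sym2 (Fin n) → Bool) :
    ω ∈ GoodSet n S A v ↔ (graphOf ω).neighborFinset v ∩ S = A := by
  simp only [GoodSet, Set.mem_setOf_eq]
  constructor
  · intro h
    ext u
    simp only [Finset.mem_inter, SimpleGraph.mem_neighborFinset]
    constructor
    · rintro ⟨hadj, huS⟩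
      have := h u huS
      rcases hadj with ⟨-, hω⟩
      rw [hω] at this
      exact of_decide_eq_true this.symm
    · intro huA
      have huS := hA huA
      refine ⟨⟨fun h' => hv (h' ▸ huS), ?_⟩, huS⟩
      rw [h u huS, decide_eq_true_eq]
      exact huA
  · intro h u huS
    by_cases huA : u ∈ A
    · have : u ∈ (graphOf ω).neighborFinset v ∩ S := h ▸ huA
      simp only [Finset.mem_inter, SimpleGraph.mem_neighborFinset] at this
      rw [this.1.2]
      simp [huA]
    · have : u ∉ (graphOf ω).neighborFinset v ∩ S := fun hc => huA (h ▸ hc)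
      simp only [Finset.mem_inter, SimpleGraph.mem_neighborFinset] at this
      rw [decide_eq_false huA]
      by_contra hω
      have hωt : ω s(v, u) = true := by
        cases hb : ω s(v, u) with
        | false => exact absurd hb hω
        | true => rfl
      exact this ⟨⟨fun h' => hv (h' ▸ huS), hωt⟩, huS⟩

lemma goodSet_measure (n : ℕ) (p : ℝ) (hp0 : 0 ≤ p) (hp : p ≤ 1)
    (S A : Finset (Fin n)) {v : Fin n} (hv : v ∉ S) :
    gnp n p hp (GoodSet n S A v)
      = ∏ u ∈ S, (if u ∈ A then ENNReal.ofReal p else ENNReal.ofReal (1 - p)) := by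
  classical
  have hinj : Set.InjOn (fun u => s(v, u)) S := by
    intro u hu u' hu' h
    simp only [Sym2.eq, Sym2.rel_iff', Prod.mk.injEq, Prod.swap_prod_mk] at h
    rcases h with ⟨-, h⟩ | ⟨h1, -⟩
    · exact h
    · exact absurd (h1 ▸ hu' : v ∈ S) hv
  have := pi_cylinder (fun _ : Sym2 (Fin n) =>
      (PMF.bernoulli (Real.toNNReal p) (Real.toNNReal_le_one.mpr hp)).toMeasure)
      S (fun u => s(v, u)) hinj (fun u => decide (u ∈ A))
  unfold gnp GoodSet
  rw [this]
  refine Finset.prod_congr rfl fun u hu => ?_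
  rw [PMF.toMeasure_apply_singleton _ _ (measurableSet_singleton _), PMF.bernoulli_apply]
  by_cases huA : u ∈ A
  · simp [huA]; rfl
  · have h1 : (1 : ENNReal) - ENNReal.ofReal p = ENNReal.ofReal (1 - p) := by
      rw [← ENNReal.ofReal_one, ← ENNReal.ofReal_sub _ hp0]
    simp [huA, h1]; exact h1


lemma badSet_measure_le (n : ℕ) (p : ℝ) (hp0 : 0 < p) (hp1 : p < 1)
    (S A : Finset (Fin n)) :
    gnp n p hp1.le (BadSet n S A)
      ≤ ENNReal.ofReal ((1 - (min p (1 - p)) ^ S.card) ^ (n - S.card)) := by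
  classical
  set q := min p (1 - p) with hqdef
  have hq0 : 0 < q := lt_min hp0 (by linarith)
  have hqle1 : q ≤ 1 := (min_le_left _ _).trans hp1.le
  have hdisj : ∀ u ∈ Sᶜ, ∀ v ∈ Sᶜ, u ≠ v →
      Disjoint (S.image fun w => s(u, w)) (S.image fun w => s(v, w)) := by
    intro u hu v hv huv
    rw [Finset.mem_compl] at hu hv
    rw [Finset.disjoint_left]
    rintro i hi hi'
    simp only [Finset.mem_image] at hi hi'
    obtain ⟨a, ha, rfl⟩ := hi
    obtain ⟨b, hb, hab⟩ := hi'
    simp only [Sym2.eq, Sym2.rel_iff', Prod.mk.injEq, Prod.swap_prod_mk] at hab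
    rcases hab with ⟨h1, -⟩ | ⟨h1, h2⟩
    · exact huv h1.symm
    · exact hv (h1 ▸ ha)
  have hinv : ∀ v ∈ Sᶜ, ∀ ω ω' : Sym2 (Fin n) → Bool,
      (∀ i ∈ S.image (fun w => s(v, w)), ω i = ω' i) →
      ω ∈ (GoodSet n S A v)ᶜ → ω' ∈ (GoodSet n S A v)ᶜ := by
    intro v hv ω ω' hagree hω hω'
    apply hω
    intro u hu
    rw [hagree s(v, u) (Finset.mem_image_of_mem _ hu)]
    exact hω' u hu
  have hkey : gnp n p hp1.le (BadSet n S A)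
      = ∏ v ∈ Sᶜ, gnp n p hp1.le ((GoodSet n S A v)ᶜ) :=
    pi_iInter_blocks _ Sᶜ (fun v => S.image fun w => s(v, w))
      (fun v => (GoodSet n S A v)ᶜ) hdisj hinv
  rw [hkey]
  have hfac : ∀ v ∈ Sᶜ, gnp n p hp1.le ((GoodSet n S A v)ᶜ)
      ≤ 1 - ENNReal.ofReal (q ^ S.card) := by
    intro v hv
    rw [Finset.mem_compl] at hv
    rw [prob_compl_eq_one_sub (measurableSet_all _)]
    refine tsub_le_tsub_left ?_ 1
    rw [goodSet_measure n p hp0.le hp1.le S A hv, ENNReal.ofReal_pow hq0.le]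
    rw [← Finset.prod_const]
    refine Finset.prod_le_prod' fun u _ => ?_
    by_cases huA : u ∈ A
    · simp only [huA, if_true]
      exact ENNReal.ofReal_le_ofReal (min_le_left _ _)
    · simp only [huA, if_false]
      exact ENNReal.ofReal_le_ofReal (min_le_right _ _)
  calc ∏ v ∈ Sᶜ, gnp n p hp1.le ((GoodSet n S A v)ᶜ)
      ≤ ∏ _v ∈ Sᶜ, (1 - ENNReal.ofReal (q ^ S.card)) := Finset.prod_le_prod' hfac
    _ = (1 - ENNReal.ofReal (q ^ S.card)) ^ (Sᶜ.card) := Finset.prod_const _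
    _ = ENNReal.ofReal ((1 - q ^ S.card)) ^ (n - S.card) := by
        rw [Finset.card_compl, Fintype.card_fin]
        congr 1
        rw [← ENNReal.ofReal_one, ← ENNReal.ofReal_sub _ (pow_nonneg hq0.le _)]
    _ = ENNReal.ofReal ((1 - q ^ S.card) ^ (n - S.card)) :=
        (ENNReal.ofReal_pow (sub_nonneg.mpr (pow_le_one₀ hq0.le hqle1)) _).symm


lemma real_pow_mono_aux {q : ℝ} (hq0 : 0 < q) (hq1 : q ≤ 1) {s m n : ℕ} (hsm : s ≤ m) :
    (1 - q ^ s) ^ (n - s) ≤ (1 - q ^ m) ^ (n - m) := by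
  have h0s : (0:ℝ) ≤ 1 - q ^ s := sub_nonneg.mpr (pow_le_one₀ hq0.le hq1)
  have h0m : (0:ℝ) ≤ 1 - q ^ m := sub_nonneg.mpr (pow_le_one₀ hq0.le hq1)
  have h1 : (1 - q ^ s) ^ (n - s) ≤ (1 - q ^ m) ^ (n - s) :=
    pow_le_pow_left₀ h0s (sub_le_sub_left (pow_le_pow_of_le_one hq0.le hq1 hsm) 1) _
  have h2 : (1 - q ^ m) ^ (n - s) ≤ (1 - q ^ m) ^ (n - m) :=
    pow_le_pow_of_le_one h0m (by nlinarith [pow_nonneg hq0.le m]) (Nat.sub_le_sub_left hsm n)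
  exact h1.trans h2

lemma union_bound (n m : ℕ) (hn : 1 ≤ n) (p : ℝ) (hp0 : 0 < p) (hp1 : p < 1) :
    gnp n p hp1.le {ω | ∃ S : Finset (Fin n), S.card ≤ m ∧ ∃ A, A ⊆ S ∧
        ∀ v, v ∉ S → (graphOf ω).neighborFinset v ∩ S ≠ A}
      ≤ (((m + 1) * n ^ m * 2 ^ m : ℕ) : ENNReal)
          * ENNReal.ofReal ((1 - (min p (1 - p)) ^ m) ^ (n - m)) := by
  classical
  set q := min p (1 - p) with hqdef
  have hq0 : 0 < q := lt_min hp0 (by linarith)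
  have hqle1 : q ≤ 1 := (min_le_left _ _).trans hp1.le
  set c := ENNReal.ofReal ((1 - q ^ m) ^ (n - m)) with hcdef
  set 𝒮 := Finset.univ.powerset.filter (fun S : Finset (Fin n) => S.card ≤ m) with h𝒮
  have hsub : {ω : Sym2 (Fin n) → Bool | ∃ S : Finset (Fin n), S.card ≤ m ∧ ∃ A, A ⊆ S ∧
      ∀ v, v ∉ S → (graphOf ω).neighborFinset v ∩ S ≠ A}
      ⊆ ⋃ S ∈ 𝒮, ⋃ A ∈ S.powerset, BadSet n S A := by
    rintro ω ⟨S, hcard, A, hAS, hbad⟩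
    have hS𝒮 : S ∈ 𝒮 := by
      simp only [h𝒮, Finset.mem_filter, Finset.mem_powerset]
      exact ⟨Finset.subset_univ S, hcard⟩
    have hbadmem : ω ∈ BadSet n S A := by
      simp only [BadSet, Set.mem_iInter]
      intro v hv
      rw [Finset.mem_compl] at hv
      intro hgood
      exact hbad v hv ((goodSet_iff hAS hv ω).mp hgood)
    exact Set.mem_biUnion hS𝒮 (Set.mem_biUnion (Finset.mem_powerset.mpr hAS) hbadmem)
  have hcount : 𝒮.card ≤ (m + 1) * n ^ m := by
    have hsub2 : 𝒮 ⊆ (Finset.range (m + 1)).biUnion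
        (fun s => Finset.powersetCard s (Finset.univ : Finset (Fin n))) := by
      intro S hS
      simp only [h𝒮, Finset.mem_filter, Finset.mem_powerset] at hS
      simp only [Finset.mem_biUnion, Finset.mem_range]
      exact ⟨S.card, Nat.lt_succ_of_le hS.2,
        Finset.mem_powersetCard.mpr ⟨Finset.subset_univ S, rfl⟩⟩
    calc 𝒮.card ≤ _ := Finset.card_le_card hsub2
      _ ≤ ∑ s ∈ Finset.range (m + 1), (Finset.powersetCard s (Finset.univ : Finset (Fin n))).card :=
          Finset.card_biUnion_le
      _ ≤ ∑ _s ∈ Finset.range (m + 1), n ^ m := by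
          refine Finset.sum_le_sum fun s hs => ?_
          rw [Finset.card_powersetCard, Finset.card_univ, Fintype.card_fin]
          exact (Nat.choose_le_pow n s).trans
            (Nat.pow_le_pow_right hn (Nat.lt_succ_iff.mp (Finset.mem_range.mp hs)))
      _ = (m + 1) * n ^ m := by rw [Finset.sum_const, Finset.card_range, smul_eq_mul]
  calc gnp n p hp1.le {ω : Sym2 (Fin n) → Bool | ∃ S : Finset (Fin n), S.card ≤ m ∧ ∃ A, A ⊆ S ∧
        ∀ v, v ∉ S → (graphOf ω).neighborFinset v ∩ S ≠ A}
      ≤ gnp n p hp1.le (⋃ S ∈ 𝒮, ⋃ A ∈ S.powerset, BadSet n S A) := measure_mono hsub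
    _ ≤ ∑ S ∈ 𝒮, gnp n p hp1.le (⋃ A ∈ S.powerset, BadSet n S A) :=
        measure_biUnion_finset_le _ _
    _ ≤ ∑ S ∈ 𝒮, ∑ A ∈ S.powerset, gnp n p hp1.le (BadSet n S A) :=
        Finset.sum_le_sum fun S _ => measure_biUnion_finset_le _ _
    _ ≤ ∑ S ∈ 𝒮, ∑ _A ∈ S.powerset, c := by
        refine Finset.sum_le_sum fun S hS => Finset.sum_le_sum fun A _ => ?_
        have hSm : S.card ≤ m := by
          simp only [h𝒮, Finset.mem_filter] at hS; exact hS.2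
        refine (badSet_measure_le n p hp0 hp1 S A).trans ?_
        exact ENNReal.ofReal_le_ofReal (real_pow_mono_aux hq0 hqle1 hSm)
    _ = ∑ S ∈ 𝒮, ((2 ^ S.card : ℕ) : ENNReal) * c := by
        refine Finset.sum_congr rfl fun S _ => ?_
        rw [Finset.sum_const, Finset.card_powerset, nsmul_eq_mul]
    _ ≤ ∑ _S ∈ 𝒮, ((2 ^ m : ℕ) : ENNReal) * c := by
        refine Finset.sum_le_sum fun S hS => ?_
        have hSm : S.card ≤ m := by
          simp only [h𝒮, Finset.mem_filter] at hS; exact hS.2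
        exact mul_le_mul_left (Nat.cast_le.mpr (Nat.pow_le_pow_right (by norm_num) hSm)) c
    _ = (𝒮.card : ENNReal) * (((2 ^ m : ℕ) : ENNReal) * c) := by
        rw [Finset.sum_const, nsmul_eq_mul]
    _ ≤ (((m + 1) * n ^ m : ℕ) : ENNReal) * (((2 ^ m : ℕ) : ENNReal) * c) :=
        mul_le_mul_left (Nat.cast_le.mpr hcount) _
    _ = (((m + 1) * n ^ m * 2 ^ m : ℕ) : ENNReal) * c := by
        push_cast
        ring

lemma loglog_small (c : ℝ) (hc : 0 < c) :
    ∀ᶠ n : ℕ in atTop, Real.logb 2 (Real.logb 2 n) ≤ c * Real.log n := by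
  have hl2 : (0:ℝ) < Real.log 2 := Real.log_pos one_lt_two
  have hlb : Tendsto (fun n : ℕ => Real.logb 2 (n : ℝ)) atTop atTop :=
    (Real.tendsto_logb_atTop one_lt_two).comp tendsto_natCast_atTop_atTop
  have hev := Real.isLittleO_log_id_atTop.def (show (0:ℝ) < c * Real.log 2 ^ 2 by positivity)
  have h1 : ∀ᶠ n : ℕ in atTop,
      ‖Real.log (Real.logb 2 n)‖ ≤ c * Real.log 2 ^ 2 * ‖Real.logb 2 (n:ℝ)‖ :=
    hlb.eventually (by simpa using hev)
  have h2 : ∀ᶠ n : ℕ in atTop, (1:ℝ) ≤ Real.logb 2 n := hlb.eventually_ge_atTop 1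
  filter_upwards [h1, h2] with n h1 h2
  have hpos : (0:ℝ) ≤ Real.logb 2 n := le_trans zero_le_one h2
  rw [Real.norm_eq_abs, Real.norm_eq_abs, abs_of_nonneg hpos] at h1
  have hle : Real.log (Real.logb 2 n) ≤ c * Real.log 2 ^ 2 * Real.logb 2 n :=
    (le_abs_self _).trans h1
  rw [Real.logb, div_le_iff₀ hl2]
  calc Real.log (Real.logb 2 n) ≤ c * Real.log 2 ^ 2 * Real.logb 2 n := hle
    _ = c * Real.log n * Real.log 2 := by
        rw [Real.logb]
        field_simp

lemma phi_atBot :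
    Tendsto (fun y : ℝ => y + y * (Real.log 2 + y) - (1/2) * Real.exp ((3/4) * y))
      atTop atBot := by
  have h34 : Tendsto (fun y : ℝ => (3/4) * y) atTop atTop :=
    Tendsto.const_mul_atTop (by norm_num) tendsto_id
  have hx2 : Tendsto (fun x : ℝ => x ^ 2 * Real.exp (-x)) atTop (nhds 0) :=
    Real.tendsto_pow_mul_exp_neg_atTop_nhds_zero 2
  have hsm : ∀ᶠ x : ℝ in atTop, x ^ 2 * Real.exp (-x) ≤ 1/100 :=
    hx2.eventually_le_const (by norm_num)
  have hev : ∀ᶠ y : ℝ in atTop, ((3/4) * y) ^ 2 * Real.exp (-((3/4) * y)) ≤ 1/100 :=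
    h34.eventually hsm
  have hbound : ∀ᶠ y : ℝ in atTop,
      y + y * (Real.log 2 + y) - (1/2) * Real.exp ((3/4) * y)
        ≤ -(1/4) * Real.exp ((3/4) * y) := by
    filter_upwards [hev, eventually_ge_atTop (2:ℝ)] with y hy hy2
    have hexp : (0:ℝ) < Real.exp ((3/4) * y) := Real.exp_pos _
    have hy0 : (0:ℝ) ≤ y := le_trans (by norm_num) hy2
    have h1 : ((3/4) * y) ^ 2 ≤ (1/100) * Real.exp ((3/4) * y) := by
      rw [Real.exp_neg] at hy
      have := (mul_le_mul_iff_left₀ hexp).mpr hy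
      calc ((3/4)*y)^2 = ((3/4)*y)^2 * (Real.exp ((3/4)*y))⁻¹ * Real.exp ((3/4)*y) := by
            field_simp
        _ ≤ 1/100 * Real.exp ((3/4)*y) := this
    have hlog2 : Real.log 2 ≤ 1 := by
      calc Real.log 2 ≤ 2 - 1 := Real.log_le_sub_one_of_pos (by norm_num)
        _ = 1 := by norm_num
    have h1' : (9/16) * y ^ 2 ≤ (1/100) * Real.exp ((3/4) * y) := by nlinarith [h1]
    have ha : y ≤ y ^ 2 := by nlinarith
    have hb : y * Real.log 2 ≤ y := by nlinarith
    linarith [h1', ha, hb, hexp.le]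
  refine tendsto_atBot_mono' atTop hbound ?_
  have hexp : Tendsto (fun y : ℝ => Real.exp ((3/4) * y)) atTop atTop :=
    Real.tendsto_exp_atTop.comp h34
  have h4 : Tendsto (fun y : ℝ => (1/4) * Real.exp ((3/4) * y)) atTop atTop :=
    Tendsto.const_mul_atTop (by norm_num) hexp
  have := tendsto_neg_atBot_iff.mpr h4
  refine this.congr fun y => by ring

lemma real_bound (q : ℝ) (hq0 : 0 < q) (hq1 : q < 1) (n mn : ℕ)
    (hn2 : 2 ≤ n)
    (hm_log : (mn : ℝ) ≤ Real.log n)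
    (hm_q : (mn : ℝ) * Real.log (1/q) ≤ (1/4) * Real.log n)
    (hm_half : (mn : ℝ) ≤ (n : ℝ)/2) :
    (((mn + 1) * n ^ mn * 2 ^ mn : ℕ) : ℝ) * (1 - q ^ mn) ^ (n - mn)
      ≤ Real.exp (Real.log n + Real.log n * (Real.log 2 + Real.log n)
          - (1/2) * Real.exp ((3/4) * Real.log n)) := by
  have hn2' : (2:ℝ) ≤ n := by exact_mod_cast hn2
  have hn0 : (0:ℝ) < n := by linarith
  have hlogn0 : (0:ℝ) ≤ Real.log n := Real.log_nonneg (by linarith)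
  have hlog2n0 : (0:ℝ) ≤ Real.log (2*n) := Real.log_nonneg (by linarith)
  have hmn_le_n : mn ≤ n := by
    have : (mn:ℝ) ≤ (n:ℝ) := by linarith
    exact_mod_cast this
  have hqpow1 : q ^ mn ≤ 1 := pow_le_one₀ hq0.le hq1.le
  have hqpow0 : 0 < q ^ mn := pow_pos hq0 _
  have bound1 : ((mn:ℝ) + 1) ≤ Real.exp (Real.log n) :=
    (Real.add_one_le_exp _).trans (Real.exp_le_exp.mpr hm_log)
  have bound2 : (n:ℝ) ^ mn * 2 ^ mn ≤ Real.exp (Real.log n * (Real.log 2 + Real.log n)) := by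
    have h1 : (n:ℝ) ^ mn * 2 ^ mn = (2 * n) ^ mn := by rw [mul_pow]; ring
    have h2 : ((2:ℝ) * n) ^ mn = Real.exp ((mn : ℝ) * Real.log (2 * n)) := by
      rw [← Real.exp_log (show (0:ℝ) < 2 * n by linarith), ← Real.exp_nat_mul, Real.log_exp]
    rw [h1, h2, Real.exp_le_exp, Real.log_mul two_ne_zero (ne_of_gt hn0)]
    exact mul_le_mul_of_nonneg_right hm_log (by rw [← Real.log_mul two_ne_zero (ne_of_gt hn0)]; exact hlog2n0)
  have bound3 : (1 - q ^ mn) ^ (n - mn)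
      ≤ Real.exp (-(1/2) * Real.exp ((3/4) * Real.log n)) := by
    have ha : 1 - q ^ mn ≤ Real.exp (-(q ^ mn)) := by
      linarith [Real.add_one_le_exp (-(q ^ mn))]
    have hb : (1 - q ^ mn) ^ (n - mn) ≤ (Real.exp (-(q ^ mn))) ^ (n - mn) :=
      pow_le_pow_left₀ (by linarith) ha _
    have hc : (Real.exp (-(q ^ mn))) ^ (n - mn)
        = Real.exp (((n - mn : ℕ) : ℝ) * (-(q ^ mn))) := (Real.exp_nat_mul _ _).symm
    have hcast : ((n - mn : ℕ) : ℝ) = (n:ℝ) - mn := by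
      push_cast [Nat.cast_sub hmn_le_n]; ring
    have hnm : (n:ℝ)/2 ≤ (n:ℝ) - mn := by linarith
    have hqm : Real.exp (-((1/4) * Real.log n)) ≤ q ^ mn := by
      have h1 : q ^ mn = Real.exp ((mn : ℝ) * Real.log q) := by
        rw [← Real.exp_log hq0, ← Real.exp_nat_mul, Real.log_exp]
      have h2 : (mn : ℝ) * Real.log q = -((mn : ℝ) * Real.log (1/q)) := by
        rw [one_div, Real.log_inv]; ring
      rw [h1, h2, Real.exp_le_exp]
      linarith
    have hd : (1/2) * Real.exp ((3/4) * Real.log n) ≤ ((n:ℝ) - mn) * q ^ mn := by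
      have hmul : (n:ℝ)/2 * Real.exp (-((1/4) * Real.log n)) ≤ ((n:ℝ) - mn) * q ^ mn :=
        mul_le_mul hnm hqm (Real.exp_pos _).le (by linarith)
      have heq : (n:ℝ)/2 * Real.exp (-((1/4) * Real.log n))
          = (1/2) * Real.exp ((3/4) * Real.log n) := by
        conv_lhs => rw [show (n:ℝ) = Real.exp (Real.log n) from (Real.exp_log hn0).symm]
        rw [div_mul_eq_mul_div, ← Real.exp_add, Real.log_exp,
          show Real.log n + -((1/4) * Real.log n) = (3/4) * Real.log n by ring]
        ring
      linarith
    refine hb.trans ?_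
    rw [hc, Real.exp_le_exp, hcast]
    nlinarith
  calc (((mn + 1) * n ^ mn * 2 ^ mn : ℕ) : ℝ) * (1 - q ^ mn) ^ (n - mn)
      = (((mn:ℝ) + 1) * ((n:ℝ) ^ mn * 2 ^ mn)) * (1 - q ^ mn) ^ (n - mn) := by
        push_cast; ring
    _ ≤ (Real.exp (Real.log n) * Real.exp (Real.log n * (Real.log 2 + Real.log n)))
          * Real.exp (-(1/2) * Real.exp ((3/4) * Real.log n)) := by
        refine mul_le_mul (mul_le_mul bound1 bound2 (by positivity) (Real.exp_pos _).le)
          bound3 (pow_nonneg (by linarith) _) (by positivity)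
    _ = Real.exp (Real.log n + Real.log n * (Real.log 2 + Real.log n)
          - (1/2) * Real.exp ((3/4) * Real.log n)) := by
        rw [← Real.exp_add, ← Real.exp_add]
        congr 1
        ring


/-- A.a.s., for every vertex set `S` of size at most `C · log log n`, every subset `A ⊆ S`
is the trace on `S` of the neighborhood of some vertex outside `S`. -/
theorem powerset_representation_aas (p : ℝ) (hp0 : 0 < p) (hp1 : p < 1) :
    ∃ C : ℝ, 0 < C ∧
      Tendsto (fun n : ℕ =>
        gnp n p hp1.le {ω | ∀ S : Finset (Fin n),
          (S.card : ℝ) ≤ C * Real.logb 2 (Real.logb 2 n) →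
          ∀ A ⊆ S, ∃ v ∉ S, (graphOf ω).neighborFinset v ∩ S = A})
        atTop (nhds 1) := by
  classical
  refine ⟨1, one_pos, ?_⟩
  set q := min p (1 - p) with hqdef
  have hq0 : 0 < q := lt_min hp0 (by linarith)
  have hq1 : q < 1 := lt_of_le_of_lt (min_le_left _ _) hp1
  set m : ℕ → ℕ := fun n => ⌊Real.logb 2 (Real.logb 2 n)⌋₊ with hm
  set Ev : (n : ℕ) → Set (Sym2 (Fin n) → Bool) := fun n => {ω | ∀ S : Finset (Fin n),
      (S.card : ℝ) ≤ 1 * Real.logb 2 (Real.logb 2 n) →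
      ∀ A ⊆ S, ∃ v ∉ S, (graphOf ω).neighborFinset v ∩ S = A} with hEv
  have hμc : ∀ n : ℕ, 1 ≤ n → gnp n p hp1.le ((Ev n)ᶜ)
      ≤ (((m n + 1) * n ^ m n * 2 ^ m n : ℕ) : ENNReal)
          * ENNReal.ofReal ((1 - q ^ m n) ^ (n - m n)) := by
    intro n hn
    refine le_trans (measure_mono ?_) (union_bound n (m n) hn p hp0 hp1)
    intro ω hω
    simp only [hEv, Set.mem_compl_iff, Set.mem_setOf_eq] at hω
    push_neg at hω
    obtain ⟨S, hcard, A, hAS, hA⟩ := hω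
    exact ⟨S, Nat.le_floor (by linarith), A, hAS, hA⟩
  have hlq0 : (0:ℝ) < Real.log (1/q) := Real.log_pos (by rw [lt_div_iff₀ hq0]; linarith)
  have hmK : ∀ᶠ n : ℕ in atTop, (m n : ℝ) ≤ Real.logb 2 (Real.logb 2 n) := by
    have hKtop : Tendsto (fun n : ℕ => Real.logb 2 (Real.logb 2 n)) atTop atTop :=
      (Real.tendsto_logb_atTop one_lt_two).comp
        ((Real.tendsto_logb_atTop one_lt_two).comp tendsto_natCast_atTop_atTop)
    filter_upwards [hKtop.eventually_ge_atTop 0] with n h0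
    exact Nat.floor_le h0
  have hhalf : ∀ᶠ n : ℕ in atTop, Real.log n ≤ (n:ℝ)/2 := by
    have h := Real.isLittleO_log_id_atTop.def (show (0:ℝ) < 1/2 by norm_num)
    have h' := tendsto_natCast_atTop_atTop.eventually h
    filter_upwards [h', eventually_ge_atTop 1] with n hn hn1
    have hn1' : (1:ℝ) ≤ n := by exact_mod_cast hn1
    simp only [Real.norm_eq_abs, id_eq] at hn
    calc Real.log n ≤ |Real.log n| := le_abs_self _
      _ ≤ 1/2 * |(n:ℝ)| := hn
      _ = (n:ℝ)/2 := by rw [abs_of_nonneg (by linarith : (0:ℝ) ≤ (n:ℝ))]; ring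
  have hbound : ∀ᶠ n : ℕ in atTop, gnp n p hp1.le ((Ev n)ᶜ)
      ≤ ENNReal.ofReal (Real.exp (Real.log n + Real.log n * (Real.log 2 + Real.log n)
          - (1/2) * Real.exp ((3/4) * Real.log n))) := by
    filter_upwards [hmK, hhalf, loglog_small 1 one_pos,
      loglog_small ((1/4)/Real.log (1/q)) (by positivity), eventually_ge_atTop 2]
      with n hmK' hhalf' h3 h1 hn2
    have hn1 : 1 ≤ n := le_trans (by norm_num) hn2
    have hm_log : (m n : ℝ) ≤ Real.log n := by
      calc (m n : ℝ) ≤ _ := hmK'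
        _ ≤ 1 * Real.log n := h3
        _ = Real.log n := one_mul _
    have hm_q : (m n : ℝ) * Real.log (1/q) ≤ (1/4) * Real.log n := by
      have hK1 : (m n : ℝ) ≤ ((1/4)/Real.log (1/q)) * Real.log n := hmK'.trans h1
      calc (m n : ℝ) * Real.log (1/q)
          ≤ (((1/4)/Real.log (1/q)) * Real.log n) * Real.log (1/q) :=
            mul_le_mul_of_nonneg_right hK1 hlq0.le
        _ = (1/4) * Real.log n := by field_simp
    have hm_half : (m n : ℝ) ≤ (n:ℝ)/2 := hm_log.trans hhalf'
    refine (hμc n hn1).trans ?_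
    rw [← ENNReal.ofReal_natCast, ← ENNReal.ofReal_mul (Nat.cast_nonneg _)]
    exact ENNReal.ofReal_le_ofReal (real_bound q hq0 hq1 n (m n) hn2 hm_log hm_q hm_half)
  have hGten : Tendsto (fun n : ℕ => Real.exp (Real.log n + Real.log n * (Real.log 2 + Real.log n)
      - (1/2) * Real.exp ((3/4) * Real.log n))) atTop (nhds 0) :=
    Real.tendsto_exp_atBot.comp
      (phi_atBot.comp (Real.tendsto_log_atTop.comp tendsto_natCast_atTop_atTop))
  have hbad0 : Tendsto (fun n : ℕ => gnp n p hp1.le ((Ev n)ᶜ)) atTop (nhds 0) := by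
    refine tendsto_of_tendsto_of_tendsto_of_le_of_le' tendsto_const_nhds
      ?_ (Eventually.of_forall fun n => zero_le) hbound
    have := ENNReal.tendsto_ofReal hGten
    simpa using this
  have hEvmeas : ∀ n : ℕ, gnp n p hp1.le (Ev n) = 1 - gnp n p hp1.le ((Ev n)ᶜ) := by
    intro n
    rw [← prob_compl_eq_one_sub (measurableSet_all _), compl_compl]
  have hfin : Tendsto (fun n : ℕ => gnp n p hp1.le (Ev n)) atTop (nhds 1) := by
    simp_rw [hEvmeas]
    have hc : Continuous (fun x : ENNReal => 1 - x) :=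
      ENNReal.continuous_sub_left ENNReal.one_ne_top
    have := (hc.tendsto 0).comp hbad0
    simpa [Function.comp_def] using this
  exact hfin
end

section
/- Let 0 < p < 1 and α be fixed real constants, and let m = m(n) be the nearest integer to np + h where h = √(2p(1−p)·n·(½ ln n − ln ln ln n + α)). Then Pr[Bin(n−1,p) = m] = Θ(ln ln n / n); that is, there exist constants C₁ ≥ C₂ > 0 and N₀ such that for all n ≥ N₀ one has C₂ · (ln ln n)/n ≤ Pr[Bin(n−1,p) = m] ≤ C₁ · (ln ln n)/n. -/
/-- `Pr[Bin(N,p) = k]`, the binomial point probability. -/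
noncomputable def binomProb (N : ℕ) (p : ℝ) (k : ℕ) : ℝ :=
  (N.choose k : ℝ) * p ^ k * (1 - p) ^ (N - k)

/-- `h = √(2p(1−p)·n·(½ ln n − ln ln ln n + α))`. -/
noncomputable def hShift (p α : ℝ) (n : ℕ) : ℝ :=
  Real.sqrt (2 * p * (1 - p) * n *
    ((1 / 2) * Real.log n - Real.log (Real.log (Real.log n)) + α))

/-- `m = m(n)`, the nearest integer to `np + h`. -/
noncomputable def mDeg (p α : ℝ) (n : ℕ) : ℕ :=
  (round ((n : ℝ) * p + hShift p α n)).toNat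

open Filter Real Stirling Nat Topology
/- ######################  auxiliary machinery  ###################### -/

lemma taylorLog {u : ℝ} (h : |u| ≤ 1/2) : |Real.log (1+u) - (u - u^2/2)| ≤ 2*|u|^3 := by
  have h1 : |(-u)| < 1 := by rw [abs_neg]; linarith [abs_nonneg u]
  have key := Real.abs_log_sub_add_sum_range_le h1 2
  simp [Finset.sum_range_succ] at key
  have hpos : (0:ℝ) < 1 - |u| := by linarith [abs_nonneg u]
  have h3 : |u|^3 / (1 - |u|) ≤ 2 * |u|^3 := by
    rw [div_le_iff₀ hpos]
    nlinarith [pow_nonneg (abs_nonneg u) 3]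
  have heq : |Real.log (1+u) - (u - u^2/2)| = |-u + u ^ 2 / (1 + 1) + Real.log (1 + u)| := by
    congr 1; ring
  rw [heq]; exact key.trans h3

lemma Hbound {p t : ℝ} (hp0 : 0 < p) (hp1 : p < 1) (ht : |t| ≤ p*(1-p)/2) :
    |(p+t)*Real.log ((p+t)/p) + ((1-p)-t)*Real.log (((1-p)-t)/(1-p)) - t^2/(2*p*(1-p))|
      ≤ (1/(2*p^2)+1/(2*(1-p)^2)+4/p^3+4/(1-p)^3) * |t|^3 := by
  set q : ℝ := 1 - p with hq
  have hq0 : 0 < q := by simp [hq]; linarith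
  have hq1 : q < 1 := by simp [hq]; linarith
  have hta : 0 ≤ |t| := abs_nonneg t
  have hb := abs_le.mp ht
  have ht2 : |t| ≤ 1/2 := ht.trans (by nlinarith)
  have hb2 := abs_le.mp ht2
  have hpt : |p+t| ≤ 2 := by rw [abs_le]; constructor <;> linarith
  have hqt : |q-t| ≤ 2 := by rw [abs_le]; constructor <;> linarith
  have hpq1 : p*q ≤ 1 := by nlinarith
  have hup : |t/p| ≤ 1/2 := by
    rw [abs_div, abs_of_pos hp0, div_le_iff₀ hp0]; nlinarith
  have hvq : |(-t)/q| ≤ 1/2 := by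
    rw [abs_div, abs_neg, abs_of_pos hq0, div_le_iff₀ hq0]; nlinarith
  have e1 := taylorLog hup
  have e2 := taylorLog hvq
  have hr1 : (p+t)/p = 1 + t/p := by field_simp
  have hr2 : (q-t)/q = 1 + (-t)/q := by field_simp; ring
  rw [hr1, hr2]
  set E1 : ℝ := Real.log (1+t/p) - (t/p - (t/p)^2/2) with hE1
  set E2 : ℝ := Real.log (1+(-t)/q) - ((-t)/q - ((-t)/q)^2/2) with hE2
  have key : (p+t)*Real.log (1+t/p) + (q-t)*Real.log (1+(-t)/q) - t^2/(2*p*q)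
      = (t^3/(2*q^2) - t^3/(2*p^2)) + ((p+t)*E1 + (q-t)*E2) := by
    rw [hE1, hE2]; field_simp; ring
  rw [key]
  have habs1 : |E1| ≤ 2*|t|^3/p^3 := by
    rw [abs_div, abs_of_pos hp0, div_pow] at e1
    calc |E1| ≤ 2*(|t|^3/p^3) := e1
      _ = 2*|t|^3/p^3 := by ring
  have habs2 : |E2| ≤ 2*|t|^3/q^3 := by
    rw [abs_div, abs_neg, abs_of_pos hq0, div_pow] at e2
    calc |E2| ≤ 2*(|t|^3/q^3) := e2
      _ = 2*|t|^3/q^3 := by ring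
  have A1 : |(t^3/(2*q^2) - t^3/(2*p^2)) + ((p+t)*E1 + (q-t)*E2)|
      ≤ |t^3/(2*q^2)| + |t^3/(2*p^2)| + |p+t| * |E1| + |q-t| * |E2| := by
    have i1 := abs_add_le (t^3/(2*q^2) - t^3/(2*p^2)) ((p+t)*E1 + (q-t)*E2)
    have i2 := abs_sub (t^3/(2*q^2)) (t^3/(2*p^2))
    have i3 := abs_add_le ((p+t)*E1) ((q-t)*E2)
    rw [abs_mul, abs_mul] at i3
    linarith
  have h4 : |t^3/(2*q^2)| = |t|^3/(2*q^2) := by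
    rw [abs_div, abs_pow, abs_of_pos (by positivity : (0:ℝ) < 2*q^2)]
  have h5 : |t^3/(2*p^2)| = |t|^3/(2*p^2) := by
    rw [abs_div, abs_pow, abs_of_pos (by positivity : (0:ℝ) < 2*p^2)]
  have m1 : |p+t| * |E1| ≤ 2*(2*|t|^3/p^3) :=
    mul_le_mul hpt habs1 (abs_nonneg _) (by norm_num)
  have m2 : |q-t| * |E2| ≤ 2*(2*|t|^3/q^3) :=
    mul_le_mul hqt habs2 (abs_nonneg _) (by norm_num)
  have heq : (1/(2*p^2)+1/(2*q^2)+4/p^3+4/q^3) * |t|^3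
      = |t|^3/(2*q^2) + |t|^3/(2*p^2) + 2*(2*|t|^3/p^3) + 2*(2*|t|^3/q^3) := by
    field_simp; ring
  rw [heq] at *
  linarith [A1, h4, h5]

lemma fact_eq {m : ℕ} (hm : 1 ≤ m) :
    (m ! : ℝ) = stirlingSeq m * (Real.sqrt (2*m) * ((m:ℝ)/Real.exp 1)^m) := by
  have hm0 : (0:ℝ) < m := by exact_mod_cast hm
  rw [stirlingSeq]
  rw [div_mul_cancel₀]
  positivity

lemma stirlingSeq_pos {m : ℕ} (hm : 1 ≤ m) : 0 < stirlingSeq m := by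
  obtain ⟨m, rfl⟩ := Nat.exists_eq_add_of_le hm
  simpa [Nat.add_comm] using stirlingSeq'_pos m

lemma decomp (p : ℝ) (hp0 : 0 < p) (hp1 : p < 1) (N k : ℕ) (hk1 : 1 ≤ k) (hkN : k + 1 ≤ N) :
    binomProb N p k = (stirlingSeq N / (stirlingSeq k * stirlingSeq (N - k))) *
      Real.sqrt ((N:ℝ)/(2*(k:ℝ)*((N - k : ℕ):ℝ))) *
      Real.exp (-((k:ℝ)*Real.log ((k:ℝ)/((N:ℝ)*p)) +
        ((N - k : ℕ):ℝ)*Real.log (((N - k : ℕ):ℝ)/((N:ℝ)*(1-p))))) := by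
  obtain ⟨q, hqdef⟩ : ∃ q : ℝ, q = 1 - p := ⟨_, rfl⟩
  rw [← hqdef]
  have hq0 : 0 < q := by rw [hqdef]; linarith
  set k' : ℕ := N - k with hk'def
  have hk'1 : 1 ≤ k' := by omega
  have hkk' : k + k' = N := by omega
  have hkN' : k ≤ N := by omega
  have hk0 : (0:ℝ) < k := by exact_mod_cast hk1
  have hk'0 : (0:ℝ) < k' := by exact_mod_cast hk'1
  have hN0 : (0:ℝ) < N := by
    have h : 0 < N := by omega
    exact_mod_cast h
  have hNcast : (N:ℝ) = (k:ℝ) + (k':ℝ) := by exact_mod_cast hkk'.symm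
  have hexp : Real.exp (-((k:ℝ)*Real.log ((k:ℝ)/((N:ℝ)*p)) + (k':ℝ)*Real.log ((k':ℝ)/((N:ℝ)*q))))
      = ((N:ℝ)*p/(k:ℝ))^k * ((N:ℝ)*q/(k':ℝ))^k' := by
    have l1 : -((k:ℝ)*Real.log ((k:ℝ)/((N:ℝ)*p)) + (k':ℝ)*Real.log ((k':ℝ)/((N:ℝ)*q)))
        = (k:ℝ)*Real.log ((N:ℝ)*p/(k:ℝ)) + (k':ℝ)*Real.log ((N:ℝ)*q/(k':ℝ)) := by
      rw [Real.log_div (by positivity) (by positivity), Real.log_div (by positivity) (by positivity),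
        Real.log_div (by positivity) (by positivity), Real.log_div (by positivity) (by positivity)]
      ring
    rw [l1, Real.exp_add, Real.exp_nat_mul, Real.exp_nat_mul,
      Real.exp_log (by positivity), Real.exp_log (by positivity)]
  rw [hexp]
  have hsqrt : Real.sqrt ((N:ℝ)/(2*(k:ℝ)*(k':ℝ))) = Real.sqrt (2*(N:ℝ)) / (Real.sqrt (2*(k:ℝ)) * Real.sqrt (2*(k':ℝ))) := by
    rw [← Real.sqrt_mul (by positivity : (0:ℝ) ≤ 2*(k:ℝ)), ← Real.sqrt_div (by positivity : (0:ℝ) ≤ 2*(N:ℝ))]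
    congr 1
    field_simp
  rw [hsqrt]
  have hfN : ((N)! : ℝ) = stirlingSeq N * (Real.sqrt (2*N) * ((N:ℝ)/Real.exp 1)^N) := fact_eq (by omega)
  have hfk : ((k)! : ℝ) = stirlingSeq k * (Real.sqrt (2*k) * ((k:ℝ)/Real.exp 1)^k) := fact_eq hk1
  have hfk' : ((k')! : ℝ) = stirlingSeq k' * (Real.sqrt (2*k') * ((k':ℝ)/Real.exp 1)^k') := fact_eq hk'1
  have hchoose : (N.choose k : ℝ) = (N)! / ((k)! * (k')!) := by
    rw [Nat.cast_choose ℝ hkN']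
  have hpow : ((N:ℝ)/Real.exp 1)^N * (p^k * q^k') = ((k:ℝ)/Real.exp 1)^k * ((k':ℝ)/Real.exp 1)^k' * (((N:ℝ)*p/(k:ℝ))^k * ((N:ℝ)*q/(k':ℝ))^k') := by
    rw [← hkk']
    push_cast
    rw [pow_add]
    rw [div_pow, div_pow, div_pow, div_pow, div_pow, div_pow, mul_pow, mul_pow]
    field_simp
  have hs1 : (0:ℝ) < stirlingSeq k := stirlingSeq_pos hk1
  have hs2 : (0:ℝ) < stirlingSeq k' := stirlingSeq_pos hk'1
  have hsq1 : (0:ℝ) < Real.sqrt (2*(k:ℝ)) := Real.sqrt_pos.mpr (by positivity)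
  have hsq2 : (0:ℝ) < Real.sqrt (2*(k':ℝ)) := Real.sqrt_pos.mpr (by positivity)
  have hek : (0:ℝ) < ((k:ℝ)/Real.exp 1)^k := by positivity
  have hek' : (0:ℝ) < ((k':ℝ)/Real.exp 1)^k' := by positivity
  have hqpow : ((1:ℝ) - p) ^ (N - k) = q ^ k' := by rw [← hqdef]
  have e1 : (0:ℝ) < Real.exp 1 := Real.exp_pos 1
  calc binomProb N p k = ((N)! : ℝ)/((k)! * (k')!) * (p^k * q^k') := by
        rw [binomProb, hchoose, hqpow]; ring
    _ = (stirlingSeq N/(stirlingSeq k * stirlingSeq k')) * (Real.sqrt (2*N)/(Real.sqrt (2*k) * Real.sqrt (2*k'))) *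
        (((N:ℝ)/Real.exp 1)^N * (p^k*q^k')/(((k:ℝ)/Real.exp 1)^k * ((k':ℝ)/Real.exp 1)^k')) := by
        rw [hfN, hfk, hfk']
        field_simp
    _ = (stirlingSeq N/(stirlingSeq k * stirlingSeq k')) * (Real.sqrt (2*N)/(Real.sqrt (2*k) * Real.sqrt (2*k'))) *
        (((N:ℝ)*p/(k:ℝ))^k * ((N:ℝ)*q/(k':ℝ))^k') := by
        rw [hpow]
        congr 1
        rw [mul_comm (((k:ℝ)/Real.exp 1)^k * ((k':ℝ)/Real.exp 1)^k') _, mul_div_assoc]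
        rw [div_self (by positivity : ((k:ℝ)/Real.exp 1)^k * ((k':ℝ)/Real.exp 1)^k' ≠ 0), mul_one]
    _ = _ := rfl

lemma sq_squeeze {g : ℕ → ℝ} (h1 : ∀ᶠ n in atTop, 0 ≤ g n)
    (h2 : Tendsto (fun n => (g n)^2) atTop (𝓝 0)) : Tendsto g atTop (𝓝 0) := by
  have h3 : Tendsto (fun n => Real.sqrt ((g n)^2)) atTop (𝓝 0) := by
    have := (Real.continuous_sqrt.tendsto 0).comp h2
    simpa [Function.comp_def] using this
  refine h3.congr' ?_
  filter_upwards [h1] with n hn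
  exact Real.sqrt_sq hn


/- ######################  the main theorem  ###################### -/

set_option maxHeartbeats 2000000 in
/-- `Pr[Bin(n−1,p) = m] = Θ(ln ln n / n)`. -/
theorem binomProb_at_mDeg_theta (p α : ℝ) (hp0 : 0 < p) (hp1 : p < 1) :
    ∃ C₁ C₂ : ℝ, 0 < C₂ ∧ C₂ ≤ C₁ ∧ ∃ N₀ : ℕ, ∀ n ≥ N₀,
      C₂ * (Real.log (Real.log n) / n) ≤ binomProb (n - 1) p (mDeg p α n) ∧
      binomProb (n - 1) p (mDeg p α n) ≤ C₁ * (Real.log (Real.log n) / n) := by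
  have hq0 : 0 < 1 - p := by linarith
  set L : ℕ → ℝ := fun n => (1/2) * Real.log n - Real.log (Real.log (Real.log n)) + α with hLdef
  set hh : ℕ → ℝ := fun n => hShift p α n with hhdef
  set kk : ℕ → ℝ := fun n => (mDeg p α n : ℝ) with hkkdef
  set NN : ℕ → ℝ := fun n => ((n - 1 : ℕ) : ℝ) with hNNdef
  have T0 : Tendsto (fun n : ℕ => (n:ℝ)) atTop atTop := tendsto_natCast_atTop_atTop
  have Tlog : Tendsto (fun n : ℕ => Real.log n) atTop atTop :=
    Real.tendsto_log_atTop.comp T0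
  have Tll : Tendsto (fun n : ℕ => Real.log (Real.log n)) atTop atTop :=
    Real.tendsto_log_atTop.comp Tlog
  have Tlll : Tendsto (fun n : ℕ => Real.log (Real.log (Real.log n))) atTop atTop :=
    Real.tendsto_log_atTop.comp Tll
  have Tinv : Tendsto (fun n : ℕ => 1/(n:ℝ)) atTop (𝓝 0) := tendsto_one_div_atTop_nhds_zero_nat
  have TlogdivN : Tendsto (fun n : ℕ => Real.log n/(n:ℝ)) atTop (𝓝 0) := by
    have := (Real.tendsto_pow_log_div_mul_add_atTop 1 0 1 one_ne_zero).comp T0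
    simpa [Function.comp_def] using this
  have Tlog3divN : Tendsto (fun n : ℕ => (Real.log n)^3/(n:ℝ)) atTop (𝓝 0) := by
    have := (Real.tendsto_pow_log_div_mul_add_atTop 1 0 3 one_ne_zero).comp T0
    simpa [Function.comp_def] using this
  have TlldivL : Tendsto (fun n : ℕ => Real.log (Real.log n)/Real.log n) atTop (𝓝 0) := by
    have := (Real.tendsto_pow_log_div_mul_add_atTop 1 0 1 one_ne_zero).comp Tlog
    simpa [Function.comp_def] using this
  have evn2 : ∀ᶠ n : ℕ in atTop, 2 ≤ n := eventually_ge_atTop 2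
  have evNN : ∀ᶠ n : ℕ in atTop, NN n = (n:ℝ) - 1 ∧ 1 ≤ NN n ∧ (n:ℝ)/2 ≤ NN n := by
    filter_upwards [evn2] with n hn
    have h1 : NN n = (n:ℝ) - 1 := by
      simp only [hNNdef]
      push_cast [Nat.cast_sub (by omega : 1 ≤ n)]
      ring
    have h2 : (2:ℝ) ≤ n := by exact_mod_cast hn
    exact ⟨h1, by rw [h1]; linarith, by rw [h1]; linarith⟩
  have evl1 : ∀ᶠ n : ℕ in atTop, 1 ≤ Real.log n := Tlog.eventually_ge_atTop 1
  have evll1 : ∀ᶠ n : ℕ in atTop, 1 ≤ Real.log (Real.log n) := Tll.eventually_ge_atTop 1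
  have evlll1 : ∀ᶠ n : ℕ in atTop, 1 ≤ Real.log (Real.log (Real.log n)) := Tlll.eventually_ge_atTop 1
  have evα : ∀ᶠ n : ℕ in atTop, |α| ≤ (1/4) * Real.log n := by
    filter_upwards [Tlog.eventually_ge_atTop (4*|α|)] with n hn
    linarith
  have evll8 : ∀ᶠ n : ℕ in atTop, Real.log (Real.log n) ≤ (1/8) * Real.log n := by
    filter_upwards [TlldivL.eventually (eventually_lt_nhds (show (0:ℝ) < 1/8 by norm_num)),
      evl1] with n h1 h2
    rw [div_lt_iff₀ (by linarith)] at h1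
    nlinarith
  have evlll8 : ∀ᶠ n : ℕ in atTop, Real.log (Real.log (Real.log n)) ≤ (1/8) * Real.log n := by
    filter_upwards [evll8, evll1] with n h1 h2
    have := Real.log_le_sub_one_of_pos (show (0:ℝ) < Real.log (Real.log n) by linarith)
    linarith
  have evL : ∀ᶠ n : ℕ in atTop, 0 ≤ L n ∧ L n ≤ Real.log n := by
    filter_upwards [evl1, evlll1, evα, evlll8] with n h1 h2 h3 h4
    have ha := abs_le.mp h3
    constructor
    · simp only [hLdef]; nlinarith
    · simp only [hLdef]; nlinarith
  have evh : ∀ᶠ n : ℕ in atTop, 0 ≤ hh n ∧ (hh n)^2 = 2*p*(1-p)*(n:ℝ)*(L n) ∧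
      (hh n)^2 ≤ (n:ℝ)*Real.log n := by
    filter_upwards [evL, evl1] with n h1 h2
    have hn0 : (0:ℝ) ≤ n := Nat.cast_nonneg n
    have harg : 0 ≤ 2*p*(1-p)*(n:ℝ)*(L n) :=
      mul_nonneg (mul_nonneg (by positivity) hn0) h1.1
    have hsq : (hh n)^2 = 2*p*(1-p)*(n:ℝ)*(L n) := by
      simp only [hhdef, hShift]
      exact Real.sq_sqrt harg
    refine ⟨Real.sqrt_nonneg _, hsq, ?_⟩
    rw [hsq]
    have hpq2 : 2*p*(1-p) ≤ 1/2 := by nlinarith [sq_nonneg (2*p - 1)]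
    have hnL : (n:ℝ)*(L n) ≤ (n:ℝ)*Real.log n := mul_le_mul_of_nonneg_left h1.2 hn0
    have hnL0 : 0 ≤ (n:ℝ)*(L n) := mul_nonneg hn0 h1.1
    nlinarith [hnL, hnL0, hpq2]
  have TlhdivN : Tendsto (fun n : ℕ => Real.log n * hh n/(n:ℝ)) atTop (𝓝 0) := by
    have Tsq : Tendsto (fun n : ℕ => Real.sqrt ((Real.log n)^3/(n:ℝ))) atTop (𝓝 0) := by
      have h := (Real.continuous_sqrt.tendsto 0).comp Tlog3divN
      rw [Real.sqrt_zero] at h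
      exact h.congr fun n => rfl
    apply squeeze_zero' ?_ ?_ Tsq
    · filter_upwards [evh, evl1] with n h1 h2
      have hn0 : (0:ℝ) ≤ n := Nat.cast_nonneg n
      exact div_nonneg (mul_nonneg (by linarith) h1.1) hn0
    · filter_upwards [evh, evl1, evn2] with n h1 h2 h3
      have hn : (0:ℝ) < n := by exact_mod_cast (by omega : 0 < n)
      rw [Real.le_sqrt (div_nonneg (mul_nonneg (by linarith) h1.1) hn.le)]
      rw [div_pow, div_le_div_iff₀ (by positivity) hn]
      have key := mul_le_mul_of_nonneg_left h1.2.2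
        (show (0:ℝ) ≤ (Real.log n)^2 by positivity)
      have key2 := mul_le_mul_of_nonneg_right key hn.le
      calc (Real.log n * hh n)^2 * (n:ℝ) = ((Real.log n)^2 * (hh n)^2) * n := by ring
        _ ≤ ((Real.log n)^2 * ((n:ℝ)*Real.log n)) * n := key2
        _ = (Real.log n)^3 * (n:ℝ)^2 := by ring
      exact div_nonneg (pow_nonneg (by linarith) 3) hn.le
  have ThdivN : Tendsto (fun n : ℕ => hh n/(n:ℝ)) atTop (𝓝 0) := by
    apply squeeze_zero' ?_ ?_ TlhdivN
    · filter_upwards [evh] with n h1; exact div_nonneg h1.1 (Nat.cast_nonneg n)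
    · filter_upwards [evh, evl1] with n h1 h2
      gcongr
      exact le_mul_of_one_le_left h1.1 h2
  have evk : ∀ᶠ n : ℕ in atTop, |kk n - ((n:ℝ)*p + hh n)| ≤ 1/2 := by
    filter_upwards [evh] with n h1
    have hx : (0:ℝ) ≤ (n:ℝ)*p + hh n :=
      add_nonneg (mul_nonneg (Nat.cast_nonneg n) hp0.le) h1.1
    have hr0 : 0 ≤ round ((n:ℝ)*p + hh n) := by
      rw [round_eq]
      exact Int.floor_nonneg.mpr (by linarith)
    have hcast : kk n = ((round ((n:ℝ)*p + hh n) : ℤ) : ℝ) := by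
      simp only [hkkdef, mDeg, hhdef]
      exact_mod_cast congrArg (fun z : ℤ => (z : ℝ)) (Int.toNat_of_nonneg hr0)
    rw [hcast, abs_sub_comm]
    exact abs_sub_round _
  have Tnp : Tendsto (fun n : ℕ => (n:ℝ)*p) atTop atTop := T0.atTop_mul_const hp0
  have Tnq : Tendsto (fun n : ℕ => (n:ℝ)*(1-p)) atTop atTop := T0.atTop_mul_const hq0
  have evnp : ∀ᶠ n : ℕ in atTop, 2 ≤ (n:ℝ)*p := Tnp.eventually_ge_atTop 2
  have evhsmall : ∀ᶠ n : ℕ in atTop, hh n ≤ (1-p)/2*(n:ℝ) := by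
    filter_upwards [ThdivN.eventually (eventually_lt_nhds
      (show (0:ℝ) < (1-p)/2 by linarith)), evn2] with n h1 h2
    have hn : (0:ℝ) < n := by exact_mod_cast (by omega : 0 < n)
    rw [div_lt_iff₀ hn] at h1
    nlinarith
  have evnq8 : ∀ᶠ n : ℕ in atTop, 8 ≤ (n:ℝ)*(1-p) := Tnq.eventually_ge_atTop 8
  have evkN : ∀ᶠ n : ℕ in atTop, 1 ≤ mDeg p α n ∧ mDeg p α n + 1 ≤ n - 1 ∧
      (n:ℝ)*p/2 ≤ kk n ∧ kk n ≤ (n:ℝ) ∧ (1-p)/4*(n:ℝ) ≤ NN n - kk n ∧ 1 ≤ kk n := by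
    filter_upwards [evk, evnp, evhsmall, evnq8, evNN, evn2, evh] with n h1 h2 h3 h4 h5 h6 h7
    have hd := abs_le.mp h1
    have hn2 : (2:ℝ) ≤ n := by exact_mod_cast h6
    have hn8 : (8:ℝ) ≤ n := by nlinarith
    have hn8' : 8 ≤ n := by exact_mod_cast hn8
    have hk_low : (n:ℝ)*p - 1/2 ≤ kk n := by linarith [h7.1]
    have hk1r : 1 ≤ kk n := by linarith
    have hk1 : 1 ≤ mDeg p α n := by
      by_contra hcon
      have hz : mDeg p α n = 0 := by omega
      have : kk n = 0 := by simp [hkkdef, hz]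
      linarith
    have hk_up : kk n ≤ (n:ℝ) - 7/2 := by nlinarith
    have hmd : mDeg p α n + 1 ≤ n - 1 := by
      have hc : (mDeg p α n : ℝ) ≤ ((n - 3 : ℕ) : ℝ) := by
        push_cast [Nat.cast_sub (by omega : 3 ≤ n)]
        simp only [hkkdef] at hk_up
        linarith
      have : mDeg p α n ≤ n - 3 := by exact_mod_cast hc
      omega
    refine ⟨hk1, hmd, by linarith, by linarith, ?_, hk1r⟩
    have : NN n = (n:ℝ) - 1 := h5.1
    nlinarith
  have Tkn : Tendsto (fun n : ℕ => kk n/(n:ℝ)) atTop (𝓝 p) := by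
    have Hb : Tendsto (fun n : ℕ => hh n/(n:ℝ) + 1*(1/(n:ℝ))) atTop (𝓝 0) := by
      have := ThdivN.add (Tinv.const_mul 1)
      simpa using this
    have Hs : Tendsto (fun n : ℕ => kk n/(n:ℝ) - p) atTop (𝓝 0) := by
      apply squeeze_zero_norm' ?_ Hb
      filter_upwards [evk, evn2, evh] with n h1 h2 h3
      have hn : (0:ℝ) < n := by exact_mod_cast (by omega : 0 < n)
      have e : kk n/(n:ℝ) - p = (kk n - (n:ℝ)*p)/n := by field_simp
      rw [Real.norm_eq_abs, e, abs_div, abs_of_pos hn]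
      have hb : |kk n - (n:ℝ)*p| ≤ hh n + 1 := by
        have := abs_le.mp h1
        rw [abs_le]
        constructor <;> [linarith [h3.1]; linarith [h3.1]]
      calc |kk n - (n:ℝ)*p|/(n:ℝ) ≤ (hh n + 1)/n := by gcongr
        _ = hh n/(n:ℝ) + 1*(1/(n:ℝ)) := by ring
    have := Hs.add_const p
    simpa using this
  have TNNn : Tendsto (fun n : ℕ => NN n/(n:ℝ)) atTop (𝓝 1) := by
    have Hs : Tendsto (fun n : ℕ => NN n/(n:ℝ) - 1) atTop (𝓝 0) := by
      apply squeeze_zero_norm' ?_ Tinv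
      filter_upwards [evNN, evn2] with n h1 h2
      have hn : (0:ℝ) < n := by exact_mod_cast (by omega : 0 < n)
      have e : NN n/(n:ℝ) - 1 = -(1/(n:ℝ)) := by rw [h1.1]; field_simp; ring
      rw [Real.norm_eq_abs, e, abs_neg, abs_of_pos (by positivity)]
    have := Hs.add_const 1
    simpa using this
  have Tk'n : Tendsto (fun n : ℕ => (NN n - kk n)/(n:ℝ)) atTop (𝓝 (1-p)) := by
    have Hb : Tendsto (fun n : ℕ => hh n/(n:ℝ) + 2*(1/(n:ℝ))) atTop (𝓝 0) := by
      have := ThdivN.add (Tinv.const_mul 2)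
      simpa using this
    have Hs : Tendsto (fun n : ℕ => (NN n - kk n)/(n:ℝ) - (1-p)) atTop (𝓝 0) := by
      apply squeeze_zero_norm' ?_ Hb
      filter_upwards [evk, evn2, evh, evNN] with n h1 h2 h3 h4
      have hn : (0:ℝ) < n := by exact_mod_cast (by omega : 0 < n)
      have e : (NN n - kk n)/(n:ℝ) - (1-p) = (((n:ℝ)*p - kk n) - 1)/n := by
        rw [h4.1]; field_simp; ring
      rw [Real.norm_eq_abs, e, abs_div, abs_of_pos hn]
      have hb : |((n:ℝ)*p - kk n) - 1| ≤ hh n + 2 := by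
        have := abs_le.mp h1
        rw [abs_le]
        constructor <;> [linarith [h3.1]; linarith [h3.1]]
      calc |((n:ℝ)*p - kk n) - 1|/(n:ℝ) ≤ (hh n + 2)/n := by gcongr
        _ = hh n/(n:ℝ) + 2*(1/(n:ℝ)) := by ring
    have := Hs.add_const (1-p)
    simpa using this
  have TkN : Tendsto (fun n : ℕ => kk n/NN n) atTop (𝓝 p) := by
    have := Tkn.div TNNn one_ne_zero
    rw [div_one] at this
    apply this.congr'
    filter_upwards [evNN, evn2] with n h1 h2
    have hn : (0:ℝ) < n := by exact_mod_cast (by omega : 0 < n)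
    have hNN : (0:ℝ) < NN n := by linarith [h1.2.1]
    simp only [Pi.div_apply]
    field_simp
  set t : ℕ → ℝ := fun n => kk n/NN n - p with htdef
  have Tt : Tendsto t atTop (𝓝 0) := by
    have := TkN.sub_const p
    simpa using this
  have evc : ∀ᶠ n : ℕ in atTop, |kk n - NN n * p - hh n| ≤ 3/2 ∧
      t n = (kk n - NN n * p)/NN n := by
    filter_upwards [evk, evNN] with n h1 h2
    have hNN : (0:ℝ) < NN n := by linarith [h2.2.1]
    constructor
    · have := abs_le.mp h1
      rw [h2.1, abs_le]
      constructor <;> [linarith; linarith]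
    · simp only [htdef]
      field_simp
  have hpqpos : (0:ℝ) < 2*p*(1-p) := by positivity
  have TNt2 : Tendsto (fun n => NN n * (t n)^2/(2*p*(1-p)) - L n) atTop (𝓝 0) := by
    have TR : Tendsto (fun n : ℕ => 2*(Real.log n/(n:ℝ)) +
        ((3/(p*(1-p)))*(hh n/(n:ℝ)) + (3/(p*(1-p)))*(1/(n:ℝ)))) atTop (𝓝 0) := by
      have := (TlogdivN.const_mul 2).add
        ((ThdivN.const_mul (3/(p*(1-p)))).add (Tinv.const_mul (3/(p*(1-p)))))
      simpa using this
    apply squeeze_zero_norm' ?_ TR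
    filter_upwards [evc, evNN, evh, evL, evn2] with n h1 h2 h3 h4 h5
    have hn : (0:ℝ) < n := by exact_mod_cast (by omega : 0 < n)
    have hNN : (0:ℝ) < NN n := by linarith [h2.2.1]
    have hNN2 : (n:ℝ)/2 ≤ NN n := h2.2.2
    have hnNN : (n:ℝ) = NN n + 1 := by rw [h2.1]; ring
    have key : NN n * (t n)^2/(2*p*(1-p)) - L n
        = ((kk n - NN n*p)^2 - (hh n)^2)/(2*p*(1-p)*NN n) + L n/NN n := by
      rw [h1.2, h3.2.1, hnNN]
      field_simp
      ring
    have habs : |(kk n - NN n*p)^2 - (hh n)^2| ≤ 3*hh n + 3 := by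
      have e : (kk n - NN n*p)^2 - (hh n)^2
          = ((kk n - NN n*p) - hh n)*((kk n - NN n*p) + hh n) := by ring
      rw [e, abs_mul]
      have b1 : |(kk n - NN n*p) + hh n| ≤ 3/2 + 2*hh n := by
        have := abs_le.mp h1.1
        rw [abs_le]
        constructor <;> [linarith [h3.1]; linarith [h3.1]]
      calc |(kk n - NN n*p) - hh n| * |(kk n - NN n*p) + hh n|
          ≤ (3/2) * (3/2 + 2*hh n) := mul_le_mul h1.1 b1 (abs_nonneg _) (by norm_num)
        _ ≤ 3*hh n + 3 := by nlinarith [h3.1]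
    rw [Real.norm_eq_abs, key]
    have b2 : |((kk n - NN n*p)^2 - (hh n)^2)/(2*p*(1-p)*NN n)| ≤
        (3/(p*(1-p)))*(hh n/(n:ℝ)) + (3/(p*(1-p)))*(1/(n:ℝ)) := by
      have hden : (0:ℝ) < 2*p*(1-p)*NN n := mul_pos hpqpos hNN
      rw [abs_div, abs_of_pos hden]
      have step1 : |(kk n - NN n*p)^2 - (hh n)^2|/(2*p*(1-p)*NN n)
          ≤ (3*hh n + 3)/(2*p*(1-p)*((n:ℝ)/2)) :=
        div_le_div₀ (by linarith [h3.1]) habs (by positivity)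
          (mul_le_mul_of_nonneg_left h2.2.2 hpqpos.le)
      refine step1.trans (le_of_eq ?_)
      field_simp
    have b3 : |L n/NN n| ≤ 2*(Real.log n/(n:ℝ)) := by
      rw [abs_div, abs_of_pos hNN, abs_of_nonneg h4.1]
      calc L n/NN n ≤ Real.log n/((n:ℝ)/2) := by
            apply div_le_div₀ (by linarith [h4.1, h4.2]) h4.2 (by positivity) hNN2
        _ = 2*(Real.log n/(n:ℝ)) := by field_simp
      
    calc |((kk n - NN n*p)^2 - (hh n)^2)/(2*p*(1-p)*NN n) + L n/NN n|
        ≤ |((kk n - NN n*p)^2 - (hh n)^2)/(2*p*(1-p)*NN n)| + |L n/NN n| := abs_add_le _ _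
      _ ≤ ((3/(p*(1-p)))*(hh n/(n:ℝ)) + (3/(p*(1-p)))*(1/(n:ℝ))) + 2*(Real.log n/(n:ℝ)) := by
          exact add_le_add b2 b3
      _ = 2*(Real.log n/(n:ℝ)) + ((3/(p*(1-p)))*(hh n/(n:ℝ)) + (3/(p*(1-p)))*(1/(n:ℝ))) := by ring
  have TNt3 : Tendsto (fun n => NN n * |t n|^3) atTop (𝓝 0) := by
    have TR2 : Tendsto (fun n : ℕ => 2*(Real.log n * hh n/(n:ℝ)) +
        (3*(Real.log n/(n:ℝ)) + (2*(hh n/(n:ℝ)) + 3*(1/(n:ℝ))))) atTop (𝓝 0) := by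
      have := (TlhdivN.const_mul 2).add
        ((TlogdivN.const_mul 3).add ((ThdivN.const_mul 2).add (Tinv.const_mul 3)))
      simpa using this
    apply squeeze_zero' ?_ ?_ TR2
    · filter_upwards [evNN] with n h1
      have : (0:ℝ) ≤ NN n := by linarith [h1.2.1]
      positivity
    · filter_upwards [evc, evNN, evh, evL, evn2, evl1,
        (NormedAddCommGroup.tendsto_nhds_zero.mp TNt2 1 one_pos)] with n h1 h2 h3 h4 h5 h6 h7
      have hn : (0:ℝ) < n := by exact_mod_cast (by omega : 0 < n)
      have hNN : (0:ℝ) < NN n := by linarith [h2.2.1]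
      have hNt2 : NN n * (t n)^2 ≤ Real.log n + 1 := by
        rw [Real.norm_eq_abs] at h7
        have h7' := (abs_le.mp h7.le).2
        have hpq2 : 2*p*(1-p) ≤ 1 := by nlinarith [sq_nonneg (2*p - 1)]
        have h7'' : NN n * (t n)^2/(2*p*(1-p)) ≤ L n + 1 := by linarith
        rw [div_le_iff₀ hpqpos] at h7''
        have e1 : NN n * (t n)^2 ≤ 2*p*(1-p)*(L n + 1) := by nlinarith [h7'']
        calc NN n * t n^2 ≤ 2*p*(1-p)*(L n + 1) := e1
          _ ≤ 1*(L n + 1) := by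
              apply mul_le_mul_of_nonneg_right hpq2 (by linarith [h4.1])
          _ ≤ Real.log n + 1 := by linarith [h4.2]
      have ht_bd : |t n| ≤ (2*hh n + 3)/(n:ℝ) := by
        rw [h1.2, abs_div, abs_of_pos hNN]
        have hnum : |kk n - NN n*p| ≤ hh n + 3/2 := by
          have := abs_le.mp h1.1
          rw [abs_le]
          constructor <;> [linarith [h3.1]; linarith [h3.1]]
        calc |kk n - NN n*p|/NN n ≤ (hh n + 3/2)/((n:ℝ)/2) := by
              apply div_le_div₀ (by linarith [h3.1]) hnum (by positivity) h2.2.2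
          _ = (2*hh n + 3)/(n:ℝ) := by field_simp
      have e2 : NN n * |t n|^3 = (NN n * (t n)^2)*|t n| := by
        rw [show |t n|^3 = |t n|^2*|t n| by ring, sq_abs]
        ring
      rw [e2]
      calc (NN n * (t n)^2)*|t n| ≤ (Real.log n + 1)*((2*hh n + 3)/(n:ℝ)) := by
            apply mul_le_mul hNt2 ht_bd (abs_nonneg _) (by linarith)
        _ = 2*(Real.log n * hh n/(n:ℝ)) +
            (3*(Real.log n/(n:ℝ)) + (2*(hh n/(n:ℝ)) + 3*(1/(n:ℝ)))) := by
            field_simp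
            ring
  set S : ℕ → ℝ := fun n => kk n * Real.log (kk n/(NN n*p)) +
      (NN n - kk n)*Real.log ((NN n - kk n)/(NN n*(1-p))) with hSdef
  have TSL : Tendsto (fun n => S n - L n) atTop (𝓝 0) := by
    have part1 : Tendsto (fun n => S n - NN n*(t n)^2/(2*p*(1-p))) atTop (𝓝 0) := by
      have Tc : Tendsto (fun n => (1/(2*p^2)+1/(2*(1-p)^2)+4/p^3+4/(1-p)^3) * (NN n * |t n|^3))
          atTop (𝓝 0) := by
        have := TNt3.const_mul (1/(2*p^2)+1/(2*(1-p)^2)+4/p^3+4/(1-p)^3)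
        rw [mul_zero] at this
        exact this
      apply squeeze_zero_norm' ?_ Tc
      filter_upwards [evc, evNN, evkN,
        (NormedAddCommGroup.tendsto_nhds_zero.mp Tt (p*(1-p)/2) (by positivity))]
        with n h1 h2 h6 h3
      rw [Real.norm_eq_abs] at h3
      have ht : |t n| ≤ p*(1-p)/2 := h3.le
      have hNN : (0:ℝ) < NN n := by linarith [h2.2.1]
      have hkk : kk n = NN n*(p + t n) := by
        simp only [htdef]
        field_simp
        ring
      have hkk' : NN n - kk n = NN n*((1-p) - t n) := by rw [hkk]; ring
      have harg1 : kk n/(NN n*p) = (p + t n)/p := by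
        rw [hkk]
        rw [mul_div_mul_left _ _ (ne_of_gt hNN)]
      have harg2 : (NN n - kk n)/(NN n*(1-p)) = ((1-p) - t n)/(1-p) := by
        rw [hkk']
        rw [mul_div_mul_left _ _ (ne_of_gt hNN)]
      have hS : S n = NN n*((p + t n)*Real.log ((p + t n)/p) +
          ((1-p) - t n)*Real.log (((1-p) - t n)/(1-p))) := by
        simp only [hSdef]
        rw [harg1, harg2, hkk', hkk]
        ring
      have hdiff : S n - NN n*(t n)^2/(2*p*(1-p))
          = NN n*(((p + t n)*Real.log ((p + t n)/p) +
            ((1-p) - t n)*Real.log (((1-p) - t n)/(1-p))) - (t n)^2/(2*p*(1-p))) := by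
        rw [hS]; ring
      rw [Real.norm_eq_abs, hdiff, abs_mul, abs_of_pos hNN]
      have hb := Hbound hp0 hp1 ht
      calc NN n * |(p + t n)*Real.log ((p + t n)/p) +
            ((1-p) - t n)*Real.log (((1-p) - t n)/(1-p)) - (t n)^2/(2*p*(1-p))|
          ≤ NN n * ((1/(2*p^2)+1/(2*(1-p)^2)+4/p^3+4/(1-p)^3) * |t n|^3) := by
            apply mul_le_mul_of_nonneg_left hb hNN.le
        _ = (1/(2*p^2)+1/(2*(1-p)^2)+4/p^3+4/(1-p)^3) * (NN n * |t n|^3) := by ring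
    have hsum := part1.add TNt2
    rw [add_zero] at hsum
    apply hsum.congr
    intro n
    ring
  have TE : Tendsto (fun n : ℕ => Real.exp (-(S n)) * Real.sqrt n / Real.log (Real.log n))
      atTop (𝓝 (Real.exp (-α))) := by
    have TX : Tendsto (fun n => (L n - S n) - α) atTop (𝓝 (-α)) := by
      have h1 : Tendsto (fun n => -(S n - L n)) atTop (𝓝 0) := by
        have := TSL.neg
        rw [neg_zero] at this
        exact this
      have h2 := h1.sub_const α
      rw [zero_sub] at h2
      apply h2.congr
      intro n
      ring
    have Texp : Tendsto (fun n => Real.exp ((L n - S n) - α)) atTop (𝓝 (Real.exp (-α))) :=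
      (Real.continuous_exp.tendsto _).comp TX
    apply Texp.congr'
    filter_upwards [evn2, evl1, evll1, evlll1] with n h2 h3 h4 h5
    have hn0 : (0:ℝ) < n := by exact_mod_cast (by omega : 0 < n)
    have hsqrtn : Real.sqrt n = Real.exp (Real.log n/2) := by
      rw [← Real.log_sqrt hn0.le, Real.exp_log (Real.sqrt_pos.mpr hn0)]
    have hlln : Real.log (Real.log n) = Real.exp (Real.log (Real.log (Real.log n))) := by
      rw [Real.exp_log (by linarith)]
    rw [hsqrtn, hlln, ← Real.exp_add, ← Real.exp_sub]
    congr 1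
    simp only [hLdef]
    ring
  have TG : Tendsto (fun n : ℕ => Real.sqrt (p*(1-p)*(n:ℝ)*NN n/(kk n*(NN n - kk n))))
      atTop (𝓝 1) := by
    have t1 : Tendsto (fun n : ℕ => p/(kk n/(n:ℝ))) atTop (𝓝 1) := by
      have := (tendsto_const_nhds : Tendsto (fun _ : ℕ => p) atTop (𝓝 p)).div Tkn hp0.ne'
      rw [div_self hp0.ne'] at this
      exact this
    have t2 : Tendsto (fun n : ℕ => (1-p)/((NN n - kk n)/(n:ℝ))) atTop (𝓝 1) := by
      have := (tendsto_const_nhds : Tendsto (fun _ : ℕ => (1-p)) atTop (𝓝 (1-p))).div Tk'n hq0.ne'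
      rw [div_self hq0.ne'] at this
      exact this
    have Tinner : Tendsto (fun n : ℕ => (p/(kk n/(n:ℝ)))*((1-p)/((NN n - kk n)/(n:ℝ)))*(NN n/(n:ℝ)))
        atTop (𝓝 1) := by
      have := (t1.mul t2).mul TNNn
      simpa using this
    have Tinner' : Tendsto (fun n : ℕ => p*(1-p)*(n:ℝ)*NN n/(kk n*(NN n - kk n))) atTop (𝓝 1) := by
      apply Tinner.congr'
      filter_upwards [evkN, evNN, evn2] with n h1 h2 h3
      have hn : (0:ℝ) < n := by exact_mod_cast (by omega : 0 < n)
      have hkpos : (0:ℝ) < kk n := by linarith [h1.2.2.2.2.2]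
      have hk'pos : (0:ℝ) < NN n - kk n := by nlinarith [h1.2.2.2.2.1]
      field_simp
    have := (Real.continuous_sqrt.tendsto 1).comp Tinner'
    rw [Real.sqrt_one] at this
    exact this.congr fun n => rfl
  have Tknat : Tendsto (fun n : ℕ => mDeg p α n) atTop atTop := by
    rw [← tendsto_natCast_atTop_iff (R := ℝ)]
    apply tendsto_atTop_mono' atTop ?_ (T0.atTop_mul_const (show (0:ℝ) < p/2 by positivity))
    filter_upwards [evkN] with n h1
    calc (n:ℝ)*(p/2) = (n:ℝ)*p/2 := by ring
      _ ≤ (mDeg p α n : ℝ) := h1.2.2.1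
  have Tk'nat : Tendsto (fun n : ℕ => (n-1) - mDeg p α n) atTop atTop := by
    rw [← tendsto_natCast_atTop_iff (R := ℝ)]
    apply tendsto_atTop_mono' atTop ?_ (T0.atTop_mul_const (show (0:ℝ) < (1-p)/4 by positivity))
    filter_upwards [evkN, evn2] with n h1 h2
    have hcast : (((n-1) - mDeg p α n : ℕ) : ℝ) = NN n - kk n := by
      rw [Nat.cast_sub (by omega : mDeg p α n ≤ n - 1)]
    rw [hcast]
    calc (n:ℝ)*((1-p)/4) = (1-p)/4*(n:ℝ) := by ring
      _ ≤ NN n - kk n := h1.2.2.2.2.1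
  have hsqrtpi : (0:ℝ) < Real.sqrt π := Real.sqrt_pos.mpr Real.pi_pos
  have TA : Tendsto (fun n : ℕ => stirlingSeq (n-1)/
      (stirlingSeq (mDeg p α n)*stirlingSeq ((n-1) - mDeg p α n))) atTop (𝓝 (1/Real.sqrt π)) := by
    have s1 := tendsto_stirlingSeq_sqrt_pi.comp (tendsto_sub_atTop_nat 1)
    have s2 := tendsto_stirlingSeq_sqrt_pi.comp Tknat
    have s3 := tendsto_stirlingSeq_sqrt_pi.comp Tk'nat
    have Tq := s1.div (s2.mul s3) (by positivity)
    have hlim : Real.sqrt π/(Real.sqrt π*Real.sqrt π) = 1/Real.sqrt π := by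
      rw [div_mul_eq_div_div, div_self hsqrtpi.ne']
    rw [hlim] at Tq
    exact Tq.congr fun n => rfl
  -- the sqrt combination identity
  have sqrt_combine : ∀ nr N k k' : ℝ, 0 ≤ nr → 0 ≤ N → 0 < k → 0 < k' →
      Real.sqrt (p*(1-p)*nr*N/(k*k')) * Real.sqrt nr * (1/Real.sqrt (2*p*(1-p)))
        = Real.sqrt (N/(2*k*k')) * nr := by
    intro nr N k k' hnr hN hk hk'
    rw [mul_one_div, ← Real.sqrt_mul (by positivity) nr, ← Real.sqrt_div (by positivity)]
    have harg : p*(1-p)*nr*N/(k*k')*nr/(2*p*(1-p)) = nr^2*(N/(2*k*k')) := by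
      field_simp
    rw [harg, Real.sqrt_mul (sq_nonneg nr), Real.sqrt_sq hnr]
    ring
  set f : ℕ → ℝ := fun n => binomProb (n-1) p (mDeg p α n) * ((n:ℝ)/Real.log (Real.log n))
    with hfdef
  have evdecomp : ∀ᶠ n : ℕ in atTop, f n =
      (stirlingSeq (n-1)/(stirlingSeq (mDeg p α n)*stirlingSeq ((n-1) - mDeg p α n))) *
      Real.sqrt (p*(1-p)*(n:ℝ)*NN n/(kk n*(NN n - kk n))) *
      (Real.exp (-(S n)) * Real.sqrt n/Real.log (Real.log n)) *
      (1/Real.sqrt (2*p*(1-p))) := by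
    filter_upwards [evkN, evNN, evn2, evll1] with n h1 h2 h3 h4
    have hn : (0:ℝ) < n := by exact_mod_cast (by omega : 0 < n)
    have hll : (0:ℝ) < Real.log (Real.log n) := by linarith
    have hkpos : (0:ℝ) < kk n := by linarith [h1.2.2.2.2.2]
    have hk'pos : (0:ℝ) < NN n - kk n := by nlinarith [h1.2.2.2.2.1]
    have hD := decomp p hp0 hp1 (n-1) (mDeg p α n) h1.1 (by omega)
    have hcast : (((n-1) - mDeg p α n : ℕ) : ℝ) = NN n - kk n := by
      rw [Nat.cast_sub (by omega : mDeg p α n ≤ n - 1)]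
    have hNcast : ((n-1 : ℕ) : ℝ) = NN n := rfl
    rw [hcast, hNcast] at hD
    have hS : S n = kk n * Real.log (kk n/(NN n*p)) +
        (NN n - kk n)*Real.log ((NN n - kk n)/(NN n*(1-p))) := rfl
    have hcomb := sqrt_combine (n:ℝ) (NN n) (kk n) (NN n - kk n) hn.le
      (by linarith [h2.2.1]) hkpos hk'pos
    simp only [hfdef]
    rw [hD, ← hS]
    calc (stirlingSeq (n-1)/(stirlingSeq (mDeg p α n)*stirlingSeq ((n-1) - mDeg p α n))) *
          Real.sqrt (NN n/(2*kk n*(NN n - kk n))) * Real.exp (-(S n)) *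
          ((n:ℝ)/Real.log (Real.log n))
        = (stirlingSeq (n-1)/(stirlingSeq (mDeg p α n)*stirlingSeq ((n-1) - mDeg p α n))) *
          Real.exp (-(S n))/Real.log (Real.log n) *
          (Real.sqrt (NN n/(2*kk n*(NN n - kk n))) * (n:ℝ)) := by ring
      _ = (stirlingSeq (n-1)/(stirlingSeq (mDeg p α n)*stirlingSeq ((n-1) - mDeg p α n))) *
          Real.exp (-(S n))/Real.log (Real.log n) *
          (Real.sqrt (p*(1-p)*(n:ℝ)*NN n/(kk n*(NN n - kk n))) * Real.sqrt n *
            (1/Real.sqrt (2*p*(1-p)))) := by rw [hcomb]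
      _ = _ := by ring
  have Tf : Tendsto f atTop
      (𝓝 ((1/Real.sqrt π) * 1 * Real.exp (-α) * (1/Real.sqrt (2*p*(1-p))))) := by
    have Tprod := ((TA.mul TG).mul TE).mul
      (tendsto_const_nhds : Tendsto (fun _ : ℕ => 1/Real.sqrt (2*p*(1-p))) atTop _)
    exact Tprod.congr' (evdecomp.mono fun n h => h.symm)
  set climit : ℝ := (1/Real.sqrt π) * 1 * Real.exp (-α) * (1/Real.sqrt (2*p*(1-p))) with hcdef
  have hc : 0 < climit := by
    rw [hcdef]
    have := Real.pi_pos
    positivity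
  have ev1 : ∀ᶠ n : ℕ in atTop, climit/2 < f n := Tf.eventually (eventually_gt_nhds (by linarith))
  have ev2 : ∀ᶠ n : ℕ in atTop, f n < 2*climit := Tf.eventually (eventually_lt_nhds (by linarith))
  have evfinal : ∀ᶠ n : ℕ in atTop,
      climit/2 * (Real.log (Real.log n) / n) ≤ binomProb (n - 1) p (mDeg p α n) ∧
      binomProb (n - 1) p (mDeg p α n) ≤ 2*climit * (Real.log (Real.log n) / n) := by
    filter_upwards [ev1, ev2, evll1, evn2] with n e1 e2 e3 e4
    have hn : (0:ℝ) < n := by exact_mod_cast (by omega : 0 < n)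
    have hll : (0:ℝ) < Real.log (Real.log n) := by linarith
    have hbp : binomProb (n-1) p (mDeg p α n) = f n * (Real.log (Real.log n)/n) := by
      simp only [hfdef]
      field_simp
    constructor
    · rw [hbp]
      exact mul_le_mul_of_nonneg_right e1.le (by positivity)
    · rw [hbp]
      exact mul_le_mul_of_nonneg_right e2.le (by positivity)
  rw [eventually_atTop] at evfinal
  obtain ⟨N₀, hN₀⟩ := evfinal
  exact ⟨2*climit, climit/2, by positivity, by linarith, N₀, hN₀⟩
end

section
/- Let 0 < p < 1 and 0 < b < 1 be constants. There exist a constant c = c(b,p) > 0 and N₀ such that for every n ≥ N₀ the following holds. Let G be any graph on n vertices and set ε = n^{−b}. Assume the minimum degree of G is at least (p−ε)n, the maximum degree of G is at most (p+ε)n, and every pair of distinct vertices u, v satisfies (p²−ε)n ≤ codeg(u,v) ≤ (p²+ε)n. Then there exists a vertex set S with |S| ≥ c · log n such that for every subset A ⊆ S there is a vertex v of G with N(v) ∩ S = A. -/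
set_option maxHeartbeats 1000000

open Finset
open scoped Classical

private noncomputable def dG {n : ℕ} (G : SimpleGraph (Fin n)) (C : Finset (Fin n)) (w : Fin n) : ℕ :=
  (C.filter (fun u => G.Adj w u)).card

private noncomputable def cdG {n : ℕ} (G : SimpleGraph (Fin n)) (u v : Fin n) : ℕ :=
  (univ.filter (fun w => G.Adj w u ∧ G.Adj w v)).card

private noncomputable def cellG {n : ℕ} (G : SimpleGraph (Fin n)) (S A : Finset (Fin n)) :
    Finset (Fin n) :=
  univ.filter (fun v => ∀ u ∈ S, (G.Adj v u ↔ u ∈ A))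

private noncomputable def badG {n : ℕ} (G : SimpleGraph (Fin n)) (p m : ℝ) (C : Finset (Fin n)) :
    Finset (Fin n) :=
  univ.filter (fun w => ¬((p - m) * C.card ≤ (dG G C w : ℝ) ∧ (dG G C w : ℝ) ≤ (p + m) * C.card))

private lemma ncard_nbhd {n : ℕ} (G : SimpleGraph (Fin n)) (v : Fin n) :
    (G.neighborSet v).ncard = dG G univ v := by
  rw [show G.neighborSet v = ↑(univ.filter (fun u => G.Adj v u)) by ext w; simp,
    Set.ncard_coe_finset, dG]

private lemma ncard_inter {n : ℕ} (G : SimpleGraph (Fin n)) (u v : Fin n) :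
    (G.neighborSet u ∩ G.neighborSet v).ncard = cdG G u v := by
  rw [show G.neighborSet u ∩ G.neighborSet v
      = ↑(univ.filter (fun w => G.Adj w u ∧ G.Adj w v)) by
    ext w; simp [G.adj_comm], Set.ncard_coe_finset, cdG]

private lemma cd_self {n : ℕ} (G : SimpleGraph (Fin n)) (u : Fin n) :
    cdG G u u = dG G univ u := by
  rw [cdG, dG]
  congr 1
  ext w
  simp [G.adj_comm]

private lemma sum_dG {n : ℕ} (G : SimpleGraph (Fin n)) (C : Finset (Fin n)) :
    ∑ w : Fin n, dG G C w = ∑ u ∈ C, dG G univ u := by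
  simp only [dG, card_filter]
  rw [Finset.sum_comm]
  refine Finset.sum_congr rfl fun u _ => ?_
  simp [G.adj_comm]

private lemma sum_dG_sq {n : ℕ} (G : SimpleGraph (Fin n)) (C : Finset (Fin n)) :
    ∑ w : Fin n, (dG G C w)^2 = ∑ u ∈ C, ∑ u' ∈ C, cdG G u u' := by
  simp only [dG, cdG, card_filter, sq, Finset.sum_mul_sum]
  rw [Finset.sum_comm]
  refine Finset.sum_congr rfl fun u _ => ?_
  rw [Finset.sum_comm]
  refine Finset.sum_congr rfl fun u' _ => ?_
  refine Finset.sum_congr rfl fun w _ => ?_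
  by_cases h1 : G.Adj w u <;> by_cases h2 : G.Adj w u' <;> simp [h1, h2]

private lemma variance_bound {n : ℕ} (G : SimpleGraph (Fin n)) (p ε : ℝ)
    (hp0 : 0 ≤ p) (hp1 : p ≤ 1) (hε : 0 ≤ ε)
    (hmin : ∀ v, (p - ε) * n ≤ (dG G univ v : ℝ))
    (hco : ∀ u v : Fin n, u ≠ v → (cdG G u v : ℝ) ≤ (p^2 + ε) * n)
    (C : Finset (Fin n)) :
    ∑ w : Fin n, ((dG G C w : ℝ) - p * C.card)^2
      ≤ 3 * ε * (C.card:ℝ)^2 * n + C.card * n := by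
  have hcd_diag : ∀ u : Fin n, (cdG G u u : ℝ) ≤ n := by
    intro u
    rw [cd_self]
    have : dG G univ u ≤ n := le_trans (Finset.card_filter_le _ _) (by simp)
    exact_mod_cast this
  have h2 : ∑ w : Fin n, ((dG G C w : ℝ))^2 ≤ (C.card:ℝ)^2*((p^2+ε)*n) + C.card*n := by
    have hcast : ∑ w : Fin n, ((dG G C w : ℝ))^2 = ∑ u ∈ C, ∑ u' ∈ C, (cdG G u u' : ℝ) := by
      exact_mod_cast sum_dG_sq G C
    rw [hcast]
    have hinner : ∀ u ∈ C, ∑ u' ∈ C, (cdG G u u' : ℝ) ≤ (C.card:ℝ)*((p^2+ε)*n) + n := by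
      intro u hu
      rw [← Finset.add_sum_erase _ _ hu]
      have herase : ∑ u' ∈ C.erase u, (cdG G u u' : ℝ) ≤ (C.card:ℝ)*((p^2+ε)*n) := by
        calc ∑ u' ∈ C.erase u, (cdG G u u' : ℝ) ≤ ∑ u' ∈ C.erase u, (p^2+ε)*n :=
              Finset.sum_le_sum fun u' hu' => hco u u' (Ne.symm (Finset.ne_of_mem_erase hu'))
          _ = ((C.erase u).card : ℝ) * ((p^2+ε)*n) := by rw [Finset.sum_const, nsmul_eq_mul]
          _ ≤ (C.card:ℝ) * ((p^2+ε)*n) := by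
              apply mul_le_mul_of_nonneg_right _ (by positivity)
              exact_mod_cast Finset.card_le_card (Finset.erase_subset _ _)
      have := hcd_diag u
      linarith
    calc ∑ u ∈ C, ∑ u' ∈ C, (cdG G u u' : ℝ) ≤ ∑ u ∈ C, ((C.card:ℝ)*((p^2+ε)*n) + n) :=
          Finset.sum_le_sum hinner
      _ = (C.card:ℝ) * ((C.card:ℝ)*((p^2+ε)*n) + n) := by rw [Finset.sum_const, nsmul_eq_mul]
      _ = (C.card:ℝ)^2*((p^2+ε)*n) + C.card*n := by ring
  have h1 : (C.card:ℝ) * ((p-ε)*n) ≤ ∑ w : Fin n, (dG G C w : ℝ) := by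
    have hcast : ∑ w : Fin n, (dG G C w : ℝ) = ∑ u ∈ C, (dG G univ u : ℝ) := by
      exact_mod_cast sum_dG G C
    rw [hcast]
    calc (C.card:ℝ)*((p-ε)*n) = ∑ _u ∈ C, (p-ε)*n := by rw [Finset.sum_const, nsmul_eq_mul]
      _ ≤ _ := Finset.sum_le_sum fun u _ => hmin u
  have expand : ∑ w : Fin n, ((dG G C w : ℝ) - p * C.card)^2
      = (∑ w : Fin n, ((dG G C w : ℝ))^2)
        - 2*(p*C.card)*(∑ w : Fin n, (dG G C w : ℝ)) + n * (p*C.card)^2 := by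
    rw [Finset.sum_congr rfl (fun w _ => by ring :
      ∀ w ∈ (univ : Finset (Fin n)), ((dG G C w : ℝ) - p * C.card)^2
        = ((dG G C w : ℝ))^2 - 2*(p*C.card)*(dG G C w : ℝ) + (p*C.card)^2)]
    rw [Finset.sum_add_distrib, Finset.sum_sub_distrib, ← Finset.mul_sum,
      Finset.sum_const, Finset.card_univ, Fintype.card_fin, nsmul_eq_mul]
  rw [expand]
  have h1' : 2*(p*C.card)*((C.card:ℝ)*((p-ε)*n)) ≤ 2*(p*C.card)*(∑ w : Fin n, (dG G C w : ℝ)) :=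
    mul_le_mul_of_nonneg_left h1 (by positivity)
  have key : 0 ≤ ε * (C.card:ℝ)^2 * n * (1-p) := by
    apply mul_nonneg (by positivity)
    linarith
  nlinarith [h2, h1', key]

private lemma bad_card {n : ℕ} (G : SimpleGraph (Fin n)) (p ε m : ℝ)
    (hp0 : 0 ≤ p) (hp1 : p ≤ 1) (hε : 0 ≤ ε) (hm0 : 0 < m)
    (hmin : ∀ v, (p - ε) * n ≤ (dG G univ v : ℝ))
    (hco : ∀ u v : Fin n, u ≠ v → (cdG G u v : ℝ) ≤ (p^2 + ε) * n)
    (C : Finset (Fin n)) :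
    ((badG G p m C).card : ℝ) * (m * C.card)^2 ≤ 3 * ε * (C.card:ℝ)^2 * n + C.card * n := by
  have key : ∀ w ∈ badG G p m C, (m * (C.card:ℝ))^2 ≤ ((dG G C w : ℝ) - p * C.card)^2 := by
    intro w hw
    simp only [badG, Finset.mem_filter, not_and_or, not_le] at hw
    have hC0 : (0:ℝ) ≤ (C.card:ℝ) := Nat.cast_nonneg _
    rcases hw.2 with h | h
    · nlinarith [sq_nonneg ((dG G C w : ℝ) - p * C.card + m * C.card), mul_nonneg hm0.le hC0]
    · nlinarith [sq_nonneg ((dG G C w : ℝ) - p * C.card - m * C.card), mul_nonneg hm0.le hC0]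
  calc ((badG G p m C).card : ℝ) * (m * C.card)^2
      = (badG G p m C).card • (m * (C.card:ℝ))^2 := by rw [nsmul_eq_mul]
    _ ≤ ∑ w ∈ badG G p m C, ((dG G C w : ℝ) - p * C.card)^2 := Finset.card_nsmul_le_sum _ _ _ key
    _ ≤ ∑ w : Fin n, ((dG G C w : ℝ) - p * C.card)^2 :=
        Finset.sum_le_sum_of_subset_of_nonneg (Finset.subset_univ _) (fun w _ _ => sq_nonneg _)
    _ ≤ _ := variance_bound G p ε hp0 hp1 hε hmin hco C

private lemma cell_insert {n : ℕ} (G : SimpleGraph (Fin n)) (S A' : Finset (Fin n)) (w : Fin n)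
    (hw : w ∉ S) :
    cellG G (insert w S) A'
      = (cellG G S (A'.erase w)).filter (fun v => (G.Adj v w ↔ w ∈ A')) := by
  ext v
  simp only [cellG, Finset.mem_filter, Finset.mem_univ, true_and, Finset.forall_mem_insert]
  constructor
  · rintro ⟨h1, h2⟩
    refine ⟨fun u hu => ?_, h1⟩
    rw [Finset.mem_erase]
    have : u ≠ w := fun h => hw (h ▸ hu)
    rw [h2 u hu]
    tauto
  · rintro ⟨h2, h1⟩
    refine ⟨h1, fun u hu => ?_⟩
    have hne : u ≠ w := fun h => hw (h ▸ hu)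
    rw [h2 u hu, Finset.mem_erase]
    tauto

private lemma card_filter_adj {n : ℕ} (G : SimpleGraph (Fin n)) (C : Finset (Fin n)) (w : Fin n) :
    (C.filter (fun v => G.Adj v w)).card = dG G C w := by
  rw [dG]; congr 1; ext v; simp [G.adj_comm]

private lemma step {n : ℕ} (G : SimpleGraph (Fin n)) (p ε m : ℝ)
    (hp0 : 0 ≤ p) (hp1 : p ≤ 1) (hε : 0 ≤ ε) (hm0 : 0 < m)
    (hmp : m ≤ p - m) (hmq : m ≤ 1 - p - m)
    (hmin : ∀ v, (p - ε) * n ≤ (dG G univ v : ℝ))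
    (hco : ∀ u v : Fin n, u ≠ v → (cdG G u v : ℝ) ≤ (p^2 + ε) * n)
    (S : Finset (Fin n)) (δ : ℝ) (hδ : 0 < δ)
    (hcells : ∀ A ∈ S.powerset, δ * n ≤ ((cellG G S A).card : ℝ))
    (hcount : (S.card : ℝ) + 2^S.card * (3*ε*n/m^2 + 1/(m^2*δ)) < n) :
    ∃ w ∉ S, ∀ A ∈ (insert w S).powerset,
      m * δ * n ≤ ((cellG G (insert w S) A).card : ℝ) := by
  have hn : (0:ℝ) < n := by
    have h0 : (0:ℝ) ≤ (S.card:ℝ) + 2^S.card * (3*ε*(n:ℝ)/m^2 + 1/(m^2*δ)) := by positivity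
    linarith
  have hbadA : ∀ A ∈ S.powerset,
      ((badG G p m (cellG G S A)).card : ℝ) ≤ 3*ε*n/m^2 + 1/(m^2*δ) := by
    intro A hA
    set C := cellG G S A with hC
    have hCcard : δ * n ≤ (C.card : ℝ) := hcells A hA
    have hCpos : (0:ℝ) < (C.card : ℝ) := lt_of_lt_of_le (by positivity) hCcard
    have hb := bad_card G p ε m hp0 hp1 hε hm0 hmin hco C
    have hsq : (0:ℝ) < (m * (C.card:ℝ))^2 := by positivity
    refine le_of_mul_le_mul_right ?_ hsq
    refine le_trans hb ?_
    have hexp : (3*ε*(n:ℝ)/m^2 + 1/(m^2*δ)) * (m * (C.card:ℝ))^2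
        = 3*ε*(n:ℝ)*(C.card:ℝ)^2 + (C.card:ℝ)^2/δ := by
      field_simp
    rw [hexp]
    have : (C.card:ℝ) * n ≤ (C.card:ℝ)^2/δ := by
      rw [le_div_iff₀ hδ]
      nlinarith
    linarith
  set Bad : Finset (Fin n) :=
    S ∪ S.powerset.biUnion (fun A => badG G p m (cellG G S A)) with hBad
  have hBadcard : (Bad.card : ℝ) < n := by
    have h1 : Bad.card ≤ S.card + (S.powerset.biUnion (fun A => badG G p m (cellG G S A))).card :=
      Finset.card_union_le _ _
    have h2 : (S.powerset.biUnion (fun A => badG G p m (cellG G S A))).card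
        ≤ ∑ A ∈ S.powerset, (badG G p m (cellG G S A)).card := Finset.card_biUnion_le
    have h3 : ((∑ A ∈ S.powerset, (badG G p m (cellG G S A)).card : ℕ) : ℝ)
        ≤ 2^S.card * (3*ε*n/m^2 + 1/(m^2*δ)) := by
      push_cast
      calc ∑ A ∈ S.powerset, ((badG G p m (cellG G S A)).card : ℝ)
          ≤ ∑ _A ∈ S.powerset, (3*ε*(n:ℝ)/m^2 + 1/(m^2*δ)) := Finset.sum_le_sum hbadA
        _ = (S.powerset.card : ℝ) * (3*ε*(n:ℝ)/m^2 + 1/(m^2*δ)) := by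
            rw [Finset.sum_const, nsmul_eq_mul]
        _ = 2^S.card * (3*ε*(n:ℝ)/m^2 + 1/(m^2*δ)) := by
            rw [Finset.card_powerset]; push_cast; ring
    have hc1 : (Bad.card : ℝ) ≤ (S.card : ℝ)
        + ((∑ A ∈ S.powerset, (badG G p m (cellG G S A)).card : ℕ) : ℝ) := by
      exact_mod_cast le_trans h1 (Nat.add_le_add_left h2 _)
    linarith
  have hex : ∃ w : Fin n, w ∉ Bad := by
    by_contra h
    push_neg at h
    have : (univ : Finset (Fin n)).card ≤ Bad.card :=
      Finset.card_le_card (fun w _ => h w)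
    rw [Finset.card_univ, Fintype.card_fin] at this
    have : (n:ℝ) ≤ (Bad.card:ℝ) := by exact_mod_cast this
    linarith
  obtain ⟨w, hwBad⟩ := hex
  have hwS : w ∉ S := fun h => hwBad (Finset.mem_union_left _ h)
  have hwgood : ∀ A ∈ S.powerset,
      (p - m) * ((cellG G S A).card : ℝ) ≤ (dG G (cellG G S A) w : ℝ) ∧
      (dG G (cellG G S A) w : ℝ) ≤ (p + m) * ((cellG G S A).card : ℝ) := by
    intro A hA
    by_contra h
    apply hwBad
    apply Finset.mem_union_right
    refine Finset.mem_biUnion.mpr ⟨A, hA, ?_⟩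
    simp only [badG, Finset.mem_filter, Finset.mem_univ, true_and]
    exact h
  refine ⟨w, hwS, fun A' hA' => ?_⟩
  rw [Finset.mem_powerset] at hA'
  set A := A'.erase w with hAdef
  have hAS : A ∈ S.powerset := by
    rw [Finset.mem_powerset]
    intro u hu
    rw [hAdef, Finset.mem_erase] at hu
    rcases Finset.mem_insert.mp (hA' hu.2) with h | h
    · exact absurd h hu.1
    · exact h
  set C := cellG G S A with hC
  have hCcard : δ * n ≤ (C.card : ℝ) := hcells A hAS
  obtain ⟨hg1, hg2⟩ := hwgood A hAS
  rw [cell_insert G S A' w hwS, ← hAdef, ← hC]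
  by_cases hwA : w ∈ A'
  · have : (C.filter (fun v => G.Adj v w ↔ w ∈ A')).card = dG G C w := by
      rw [← card_filter_adj G C w]
      congr 1
      ext v
      simp [hwA]
    rw [this]
    nlinarith
  · have hsplit := Finset.card_filter_add_card_filter_not
      (s := C) (p := fun v => G.Adj v w)
    have heq : (C.filter (fun v => G.Adj v w ↔ w ∈ A')).card
        = (C.filter (fun v => ¬ G.Adj v w)).card := by
      congr 1
      ext v
      simp [hwA]
    rw [heq]
    have h1 : ((C.filter (fun v => ¬ G.Adj v w)).card : ℝ)
        = (C.card : ℝ) - (dG G C w : ℝ) := by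
      rw [← card_filter_adj G C w]
      have := hsplit
      push_cast [← this]
      ring
    rw [h1]
    nlinarith

private lemma build {n : ℕ} (G : SimpleGraph (Fin n)) (p ε m : ℝ)
    (hp0 : 0 ≤ p) (hp1 : p ≤ 1) (hε : 0 ≤ ε) (hm0 : 0 < m) (hm1 : m ≤ 1)
    (hmp : m ≤ p - m) (hmq : m ≤ 1 - p - m)
    (hmin : ∀ v, (p - ε) * n ≤ (dG G univ v : ℝ))
    (hco : ∀ u v : Fin n, u ≠ v → (cdG G u v : ℝ) ≤ (p^2 + ε) * n)
    (k : ℕ)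
    (hcount : (k : ℝ) + 2^k * (3*ε*n/m^2 + 1/(m^2*m^k)) < n) :
    ∃ S : Finset (Fin n), S.card = k ∧
      ∀ A ∈ S.powerset, m^k * n ≤ ((cellG G S A).card : ℝ) := by
  suffices main : ∀ i, i ≤ k → ∃ S : Finset (Fin n), S.card = i ∧
      ∀ A ∈ S.powerset, m^i * n ≤ ((cellG G S A).card : ℝ) from main k le_rfl
  intro i
  induction i with
  | zero =>
    intro _
    refine ⟨∅, Finset.card_empty, fun A hA => ?_⟩
    have : cellG G ∅ A = univ := by
      rw [cellG]
      refine Finset.filter_true_of_mem fun v _ => ?_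
      intro u hu
      exact absurd hu (Finset.notMem_empty u)
    rw [this, Finset.card_univ, Fintype.card_fin]
    simp
  | succ i ih =>
    intro hik
    obtain ⟨S, hScard, hScells⟩ := ih (le_trans (Nat.le_succ i) hik)
    have hik' : i ≤ k := le_trans (Nat.le_succ i) hik
    have hmono : (i : ℝ) + 2^i * (3*ε*n/m^2 + 1/(m^2*m^i)) < n := by
      have h1 : (i:ℝ) ≤ k := by exact_mod_cast hik'
      have h2 : (2:ℝ)^i ≤ 2^k := pow_le_pow_right₀ one_le_two hik'
      have h3 : m^k ≤ m^i := pow_le_pow_of_le_one hm0.le hm1 hik'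
      have h5 : 1/(m^2*m^i) ≤ 1/(m^2*m^k) := by
        apply one_div_le_one_div_of_le (by positivity)
        nlinarith
      have h6 : (0:ℝ) ≤ 3*ε*(n:ℝ)/m^2 + 1/(m^2*m^i) := by positivity
      have h7 : (2:ℝ)^i * (3*ε*n/m^2 + 1/(m^2*m^i)) ≤ 2^k * (3*ε*n/m^2 + 1/(m^2*m^k)) := by
        apply mul_le_mul h2 (by linarith) h6 (by positivity)
      linarith
    have hmono' : (S.card : ℝ) + 2^S.card * (3*ε*n/m^2 + 1/(m^2*m^i)) < n := by
      rw [hScard]; exact hmono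
    obtain ⟨w, hwS, hcells'⟩ := step G p ε m hp0 hp1 hε hm0 hmp hmq hmin hco S (m^i)
      (pow_pos hm0 i) hScells hmono'
    refine ⟨insert w S, ?_, fun A hA => ?_⟩
    · rw [Finset.card_insert_of_notMem hwS, hScard]
    · have := hcells' A hA
      calc m^(i+1) * (n:ℝ) = m * m^i * n := by ring
        _ ≤ _ := this

/-- In any pseudorandom graph (degrees `(p±ε)n`, codegrees `(p²±ε)n` with `ε = n^{−b}`)
there is a vertex set `S` of size at least `c·log n` all of whose subsets are realized as
traces of vertex neighborhoods on `S`. -/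
theorem pseudorandom_powerset_representation (p b : ℝ)
    (hp0 : 0 < p) (hp1 : p < 1) (hb0 : 0 < b) (hb1 : b < 1) :
    ∃ c : ℝ, 0 < c ∧ ∃ N₀ : ℕ, ∀ n ≥ N₀, ∀ G : SimpleGraph (Fin n),
      (∀ v : Fin n, (p - (n : ℝ) ^ (-b)) * n ≤ ((G.neighborSet v).ncard : ℝ)) →
      (∀ v : Fin n, ((G.neighborSet v).ncard : ℝ) ≤ (p + (n : ℝ) ^ (-b)) * n) →
      (∀ u v : Fin n, u ≠ v →
        (p ^ 2 - (n : ℝ) ^ (-b)) * n ≤ ((G.neighborSet u ∩ G.neighborSet v).ncard : ℝ) ∧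
        ((G.neighborSet u ∩ G.neighborSet v).ncard : ℝ) ≤ (p ^ 2 + (n : ℝ) ^ (-b)) * n) →
      ∃ S : Finset (Fin n), c * Real.logb 2 n ≤ (S.card : ℝ) ∧
        ∀ A ⊆ S, ∃ v : Fin n, G.neighborSet v ∩ (S : Set (Fin n)) = (A : Set (Fin n)) := by
  classical
  set m : ℝ := min p (1-p) / 2 with hmdef
  have hmin_le1 : min p (1-p) ≤ p := min_le_left _ _
  have hmin_le2 : min p (1-p) ≤ 1-p := min_le_right _ _
  have hminpos : 0 < min p (1-p) := lt_min hp0 (by linarith)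
  have hm0 : 0 < m := by rw [hmdef]; positivity
  have hm2 : m ≤ 1/2 := by
    have h01 : min p (1-p) ≤ 1 := by linarith
    rw [hmdef]
    linarith
  have hm1 : m < 1 := by linarith
  have hmp : m ≤ p - m := by rw [hmdef]; linarith
  have hmq : m ≤ 1 - p - m := by rw [hmdef]; linarith
  have hLm : Real.logb 2 m < 0 := Real.logb_neg (by norm_num) hm0 hm1
  have hLm1 : Real.logb 2 m ≤ -1 := by
    have h1 : Real.logb 2 m ≤ Real.logb 2 (1/2) :=
      Real.logb_le_logb_of_le one_lt_two hm0 (by linarith)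
    have h2 : Real.logb 2 ((1:ℝ)/2) = -1 := by
      rw [one_div, Real.logb_inv]
      simp [Real.logb_self_eq_one]
    linarith [h2 ▸ h1]
  set c₀ : ℝ := (b/4) / (-Real.logb 2 m) with hc₀def
  have hc₀ : 0 < c₀ := div_pos (by linarith) (by linarith)
  have hc₀b : c₀ ≤ b/4 := div_le_self (by linarith) (by linarith)
  have hc₀1 : c₀ ≤ 1 := by linarith
  -- eventual conditions
  have hev : ∀ᶠ x : ℝ in Filter.atTop,
      (2 ≤ c₀ * Real.logb 2 x ∧ Real.logb 2 x < x/3 ∧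
        x ^ (-(3*b/4)) < m^2/9 ∧ x ^ (b/2-1) < m^2/3) := by
    have e1 : ∀ᶠ x : ℝ in Filter.atTop, 2 ≤ c₀ * Real.logb 2 x :=
      (Filter.Tendsto.const_mul_atTop hc₀
        (Real.tendsto_logb_atTop one_lt_two)).eventually_ge_atTop 2
    have e2 : ∀ᶠ x : ℝ in Filter.atTop, Real.logb 2 x < x/3 := by
      have hl2 : 0 < Real.log 2 := Real.log_pos one_lt_two
      have h := Real.isLittleO_log_id_atTop.def (show (0:ℝ) < Real.log 2/6 by positivity)
      filter_upwards [h, Filter.eventually_ge_atTop (1:ℝ)] with x hx hx1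
      simp only [id_eq, Real.norm_eq_abs] at hx
      rw [abs_of_nonneg (Real.log_nonneg hx1), abs_of_nonneg (by linarith : (0:ℝ) ≤ x)] at hx
      rw [Real.logb, div_lt_iff₀ hl2]
      nlinarith
    have e3 : ∀ᶠ x : ℝ in Filter.atTop, x ^ (-(3*b/4)) < m^2/9 :=
      (tendsto_rpow_neg_atTop (by linarith)).eventually_lt_const (by positivity)
    have e4 : ∀ᶠ x : ℝ in Filter.atTop, x ^ (b/2-1) < m^2/3 := by
      have h := tendsto_rpow_neg_atTop (show (0:ℝ) < 1 - b/2 by linarith)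
      have h2 : Filter.Tendsto (fun x:ℝ => x ^ (b/2-1)) Filter.atTop (nhds 0) :=
        Filter.Tendsto.congr (fun x => by rw [show -(1-b/2) = b/2-1 by ring]) h
      exact h2.eventually_lt_const (by positivity)
    filter_upwards [e1, e2, e3, e4] with x h1 h2 h3 h4
    exact ⟨h1, h2, h3, h4⟩
  have hevn : ∀ᶠ nn : ℕ in Filter.atTop,
      (2 ≤ c₀ * Real.logb 2 (nn:ℝ) ∧ Real.logb 2 (nn:ℝ) < (nn:ℝ)/3 ∧
        (nn:ℝ) ^ (-(3*b/4)) < m^2/9 ∧ (nn:ℝ) ^ (b/2-1) < m^2/3) :=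
    tendsto_natCast_atTop_atTop.eventually hev
  obtain ⟨N₀, hN₀⟩ := Filter.eventually_atTop.mp hevn
  refine ⟨c₀/2, by positivity, N₀, ?_⟩
  intro n hn G hdmin hdmax hcodeg
  obtain ⟨he1, he2, he3, he4⟩ := hN₀ n hn
  set L : ℝ := Real.logb 2 (n:ℝ) with hLdef
  have hL0 : 0 < L := by nlinarith
  have hn1 : (1:ℝ) < n := by
    by_contra h
    push_neg at h
    have := Real.logb_nonpos one_lt_two (Nat.cast_nonneg n) h
    rw [← hLdef] at this
    linarith
  have hn0 : (0:ℝ) < n := by linarith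
  have hnn1 : (1:ℝ) ≤ n := hn1.le
  set ε : ℝ := (n:ℝ) ^ (-b) with hεdef
  have hε : 0 ≤ ε := Real.rpow_nonneg (Nat.cast_nonneg n) _
  set k : ℕ := ⌊c₀ * L⌋₊ with hkdef
  have hkle : (k:ℝ) ≤ c₀ * L := Nat.floor_le (by positivity)
  have hklb : c₀/2 * L ≤ (k:ℝ) := by
    have h := Nat.sub_one_lt_floor (c₀ * L)
    rw [← hkdef] at h
    nlinarith
  have hLn : (2:ℝ) ^ L = n := Real.rpow_logb two_pos (by norm_num) hn0
  have h2k : (2:ℝ)^k ≤ (n:ℝ)^(b/4) := by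
    rw [← Real.rpow_natCast 2 k]
    calc (2:ℝ)^((k:ℕ):ℝ) ≤ 2 ^ (c₀ * L) :=
        Real.rpow_le_rpow_of_exponent_le one_le_two hkle
      _ = 2 ^ (L * c₀) := by rw [mul_comm]
      _ = ((2:ℝ) ^ L) ^ c₀ := Real.rpow_mul (by norm_num) _ _
      _ = (n:ℝ) ^ c₀ := by rw [hLn]
      _ ≤ (n:ℝ) ^ (b/4) := Real.rpow_le_rpow_of_exponent_le hnn1 hc₀b
  have hkey : Real.logb 2 m * c₀ = -(b/4) := by
    have hne : Real.logb 2 m ≠ 0 := ne_of_lt hLm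
    rw [hc₀def]
    field_simp
  have hmk : (n:ℝ)^(-(b/4)) ≤ m^k := by
    rw [← Real.rpow_natCast m k]
    have h2 : m ^ (c₀ * L) ≤ m ^ ((k:ℕ):ℝ) :=
      Real.rpow_le_rpow_of_exponent_ge hm0 hm1.le hkle
    refine le_trans (le_of_eq ?_) h2
    have hm2' : (2:ℝ) ^ Real.logb 2 m = m := Real.rpow_logb two_pos (by norm_num) hm0
    calc (n:ℝ)^(-(b/4)) = ((2:ℝ)^L)^(-(b/4)) := by rw [hLn]
      _ = (2:ℝ)^(L * (-(b/4))) := (Real.rpow_mul (by norm_num) _ _).symm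
      _ = (2:ℝ)^(Real.logb 2 m * (c₀ * L)) := by
          rw [show Real.logb 2 m * (c₀ * L) = (Real.logb 2 m * c₀) * L by ring, hkey]
          ring_nf
      _ = ((2:ℝ)^(Real.logb 2 m))^(c₀ * L) := Real.rpow_mul (by norm_num) _ _
      _ = m ^ (c₀ * L) := by rw [hm2']
  have hmkpos : (0:ℝ) < m^k := pow_pos hm0 k
  have hrect : (n:ℝ)^(b/4) * (n:ℝ)^(-(b/4)) = 1 := by
    rw [← Real.rpow_add hn0]
    norm_num
  have hnb4pos : (0:ℝ) < (n:ℝ)^(b/4) := Real.rpow_pos_of_pos hn0 _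
  have hmkinv : 1/(m^2*m^k) ≤ (n:ℝ)^(b/4)/m^2 := by
    rw [div_le_div_iff₀ (by positivity) (by positivity)]
    have hge : 1 ≤ (n:ℝ)^(b/4) * m^k := by
      calc (1:ℝ) = (n:ℝ)^(b/4) * (n:ℝ)^(-(b/4)) := hrect.symm
        _ ≤ (n:ℝ)^(b/4) * m^k := mul_le_mul_of_nonneg_left hmk (by positivity)
    nlinarith [sq_nonneg m]
  have hεn : ε * (n:ℝ) = (n:ℝ)^(1-b) := by
    rw [hεdef]
    calc (n:ℝ)^(-b) * n = (n:ℝ)^(-b) * (n:ℝ)^(1:ℝ) := by rw [Real.rpow_one]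
      _ = (n:ℝ)^(-b+1) := (Real.rpow_add hn0 _ _).symm
      _ = (n:ℝ)^(1-b) := by ring_nf
  have hsplit1 : (n:ℝ)^(1-3*b/4) < n * (m^2/9) := by
    have heq : (n:ℝ)^(1-3*b/4) = n * (n:ℝ)^(-(3*b/4)) := by
      rw [show (1:ℝ)-3*b/4 = 1 + -(3*b/4) by ring, Real.rpow_add hn0, Real.rpow_one]
    rw [heq]
    exact mul_lt_mul_of_pos_left he3 hn0
  have hsplit2 : (n:ℝ)^(b/2) < n * (m^2/3) := by
    have heq : (n:ℝ)^(b/2) = n * (n:ℝ)^(b/2-1) := by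
      have h := Real.rpow_add hn0 1 (b/2-1)
      rw [show (1:ℝ)+(b/2-1) = b/2 by ring, Real.rpow_one] at h
      exact h
    rw [heq]
    exact mul_lt_mul_of_pos_left he4 hn0
  have m2pos : (0:ℝ) < m^2 := by positivity
  have hcount : (k : ℝ) + 2^k * (3*ε*(n:ℝ)/m^2 + 1/(m^2*m^k)) < n := by
    have hkL : (k:ℝ) ≤ L := le_trans hkle (by nlinarith)
    have hbr : (0:ℝ) ≤ 3*ε*(n:ℝ)/m^2 + 1/(m^2*m^k) := by positivity
    have hb2 : 3*ε*(n:ℝ)/m^2 + 1/(m^2*m^k) ≤ 3*(n:ℝ)^(1-b)/m^2 + (n:ℝ)^(b/4)/m^2 := by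
      have h1 : 3*ε*(n:ℝ)/m^2 = 3*(n:ℝ)^(1-b)/m^2 := by
        rw [show 3*ε*(n:ℝ) = 3*(ε*n) by ring, hεn]
      rw [h1]
      linarith [hmkinv]
    have h2 : 2^k * (3*ε*(n:ℝ)/m^2 + 1/(m^2*m^k))
        ≤ (n:ℝ)^(b/4) * (3*(n:ℝ)^(1-b)/m^2 + (n:ℝ)^(b/4)/m^2) :=
      mul_le_mul h2k hb2 hbr (by positivity)
    have h3 : (n:ℝ)^(b/4) * (3*(n:ℝ)^(1-b)/m^2 + (n:ℝ)^(b/4)/m^2)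
        = 3*(n:ℝ)^(1-3*b/4)/m^2 + (n:ℝ)^(b/2)/m^2 := by
      rw [show (1:ℝ)-3*b/4 = b/4 + (1-b) by ring, show (b:ℝ)/2 = b/4 + b/4 by ring,
        Real.rpow_add hn0, Real.rpow_add hn0]
      ring
    have t1 : 3*(n:ℝ)^(1-3*b/4)/m^2 < n/3 := by
      rw [div_lt_iff₀ m2pos]
      nlinarith
    have t2 : (n:ℝ)^(b/2)/m^2 < n/3 := by
      rw [div_lt_iff₀ m2pos]
      nlinarith
    have hL3 : L < n/3 := he2
    calc (k : ℝ) + 2^k * (3*ε*(n:ℝ)/m^2 + 1/(m^2*m^k))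
        ≤ L + ((n:ℝ)^(b/4) * (3*(n:ℝ)^(1-b)/m^2 + (n:ℝ)^(b/4)/m^2)) := by linarith
      _ = L + (3*(n:ℝ)^(1-3*b/4)/m^2 + (n:ℝ)^(b/2)/m^2) := by rw [h3]
      _ < n/3 + (n/3 + n/3) := by linarith
      _ = n := by ring
  have hfin : 1 ≤ m^k * (n:ℝ) := by
    have h1 : (n:ℝ)^(-(b/4)) * n ≤ m^k * n := mul_le_mul_of_nonneg_right hmk hn0.le
    have h2 : (n:ℝ)^(-(b/4)) * n = (n:ℝ)^(1-b/4) := by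
      rw [show (1:ℝ)-b/4 = -(b/4) + 1 by ring, Real.rpow_add hn0, Real.rpow_one]
    have h3 : (1:ℝ) ≤ (n:ℝ)^(1-b/4) := by
      calc (1:ℝ) = (n:ℝ)^(0:ℝ) := (Real.rpow_zero _).symm
        _ ≤ (n:ℝ)^(1-b/4) := Real.rpow_le_rpow_of_exponent_le hnn1 (by linarith)
    linarith [h2 ▸ h1]
  have hminh : ∀ v, (p - ε) * (n:ℝ) ≤ (dG G univ v : ℝ) := by
    intro v
    have := hdmin v
    rwa [ncard_nbhd] at this
  have hcoh : ∀ u v : Fin n, u ≠ v → (cdG G u v : ℝ) ≤ (p^2 + ε) * n := by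
    intro u v huv
    have := (hcodeg u v huv).2
    rwa [ncard_inter] at this
  obtain ⟨S, hScard, hScells⟩ :=
    build G p ε m hp0.le hp1.le hε hm0 hm1.le hmp hmq hminh hcoh k hcount
  refine ⟨S, ?_, ?_⟩
  · rw [hScard]
    exact hklb
  · intro A hA
    have hA' : A ∈ S.powerset := Finset.mem_powerset.mpr hA
    have hcell := hScells A hA'
    have hpos : 0 < (cellG G S A).card := by
      have h0 : (1:ℝ) ≤ ((cellG G S A).card : ℝ) := le_trans hfin hcell
      exact_mod_cast lt_of_lt_of_le zero_lt_one h0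
    obtain ⟨v, hv⟩ := Finset.card_pos.mp hpos
    refine ⟨v, ?_⟩
    rw [cellG, Finset.mem_filter] at hv
    have hv2 := hv.2
    ext x
    simp only [Set.mem_inter_iff, SimpleGraph.mem_neighborSet, Finset.mem_coe]
    constructor
    · rintro ⟨hadj, hxS⟩
      exact (hv2 x hxS).mp hadj
    · intro hxA
      have hxS : x ∈ S := hA hxA
      exact ⟨(hv2 x hxS).mpr hxA, hxS⟩
end

section
/- Let 0 < p < 1 and 0 < b < 1 be constants. There exist constants c > 0, C > 0 and N₀ such that the following holds for every n ≥ N₀. Let G be any graph on n vertices satisfying, with ε = n^{−b}, that every vertex degree lies in [(p−ε)n, (p+ε)n] and every pair of distinct vertices u, v satisfies (p²−ε)n ≤ codeg(u,v) ≤ (p²+ε)n. Let 0 ≤ a ≤ c · log n be an integer, let A be a uniformly random a-element subset of the vertex set, and let X_A be the number of vertices v with A ⊆ N(v). Then |E[X_A] − n·p^a| ≤ C · a · n^{−b} · n · p^a and Var[X_A] ≤ E[X_A] + C · n^{2−b} · p^{2a} · a. -/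
set_option maxHeartbeats 1000000


open Finset Filter
open scoped Classical

/-- The number of vertices `v` of `G` whose neighborhood contains the set `A`. -/
noncomputable def supersetCount {n : ℕ} (G : SimpleGraph (Fin n)) (A : Finset (Fin n)) : ℝ :=
  ({v : Fin n | (A : Set (Fin n)) ⊆ G.neighborSet v}.ncard : ℝ)

lemma supersetCount_eq {n : ℕ} (G : SimpleGraph (Fin n)) (A : Finset (Fin n)) :
    supersetCount G A = ∑ v : Fin n, if A ⊆ G.neighborFinset v then (1:ℝ) else 0 := by
  have hset : {v : Fin n | (A : Set (Fin n)) ⊆ G.neighborSet v}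
      = ↑(univ.filter (fun v => A ⊆ G.neighborFinset v)) := by
    ext v
    simp only [Set.mem_setOf_eq, Finset.coe_filter, Finset.mem_univ, true_and,
      SimpleGraph.neighborFinset_def, ← Set.subset_toFinset, Finset.mem_coe, Finset.mem_filter]
    simp
  rw [supersetCount, hset, Set.ncard_coe_finset, Finset.sum_boole]

lemma sum_supersetCount {n a : ℕ} (G : SimpleGraph (Fin n)) :
    ∑ A ∈ Finset.powersetCard a (Finset.univ : Finset (Fin n)), supersetCount G A
      = ∑ v : Fin n, ((G.neighborFinset v).card.choose a : ℝ) := by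
  simp only [supersetCount_eq]
  rw [Finset.sum_comm]
  congr 1
  ext v
  rw [Finset.sum_boole]
  have h : (Finset.powersetCard a (univ : Finset (Fin n))).filter (fun A => A ⊆ G.neighborFinset v)
      = Finset.powersetCard a (G.neighborFinset v) := by
    ext A; simp [Finset.mem_powersetCard, and_comm]
  rw [h, Finset.card_powersetCard]

lemma sum_supersetCount_sq {n a : ℕ} (G : SimpleGraph (Fin n)) :
    ∑ A ∈ Finset.powersetCard a (Finset.univ : Finset (Fin n)), (supersetCount G A)^2
      = ∑ u : Fin n, ∑ v : Fin n,
          (((G.neighborFinset u ∩ G.neighborFinset v).card).choose a : ℝ) := by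
  have key : ∀ A : Finset (Fin n), (supersetCount G A)^2 = ∑ u : Fin n, ∑ v : Fin n,
      (if A ⊆ G.neighborFinset u ∩ G.neighborFinset v then (1:ℝ) else 0) := by
    intro A
    rw [supersetCount_eq, sq, Finset.sum_mul_sum]
    congr 1; ext u; congr 1; ext v
    rw [ite_mul, one_mul, zero_mul]
    simp [Finset.subset_inter_iff, ite_and]
  simp only [key]
  rw [Finset.sum_comm]
  congr 1; ext u
  rw [Finset.sum_comm]
  congr 1; ext v
  rw [Finset.sum_boole]
  have h : (Finset.powersetCard a (univ : Finset (Fin n))).filter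
        (fun A => A ⊆ G.neighborFinset u ∩ G.neighborFinset v)
      = Finset.powersetCard a (G.neighborFinset u ∩ G.neighborFinset v) := by
    ext A; simp [Finset.mem_powersetCard, and_comm]
  rw [h, Finset.card_powersetCard]

lemma pow_one_add_le {x : ℝ} (hx : 0 ≤ x) :
    ∀ a : ℕ, 2*(a:ℝ)*x ≤ 1 → (1+x)^a ≤ 1+2*a*x := by
  intro a
  induction a with
  | zero => simp
  | succ a ih =>
    intro h
    have ha : 2*(a:ℝ)*x ≤ 1 := by
      have : (a:ℝ) ≤ (a:ℝ)+1 := by linarith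
      push_cast at h ⊢
      nlinarith
    have h1 := ih ha
    have h2 : (1+x)^(a+1) = (1+x)^a * (1+x) := by ring
    have hp : (0:ℝ) ≤ (1+x)^a := by positivity
    push_cast
    push_cast at h1 ha
    nlinarith [mul_le_mul_of_nonneg_right h1 (by linarith : (0:ℝ) ≤ 1+x)]

lemma choose_ratio_bound (q ε : ℝ) (a m n : ℕ) (hq : 0 < q) (hq1 : q ≤ 1)
    (hε : 0 ≤ ε) (hmn : m ≤ n)
    (hm1 : (q-ε)*n ≤ m) (hm2 : (m:ℝ) ≤ (q+ε)*n)
    (h1 : 4*(a:ℝ) ≤ ε*n) (h2 : 2*ε ≤ q) (h3 : 4*(a:ℝ)*ε ≤ q) :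
    |(m.choose a : ℝ)/(n.choose a) - q^a| ≤ 4*(a:ℝ)*ε/q * q^a := by
  rcases Nat.eq_zero_or_pos a with rfl | hapos
  · simp
  have ha1 : (1:ℝ) ≤ (a:ℝ) := by exact_mod_cast hapos
  have hehalf : ε ≤ 1/2 := by linarith
  have hn8a : 8*(a:ℝ) ≤ n := by nlinarith
  have haen : (a:ℝ) ≤ ε * n := by nlinarith
  have ham : a ≤ m := by
    have : (a:ℝ) ≤ (m:ℝ) := by nlinarith
    exact_mod_cast this
  have han : a ≤ n := le_trans ham hmn
  have hnapos : (0:ℝ) < (n:ℝ) - a := by nlinarith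
  -- write ratio via descFactorial
  have hfac : (0:ℝ) < (a.factorial : ℝ) := by exact_mod_cast a.factorial_pos
  have hr : (m.choose a : ℝ)/(n.choose a)
      = (m.descFactorial a : ℝ)/(n.descFactorial a) := by
    rw [Nat.descFactorial_eq_factorial_mul_choose, Nat.descFactorial_eq_factorial_mul_choose]
    push_cast
    rw [mul_div_mul_left _ _ (ne_of_gt hfac)]
  have hdn_pos : (0:ℝ) < (n.descFactorial a : ℝ) := by
    have := Nat.descFactorial_eq_zero_iff_lt (n := n) (k := a)
    have hne : n.descFactorial a ≠ 0 := by
      intro h0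
      exact absurd (this.mp h0) (by omega)
    exact_mod_cast Nat.pos_of_ne_zero hne
  -- numerator/denominator bounds
  have hub_num : (m.descFactorial a : ℝ) ≤ (m:ℝ)^a := by
    exact_mod_cast m.descFactorial_le_pow a
  have hub_den : ((n:ℝ) - a)^a ≤ (n.descFactorial a : ℝ) := by
    have h' : ((n - a : ℕ) : ℝ)^a ≤ (n.descFactorial a : ℝ) := by
      exact_mod_cast le_trans (Nat.pow_le_pow_left (by omega) a) (n.pow_sub_le_descFactorial a)
    rwa [Nat.cast_sub han] at h'
  have hlb_num : ((m:ℝ) - a)^a ≤ (m.descFactorial a : ℝ) := by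
    have h' : ((m - a : ℕ) : ℝ)^a ≤ (m.descFactorial a : ℝ) := by
      exact_mod_cast le_trans (Nat.pow_le_pow_left (by omega) a) (m.pow_sub_le_descFactorial a)
    rwa [Nat.cast_sub ham] at h'
  have hlb_den : (n.descFactorial a : ℝ) ≤ (n:ℝ)^a := by
    exact_mod_cast n.descFactorial_le_pow a
  have hma_nonneg : (0:ℝ) ≤ (m:ℝ) - a := by nlinarith
  have hnpos : (0:ℝ) < (n:ℝ) := by nlinarith
  -- upper bound
  have hup : (m.descFactorial a : ℝ)/(n.descFactorial a) ≤ ((m:ℝ)/((n:ℝ)-a))^a := by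
    rw [div_pow]
    exact div_le_div₀ (by positivity) hub_num (by positivity) hub_den
  have hq2e : (m:ℝ)/((n:ℝ)-a) ≤ q + 2*ε := by
    rw [div_le_iff₀ hnapos]
    have e1 : (q+2*ε)*a ≤ 2*(a:ℝ) := by
      have : q+2*ε ≤ 2 := by linarith
      have ha0 : (0:ℝ) ≤ (a:ℝ) := by positivity
      nlinarith
    have e2 : (q+2*ε)*((n:ℝ)-a) = (q+ε)*n + (ε*n - (q+2*ε)*a) := by ring
    have e3 : 0 ≤ ε*n - (q+2*ε)*a := by linarith
    linarith
  have hup2 : ((m:ℝ)/((n:ℝ)-a))^a ≤ (q+2*ε)^a :=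
    pow_le_pow_left₀ (by positivity) hq2e a
  have hsplit : (q+2*ε)^a = q^a * (1+2*ε/q)^a := by
    rw [← mul_pow]
    congr 1
    field_simp
  have hcond : 2*(a:ℝ)*(2*ε/q) ≤ 1 := by
    have e : 2*(a:ℝ)*(2*ε/q) = (4*(a:ℝ)*ε)/q := by ring
    rw [e, div_le_one hq]
    exact h3
  have hup3 : (1+2*ε/q)^a ≤ 1 + 2*a*(2*ε/q) := pow_one_add_le (by positivity) a hcond
  have hup4 : (q+2*ε)^a ≤ q^a + 4*(a:ℝ)*ε/q * q^a := by
    rw [hsplit]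
    have := mul_le_mul_of_nonneg_left hup3 (by positivity : (0:ℝ) ≤ q^a)
    calc q^a * (1+2*ε/q)^a ≤ q^a * (1 + 2*a*(2*ε/q)) := this
      _ = q^a + 4*(a:ℝ)*ε/q * q^a := by ring
  -- lower bound
  have hlo : (((m:ℝ)-a)/(n:ℝ))^a ≤ (m.descFactorial a : ℝ)/(n.descFactorial a) := by
    rw [div_pow]
    exact div_le_div₀ (by positivity) hlb_num hdn_pos hlb_den
  have hq2e' : q - 2*ε ≤ ((m:ℝ)-a)/(n:ℝ) := by
    rw [le_div_iff₀ hnpos]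
    nlinarith
  have hlo2 : (q-2*ε)^a ≤ (((m:ℝ)-a)/(n:ℝ))^a :=
    pow_le_pow_left₀ (by linarith) hq2e' a
  have hsplit' : (q-2*ε)^a = q^a * (1-2*ε/q)^a := by
    rw [← mul_pow]
    congr 1
    field_simp
  have hbern : 1 + (a:ℝ)*(-(2*ε/q)) ≤ (1+(-(2*ε/q)))^a := by
    apply one_add_mul_le_pow
    have : 2*ε/q ≤ 1 := by rw [div_le_iff₀ hq]; nlinarith
    linarith
  have hlo3 : q^a - 4*(a:ℝ)*ε/q * q^a ≤ (q-2*ε)^a := by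
    rw [hsplit']
    have h4 : 1 - 4*(a:ℝ)*ε/q ≤ (1-2*ε/q)^a := by
      have e1 : (1:ℝ)+(-(2*ε/q)) = 1-2*ε/q := by ring
      rw [e1] at hbern
      have : 1 + (a:ℝ)*(-(2*ε/q)) = 1 - 2*(a:ℝ)*ε/q := by ring
      rw [this] at hbern
      refine le_trans ?_ hbern
      have h24 : 2*(a:ℝ)*ε/q ≤ 4*(a:ℝ)*ε/q := by
        gcongr
        nlinarith
      linarith
    calc q^a - 4*(a:ℝ)*ε/q * q^a = q^a * (1 - 4*(a:ℝ)*ε/q) := by ring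
      _ ≤ q^a * (1-2*ε/q)^a :=
        mul_le_mul_of_nonneg_left h4 (by positivity)
  rw [hr, abs_le]
  constructor
  · nlinarith [le_trans (le_trans hlo2 hlo) (le_refl ((m.descFactorial a : ℝ)/(n.descFactorial a))), hlo3]
  · nlinarith [le_trans hup hup2, hup4]

lemma eventually_conds (p b : ℝ) (hp0 : 0 < p) (hb0 : 0 < b) (hb1 : b < 1) :
    ∃ N₀ : ℕ, ∀ n : ℕ, n ≥ N₀ → (1 ≤ (n:ℝ) ∧ 2*(n:ℝ)^(-b) ≤ p^2 ∧
      4*Real.logb 2 n * (n:ℝ)^(-b) ≤ p^2 ∧ 4*Real.logb 2 n ≤ (n:ℝ)^(-b) * n) := by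
  have hcast : Tendsto (fun n : ℕ => (n:ℝ)) atTop atTop := tendsto_natCast_atTop_atTop
  -- real-level eventually statements
  have E1 : ∀ᶠ x : ℝ in atTop, 1 ≤ x := eventually_ge_atTop 1
  have E2 : ∀ᶠ x : ℝ in atTop, 2*x^(-b) ≤ p^2 := by
    have h := tendsto_rpow_neg_atTop hb0
    have := h.eventually (eventually_le_nhds (show (0:ℝ) < p^2/4 by positivity))
    filter_upwards [this] with x hx
    nlinarith [sq_nonneg p]
  have hlog : ∀ r : ℝ, 0 < r → Tendsto (fun x : ℝ => Real.log x / x ^ r) atTop (nhds 0) :=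
    fun r hr => (isLittleO_log_rpow_atTop hr).tendsto_div_nhds_zero
  have hlog2 : (0:ℝ) < Real.log 2 := Real.log_pos (by norm_num)
  have E3 : ∀ᶠ x : ℝ in atTop, 4*Real.logb 2 x * x^(-b) ≤ p^2 := by
    have h := (hlog b hb0).const_mul (4 / Real.log 2)
    rw [mul_zero] at h
    have h2 := h.eventually (eventually_le_nhds (show (0:ℝ) < p^2 by positivity))
    filter_upwards [h2, eventually_ge_atTop (1:ℝ)] with x hx hx1
    have hxpos : (0:ℝ) < x := by linarith
    have e : 4*Real.logb 2 x * x^(-b) = 4 / Real.log 2 * (Real.log x / x ^ b) := by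
      rw [Real.logb, Real.rpow_neg hxpos.le]
      field_simp
    rw [e]
    exact hx
  have E4 : ∀ᶠ x : ℝ in atTop, 4*Real.logb 2 x ≤ x^(-b) * x := by
    have h := (hlog (1-b) (by linarith)).const_mul (4 / Real.log 2)
    rw [mul_zero] at h
    have h2 := h.eventually (eventually_le_nhds (show (0:ℝ) < 1 by norm_num))
    filter_upwards [h2, eventually_ge_atTop (1:ℝ)] with x hx hx1
    have hxpos : (0:ℝ) < x := by linarith
    have hxr : (0:ℝ) < x ^ (1-b) := Real.rpow_pos_of_pos hxpos _
    have e : x^(-b) * x = x ^ (1-b) := by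
      nth_rewrite 2 [← Real.rpow_one x]
      rw [← Real.rpow_add hxpos]
      congr 1
      ring
    rw [e]
    have : 4 / Real.log 2 * (Real.log x / x ^ (1-b)) ≤ 1 := hx
    rw [div_mul_div_comm, div_le_one (by positivity)] at this
    calc 4*Real.logb 2 x = (4 * Real.log x) / Real.log 2 := by
          rw [Real.logb]; ring
      _ ≤ x ^ (1-b) := by
          rw [div_le_iff₀ hlog2]
          nlinarith [this]
  have Eall := hcast.eventually ((E1.and E2).and (E3.and E4))
  rw [Filter.eventually_atTop] at Eall
  obtain ⟨N₀, hN₀⟩ := Eall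
  exact ⟨N₀, fun n hn => by
    obtain ⟨⟨a1, a2⟩, a3, a4⟩ := hN₀ n hn
    exact ⟨a1, a2, a3, a4⟩⟩

lemma var_formula {α : Type*} (s : Finset α) (hs : s.Nonempty) (f : α → ℝ) :
    (∑ x ∈ s, (f x - (∑ y ∈ s, f y)/s.card)^2)/s.card
      = (∑ x ∈ s, (f x)^2)/s.card - ((∑ y ∈ s, f y)/s.card)^2 := by
  have hM : (0:ℝ) < (s.card:ℝ) := by
    exact_mod_cast Finset.card_pos.mpr hs
  set m : ℝ := (∑ y ∈ s, f y)/s.card with hm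
  have hsum : ∑ y ∈ s, f y = m * s.card := by
    rw [hm]; field_simp
  have expand : ∑ x ∈ s, (f x - m)^2
      = ∑ x ∈ s, (f x)^2 - 2*m*(∑ y ∈ s, f y) + s.card * m^2 := by
    have : ∀ x ∈ s, (f x - m)^2 = (f x)^2 - 2*m*(f x) + m^2 := fun x _ => by ring
    rw [Finset.sum_congr rfl this, Finset.sum_add_distrib, Finset.sum_sub_distrib,
      ← Finset.mul_sum, Finset.sum_const, nsmul_eq_mul]
  rw [expand, hsum]
  clear_value m
  rw [div_eq_iff hM.ne', sub_mul, div_mul_cancel₀ _ hM.ne']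
  ring

/-- The expectation of `X_A = supersetCount G A` over a uniformly random `a`-subset `A`. -/
noncomputable def meanX {n : ℕ} (G : SimpleGraph (Fin n)) (a : ℕ) : ℝ :=
  (∑ A ∈ Finset.powersetCard a (Finset.univ : Finset (Fin n)), supersetCount G A) /
    (Finset.powersetCard a (Finset.univ : Finset (Fin n))).card

/-- The variance of `X_A = supersetCount G A` over a uniformly random `a`-subset `A`. -/
noncomputable def varX {n : ℕ} (G : SimpleGraph (Fin n)) (a : ℕ) : ℝ :=
  (∑ A ∈ Finset.powersetCard a (Finset.univ : Finset (Fin n)),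
      (supersetCount G A - meanX G a) ^ 2) /
    (Finset.powersetCard a (Finset.univ : Finset (Fin n))).card

/-- In a pseudorandom graph, for `a ≤ c·log n`, the number `X_A` of vertices whose
neighborhood contains a uniformly random `a`-set `A` has mean `≈ n·p^a` and small variance. -/
theorem mean_var_supersetCount (p b : ℝ)
    (hp0 : 0 < p) (hp1 : p < 1) (hb0 : 0 < b) (hb1 : b < 1) :
    ∃ c C : ℝ, 0 < c ∧ 0 < C ∧ ∃ N₀ : ℕ, ∀ n ≥ N₀, ∀ G : SimpleGraph (Fin n),
      (∀ v : Fin n, (p - (n : ℝ) ^ (-b)) * n ≤ ((G.neighborSet v).ncard : ℝ) ∧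
        ((G.neighborSet v).ncard : ℝ) ≤ (p + (n : ℝ) ^ (-b)) * n) →
      (∀ u v : Fin n, u ≠ v →
        (p ^ 2 - (n : ℝ) ^ (-b)) * n ≤ ((G.neighborSet u ∩ G.neighborSet v).ncard : ℝ) ∧
        ((G.neighborSet u ∩ G.neighborSet v).ncard : ℝ) ≤ (p ^ 2 + (n : ℝ) ^ (-b)) * n) →
      ∀ a : ℕ, (a : ℝ) ≤ c * Real.logb 2 n →
        |meanX G a - n * p ^ a| ≤ C * a * (n : ℝ) ^ (-b) * n * p ^ a ∧
        varX G a ≤ meanX G a + C * (n : ℝ) ^ ((2 : ℝ) - b) * p ^ (2 * a) * a := by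
  obtain ⟨N₀, hN₀⟩ := eventually_conds p b hp0 hb0 hb1
  refine ⟨1, 12/p^2, one_pos, by positivity, N₀, ?_⟩
  intro n hn G hdeg hcodeg a ha
  obtain ⟨c1, c2, c3, c4⟩ := hN₀ n hn
  set ε : ℝ := (n:ℝ)^(-b) with hεdef
  have hε : 0 ≤ ε := Real.rpow_nonneg (by positivity) _
  have hnpos : (0:ℝ) < n := by linarith
  have hlogn : 0 ≤ Real.logb 2 n := Real.logb_nonneg (by norm_num) c1
  have hale : (a:ℝ) ≤ Real.logb 2 n := by linarith
  have hp2 : (0:ℝ) < p^2 := by positivity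
  have hp21 : p^2 ≤ 1 := by
    have := mul_le_one₀ hp1.le hp0.le hp1.le
    calc p^2 = p*p := sq p
      _ ≤ 1 := this
  have hp2p : p^2 ≤ p := by
    have := mul_le_of_le_one_right hp0.le hp1.le
    calc p^2 = p*p := sq p
      _ ≤ p := this
  -- conditions for ratio lemma
  have h1 : 4*(a:ℝ) ≤ ε*n := by linarith only [hale, c4]
  have h2q : 2*ε ≤ p^2 := by linarith only [c2]
  have h3q : 4*(a:ℝ)*ε ≤ p^2 := by
    have h' : 4*(a:ℝ)*ε ≤ 4*Real.logb 2 n*ε :=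
      mul_le_mul_of_nonneg_right (by linarith only [hale]) hε
    linarith only [h', c3]
  have h2p : 2*ε ≤ p := le_trans h2q hp2p
  have h3p : 4*(a:ℝ)*ε ≤ p := le_trans h3q hp2p
  have hehalf : ε ≤ 1/2 := by linarith only [h2q, hp21]
  have haN : a ≤ n := by
    have hen : ε*(n:ℝ) ≤ 1*(n:ℝ) :=
      mul_le_mul_of_nonneg_right (by linarith only [hehalf]) hnpos.le
    have : (a:ℝ) ≤ (n:ℝ) := by linarith only [h1, hen]
    exact_mod_cast this
  -- bridge ncard to finset card
  have coeN : ∀ v : Fin n, ((G.neighborFinset v : Finset (Fin n)) : Set (Fin n))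
      = G.neighborSet v := fun v => by
    rw [SimpleGraph.neighborFinset_def, Set.coe_toFinset]
  have hbr : ∀ v : Fin n, ((G.neighborSet v).ncard : ℝ)
      = ((G.neighborFinset v).card : ℝ) := fun v => by
    have h := Set.ncard_coe_finset (G.neighborFinset v); rw [coeN v] at h; rw [h]
  have hbr2 : ∀ u v : Fin n, ((G.neighborSet u ∩ G.neighborSet v).ncard : ℝ)
      = (((G.neighborFinset u ∩ G.neighborFinset v)).card : ℝ) := fun u v => by
    have h := Set.ncard_coe_finset (G.neighborFinset u ∩ G.neighborFinset v)
    rw [Finset.coe_inter, coeN u, coeN v] at h; rw [h]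
  have hcardle : ∀ v : Fin n, (G.neighborFinset v).card ≤ n := fun v => by
    simpa using Finset.card_le_card (Finset.subset_univ (G.neighborFinset v))
  have hcardle2 : ∀ u v : Fin n, (G.neighborFinset u ∩ G.neighborFinset v).card ≤ n :=
    fun u v => by
    simpa using Finset.card_le_card
      (Finset.subset_univ (G.neighborFinset u ∩ G.neighborFinset v))
  -- the ambient set of a-subsets
  set P := Finset.powersetCard a (Finset.univ : Finset (Fin n)) with hP
  have hPcard : (P.card : ℝ) = (n.choose a : ℝ) := by
    rw [hP, Finset.card_powersetCard, Finset.card_univ, Fintype.card_fin]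
  have hchoosepos : (0:ℝ) < (n.choose a : ℝ) := by
    exact_mod_cast Nat.choose_pos haN
  have hPpos : (0:ℝ) < (P.card : ℝ) := by rw [hPcard]; exact hchoosepos
  have hPne : P.Nonempty := Finset.card_pos.mp (by exact_mod_cast hPpos)
  -- per-vertex ratio bounds
  have hv : ∀ v : Fin n, |((G.neighborFinset v).card.choose a : ℝ)/(n.choose a) - p^a|
      ≤ 4*(a:ℝ)*ε/p * p^a := by
    intro v
    refine choose_ratio_bound p ε a _ n hp0 hp1.le hε (hcardle v) ?_ ?_ h1 h2p h3p
    · rw [← hbr v]; exact (hdeg v).1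
    · rw [← hbr v]; exact (hdeg v).2
  have huv : ∀ u v : Fin n, u ≠ v →
      |(((G.neighborFinset u ∩ G.neighborFinset v).card.choose a : ℝ))/(n.choose a) - (p^2)^a|
      ≤ 4*(a:ℝ)*ε/p^2 * (p^2)^a := by
    intro u v huvne
    refine choose_ratio_bound (p^2) ε a _ n hp2 hp21 hε (hcardle2 u v) ?_ ?_ h1 h2q h3q
    · rw [← hbr2 u v]; exact (hcodeg u v huvne).1
    · rw [← hbr2 u v]; exact (hcodeg u v huvne).2
  -- mean formula
  have hmean : meanX G a = ∑ v : Fin n, ((G.neighborFinset v).card.choose a : ℝ)/(n.choose a) := by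
    rw [meanX, sum_supersetCount, hPcard, Finset.sum_div]
  -- mean bound
  have hmeandiff : meanX G a - (n:ℝ) * p^a
      = ∑ v : Fin n, (((G.neighborFinset v).card.choose a : ℝ)/(n.choose a) - p^a) := by
    rw [hmean, Finset.sum_sub_distrib, Finset.sum_const, Finset.card_univ, Fintype.card_fin,
      nsmul_eq_mul]
  have hmeanbound : |meanX G a - (n:ℝ) * p^a| ≤ (n:ℝ) * (4*(a:ℝ)*ε/p * p^a) := by
    rw [hmeandiff]
    calc |∑ v : Fin n, (((G.neighborFinset v).card.choose a : ℝ)/(n.choose a) - p^a)|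
        ≤ ∑ v : Fin n, |((G.neighborFinset v).card.choose a : ℝ)/(n.choose a) - p^a| :=
          Finset.abs_sum_le_sum_abs _ _
      _ ≤ ∑ _v : Fin n, 4*(a:ℝ)*ε/p * p^a := Finset.sum_le_sum (fun v _ => hv v)
      _ = (n:ℝ) * (4*(a:ℝ)*ε/p * p^a) := by
          rw [Finset.sum_const, Finset.card_univ, Fintype.card_fin, nsmul_eq_mul]
  constructor
  · refine le_trans hmeanbound ?_
    have key : (4:ℝ)/p ≤ 12/p^2 := by
      rw [div_le_div_iff₀ hp0 hp2]
      linarith only [hp2p, hp0.le]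
    have hrw : (n:ℝ) * (4*(a:ℝ)*ε/p * p^a) = (4/p) * ((a:ℝ)*ε*(n:ℝ)*p^a) := by ring
    have hrw2 : 12/p^2 * a * ε * n * p^a = (12/p^2) * ((a:ℝ)*ε*(n:ℝ)*p^a) := by ring
    rw [hrw, hrw2]
    apply mul_le_mul_of_nonneg_right key
    positivity
  -- variance
  · have hvar : varX G a = (∑ A ∈ P, (supersetCount G A)^2)/(P.card) - (meanX G a)^2 := by
      unfold varX meanX
      exact var_formula _ hPne _
    have hsq : (∑ A ∈ P, (supersetCount G A)^2)/(P.card)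
        = ∑ u : Fin n, ∑ v : Fin n,
            (((G.neighborFinset u ∩ G.neighborFinset v).card.choose a : ℝ))/(n.choose a) := by
      rw [hP, sum_supersetCount_sq]
      rw [← hP, hPcard, Finset.sum_div]
      congr 1; ext u; rw [Finset.sum_div]
    -- split diagonal
    have hsplitdiag : ∀ u : Fin n,
        ∑ v : Fin n, (((G.neighborFinset u ∩ G.neighborFinset v).card.choose a : ℝ))/(n.choose a)
        = ((G.neighborFinset u).card.choose a : ℝ)/(n.choose a)
          + ∑ v ∈ Finset.univ.erase u,
              (((G.neighborFinset u ∩ G.neighborFinset v).card.choose a : ℝ))/(n.choose a) := by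
      intro u
      rw [← Finset.add_sum_erase _ _ (Finset.mem_univ u), Finset.inter_self]
    have hEX2 : (∑ A ∈ P, (supersetCount G A)^2)/(P.card)
        = meanX G a + ∑ u : Fin n, ∑ v ∈ Finset.univ.erase u,
            (((G.neighborFinset u ∩ G.neighborFinset v).card.choose a : ℝ))/(n.choose a) := by
      rw [hsq]
      rw [Finset.sum_congr rfl (fun u _ => hsplitdiag u), Finset.sum_add_distrib, hmean]
    -- off diagonal bound
    set UB : ℝ := (p^2)^a + 4*(a:ℝ)*ε/p^2 * (p^2)^a with hUB
    have hUBnonneg : 0 ≤ UB := by positivity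
    have hoff : ∑ u : Fin n, ∑ v ∈ Finset.univ.erase u,
        (((G.neighborFinset u ∩ G.neighborFinset v).card.choose a : ℝ))/(n.choose a)
        ≤ (n:ℝ)^2 * UB := by
      have hinner : ∀ u : Fin n, ∑ v ∈ Finset.univ.erase u,
          (((G.neighborFinset u ∩ G.neighborFinset v).card.choose a : ℝ))/(n.choose a)
          ≤ (n:ℝ) * UB := by
        intro u
        calc ∑ v ∈ Finset.univ.erase u,
            (((G.neighborFinset u ∩ G.neighborFinset v).card.choose a : ℝ))/(n.choose a)
            ≤ ∑ v ∈ Finset.univ.erase u, UB := by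
              refine Finset.sum_le_sum (fun v hvmem => ?_)
              have hne : u ≠ v := (Finset.ne_of_mem_erase hvmem).symm
              have := huv u v hne
              rw [abs_le] at this
              linarith [this.2]
          _ = ((Finset.univ.erase u).card : ℝ) * UB := by
              rw [Finset.sum_const, nsmul_eq_mul]
          _ ≤ (n:ℝ) * UB := by
              apply mul_le_mul_of_nonneg_right _ hUBnonneg
              have : (Finset.univ.erase u).card ≤ n := by
                simpa using le_trans (Finset.card_erase_le)
                  (by simp : (Finset.univ : Finset (Fin n)).card ≤ n)
              exact_mod_cast this
      calc ∑ u : Fin n, ∑ v ∈ Finset.univ.erase u,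
          (((G.neighborFinset u ∩ G.neighborFinset v).card.choose a : ℝ))/(n.choose a)
          ≤ ∑ _u : Fin n, (n:ℝ) * UB := Finset.sum_le_sum (fun u _ => hinner u)
        _ = (n:ℝ) * ((n:ℝ) * UB) := by
            rw [Finset.sum_const, Finset.card_univ, Fintype.card_fin, nsmul_eq_mul]
        _ = (n:ℝ)^2 * UB := by ring
    -- lower bound on mean squared
    set t : ℝ := 4*(a:ℝ)*ε/p with ht
    have htnonneg : 0 ≤ t := by positivity
    have ht1 : t ≤ 1 := by
      rw [ht, div_le_one hp0]
      exact h3p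
    have hmlow : (n:ℝ)*p^a*(1-t) ≤ meanX G a := by
      have habs := hmeanbound
      rw [abs_le] at habs
      have h' := habs.1
      have e : (n:ℝ) * (4*(a:ℝ)*ε/p * p^a) = (n:ℝ)*p^a*t := by rw [ht]; ring
      linarith only [h', e]
    have hmnonneg : 0 ≤ (n:ℝ)*p^a*(1-t) :=
      mul_nonneg (by positivity) (by linarith only [ht1])
    have hm0 : 0 ≤ meanX G a := le_trans hmnonneg hmlow
    have hmsq : (n:ℝ)^2*(p^a)^2*(1-2*t) ≤ (meanX G a)^2 := by
      have hsq' : ((n:ℝ)*p^a*(1-t))^2 ≤ (meanX G a)^2 :=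
        sq_le_sq' (by linarith only [hm0, hmnonneg]) hmlow
      have expand2 : ((n:ℝ)*p^a*(1-t))^2
          = (n:ℝ)^2*(p^a)^2*(1-2*t) + (n:ℝ)^2*(p^a)^2*t^2 := by ring
      have pos2 : 0 ≤ (n:ℝ)^2*(p^a)^2*t^2 := by positivity
      linarith only [hsq', expand2, pos2]
    -- put together
    have hp2a : (p^2)^a = (p^a)^2 := by rw [← pow_mul, ← pow_mul, Nat.mul_comm]
    have hfinal : varX G a ≤ meanX G a + (n:ℝ)^2 * ε * ((p^a)^2 * (a:ℝ)) * (12/p^2) := by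
      rw [hvar, hEX2]
      have expand : (n:ℝ)^2 * UB - (n:ℝ)^2*(p^a)^2*(1-2*t)
          = (n:ℝ)^2 * (p^a)^2 * (4*(a:ℝ)*ε/p^2 + 2*t) := by
        rw [hUB, hp2a, ht]
        ring
      have hco : 4*(a:ℝ)*ε/p^2 + 2*t ≤ ε * (a:ℝ) * (12/p^2) := by
        have hinv : 1/p ≤ 1/p^2 := one_div_le_one_div_of_le hp2 hp2p
        calc 4*(a:ℝ)*ε/p^2 + 2*t = 4*((a:ℝ)*ε)*(1/p^2) + 8*((a:ℝ)*ε)*(1/p) := by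
              rw [ht]; ring
          _ ≤ 4*((a:ℝ)*ε)*(1/p^2) + 8*((a:ℝ)*ε)*(1/p^2) := by
              have h8 := mul_le_mul_of_nonneg_left hinv
                (by positivity : (0:ℝ) ≤ 8*((a:ℝ)*ε))
              linarith only [h8]
          _ = ε * (a:ℝ) * (12/p^2) := by ring
      have hco2 := mul_le_mul_of_nonneg_left hco
        (by positivity : (0:ℝ) ≤ (n:ℝ)^2 * (p^a)^2)
      linarith only [hoff, hmsq, expand, hco2]
    refine le_trans hfinal ?_
    have hrpow : (n:ℝ)^((2:ℝ)-b) = (n:ℝ)^2 * ε := by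
      rw [hεdef, show (2:ℝ)-b = 2 + (-b) by ring, Real.rpow_add hnpos]
      congr 1
      rw [show ((2:ℝ):ℝ) = ((2:ℕ):ℝ) by norm_num, Real.rpow_natCast]
    rw [hrpow, pow_mul]
    apply add_le_add le_rfl
    apply le_of_eq
    ring
end

section
/- Let G be a graph on n vertices with vertex set V, let 0 < p < 1 and δ > 0 be reals, and let S ⊆ V with |S| = s. Assume that for every subset A ⊆ S the number of vertices v ∈ V with A ⊆ N(v) lies between (1−δ)·n·p^{|A|} and (1+δ)·n·p^{|A|}. Then for every subset A ⊆ S, the number of vertices v ∈ V with N(v) ∩ S = A is at least n · p^{|A|} · ( (1−p)^{s−|A|} − δ·(1−p)^{−(s−|A|)} ). -/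
open Finset

private lemma sum_pow_card' {α : Type*} [DecidableEq α] (T : Finset α) (x : ℝ) :
    ∑ B ∈ T.powerset, x ^ B.card = (x + 1) ^ T.card := by
  have h := Finset.prod_add (fun _ : α => x) (fun _ => 1) T
  simp only [Finset.prod_const, Finset.prod_const_one, mul_one] at h
  simpa using h.symm

private lemma pointwise {α : Type*} [DecidableEq α] (S A Nv : Finset α) (hA : A ⊆ S) :
    (if Nv ∩ S = A then (1:ℝ) else 0) =
      ∑ B ∈ (S \ A).powerset, (-1:ℝ) ^ B.card * (if A ∪ B ⊆ Nv then 1 else 0) := by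
  by_cases hAN : A ⊆ Nv
  · have hiff : ∀ B, A ∪ B ⊆ Nv ↔ B ⊆ Nv := by
      intro B; constructor
      · intro h; exact (Finset.union_subset_iff.mp h).2
      · intro h; exact Finset.union_subset hAN h
    have hrw : ∑ B ∈ (S \ A).powerset, (-1:ℝ) ^ B.card * (if A ∪ B ⊆ Nv then 1 else 0)
        = ∑ B ∈ ((S \ A) ∩ Nv).powerset, (-1:ℝ) ^ B.card := by
      rw [show ((S \ A) ∩ Nv).powerset = (S \ A).powerset.filter (· ⊆ Nv) by
        ext B
        simp only [Finset.mem_powerset, Finset.mem_filter, Finset.subset_inter_iff]]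
      rw [Finset.sum_filter]
      refine Finset.sum_congr rfl fun B _ => ?_
      by_cases hB : B ⊆ Nv <;> simp [hB, hiff B]
    rw [hrw]
    have hz : (∑ B ∈ ((S \ A) ∩ Nv).powerset, (-1:ℝ) ^ B.card)
        = if (S \ A) ∩ Nv = ∅ then 1 else 0 := by
      have := Finset.sum_powerset_neg_one_pow_card (x := (S \ A) ∩ Nv)
      have h2 : ((∑ m ∈ ((S \ A) ∩ Nv).powerset, (-1 : ℤ) ^ m.card : ℤ) : ℝ)
          = ∑ B ∈ ((S \ A) ∩ Nv).powerset, (-1:ℝ) ^ B.card := by push_cast; ring_nf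
      rw [← h2, this]
      split <;> simp
    rw [hz]
    have hiff2 : Nv ∩ S = A ↔ (S \ A) ∩ Nv = ∅ := by
      constructor
      · intro h
        ext x
        simp only [Finset.mem_inter, Finset.mem_sdiff, Finset.notMem_empty, iff_false]
        rintro ⟨⟨hxS, hxA⟩, hxN⟩
        exact hxA (h ▸ Finset.mem_inter.mpr ⟨hxN, hxS⟩)
      · intro h
        apply Finset.Subset.antisymm
        · intro x hx
          obtain ⟨hxN, hxS⟩ := Finset.mem_inter.mp hx
          by_contra hxA
          exact absurd (h ▸ Finset.mem_inter.mpr ⟨Finset.mem_sdiff.mpr ⟨hxS, hxA⟩, hxN⟩)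
            (Finset.notMem_empty x)
        · exact Finset.subset_inter hAN hA
    simp only [hiff2]
  · have h1 : ¬ (Nv ∩ S = A) := fun h => hAN (h ▸ Finset.inter_subset_left)
    rw [if_neg h1]
    symm
    apply Finset.sum_eq_zero
    intro B _
    have : ¬ (A ∪ B ⊆ Nv) := fun h => hAN (Finset.subset_union_left.trans h)
    simp [this]

/-- If for every `A ⊆ S` the number of vertices whose neighborhood contains `A` is
`(1±δ)·n·p^{|A|}`, then for every `A ⊆ S` the number of vertices whose neighborhood meets `S`
exactly in `A` is at least `n·p^{|A|}·((1−p)^{s−|A|} − δ·(1−p)^{−(s−|A|)})`. -/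
theorem exact_trace_count_lower_bound {V : Type*} [Fintype V] (G : SimpleGraph V)
    (n : ℕ) (hn : Fintype.card V = n) (p δ : ℝ) (hp0 : 0 < p) (hp1 : p < 1) (hδ : 0 < δ)
    (S : Finset V) (s : ℕ) (hs : S.card = s)
    (hyp : ∀ A ⊆ S,
      (1 - δ) * n * p ^ A.card ≤
        ({v : V | (A : Set V) ⊆ G.neighborSet v}.ncard : ℝ) ∧
      ({v : V | (A : Set V) ⊆ G.neighborSet v}.ncard : ℝ) ≤
        (1 + δ) * n * p ^ A.card) :
    ∀ A ⊆ S,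
      (n : ℝ) * p ^ A.card *
          ((1 - p) ^ (s - A.card) - δ / (1 - p) ^ (s - A.card)) ≤
        ({v : V | G.neighborSet v ∩ (S : Set V) = (A : Set V)}.ncard : ℝ) := by
  classical
  intro A hA
  set a := A.card with ha
  set k := s - a with hk
  -- f B : count of v with B ⊆ N(v)
  set f : Finset V → ℝ := fun B => ({v : V | (B : Set V) ⊆ G.neighborSet v}.ncard : ℝ) with hf
  have hfcard : ∀ B : Finset V,
      f B = ((Finset.univ.filter (fun v => B ⊆ G.neighborFinset v)).card : ℝ) := by
    intro B
    show ({v : V | (B : Set V) ⊆ G.neighborSet v}.ncard : ℝ) = _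
    congr 2
    rw [Set.ncard_eq_toFinset_card']
    congr 1
    ext v
    simp only [Set.mem_toFinset, Set.mem_setOf_eq, Finset.mem_filter, Finset.mem_univ, true_and,
      ← Finset.coe_subset, SimpleGraph.neighborFinset_def, Set.coe_toFinset]
  have hecard : ({v : V | G.neighborSet v ∩ (S : Set V) = (A : Set V)}.ncard : ℝ)
      = ((Finset.univ.filter (fun v => G.neighborFinset v ∩ S = A)).card : ℝ) := by
    congr 2
    rw [Set.ncard_eq_toFinset_card']
    congr 1
    ext v
    constructor
    · intro h
      simp only [Set.mem_toFinset, Set.mem_setOf_eq] at h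
      simp only [Finset.mem_filter, Finset.mem_univ, true_and]
      apply Finset.coe_injective
      rw [Finset.coe_inter, SimpleGraph.neighborFinset_def, Set.coe_toFinset, h]
    · intro h
      simp only [Finset.mem_filter, Finset.mem_univ, true_and] at h
      simp only [Set.mem_toFinset, Set.mem_setOf_eq]
      rw [show G.neighborSet v = (G.neighborFinset v : Set V) by
        rw [SimpleGraph.neighborFinset_def, Set.coe_toFinset]]
      rw [← Finset.coe_inter, h]
  -- inclusion-exclusion identity
  have key : ({v : V | G.neighborSet v ∩ (S : Set V) = (A : Set V)}.ncard : ℝ)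
      = ∑ B ∈ (S \ A).powerset, (-1:ℝ) ^ B.card * f (A ∪ B) := by
    rw [hecard]
    have hc : ((Finset.univ.filter (fun v => G.neighborFinset v ∩ S = A)).card : ℝ)
        = ∑ v : V, (if G.neighborFinset v ∩ S = A then (1:ℝ) else 0) := by
      simp [Finset.sum_boole]
    rw [hc]
    have hc2 : ∀ B ∈ (S \ A).powerset, (-1:ℝ) ^ B.card * f (A ∪ B)
        = ∑ v : V, (-1:ℝ) ^ B.card * (if A ∪ B ⊆ G.neighborFinset v then 1 else 0) := by
      intro B _
      rw [hfcard, ← Finset.mul_sum]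
      congr 1
      simp [Finset.sum_boole]
    rw [Finset.sum_congr rfl hc2, Finset.sum_comm]
    exact Finset.sum_congr rfl fun v _ => pointwise S A (G.neighborFinset v) hA
  rw [key]
  -- termwise bounds
  have hcardAB : ∀ B ∈ (S \ A).powerset, (A ∪ B).card = a + B.card := by
    intro B hB
    rw [Finset.mem_powerset] at hB
    rw [Finset.card_union_of_disjoint]
    exact Finset.disjoint_left.mpr fun x hxA hxB =>
      (Finset.mem_sdiff.mp (hB hxB)).2 hxA
  have hsub : ∀ B ∈ (S \ A).powerset, A ∪ B ⊆ S := by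
    intro B hB
    rw [Finset.mem_powerset] at hB
    exact Finset.union_subset hA (hB.trans Finset.sdiff_subset)
  have hterm : ∀ B ∈ (S \ A).powerset,
      (-1:ℝ) ^ B.card * ((n:ℝ) * p ^ (a + B.card)) - δ * n * p ^ (a + B.card)
        ≤ (-1:ℝ) ^ B.card * f (A ∪ B) := by
    intro B hB
    have h1 := (hyp (A ∪ B) (hsub B hB)).1
    have h2 := (hyp (A ∪ B) (hsub B hB)).2
    rw [hcardAB B hB] at h1 h2
    rcases Nat.even_or_odd B.card with he | ho
    · rw [he.neg_one_pow]
      nlinarith [pow_pos hp0 (a + B.card)]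
    · rw [ho.neg_one_pow]
      nlinarith [pow_pos hp0 (a + B.card)]
  have hsum := Finset.sum_le_sum hterm
  refine le_trans ?_ hsum
  -- compute the two sums
  have hcardSA : (S \ A).card = k := by rw [Finset.card_sdiff_of_subset hA, hs]
  have hsum1 : ∑ B ∈ (S \ A).powerset, (-1:ℝ) ^ B.card * ((n:ℝ) * p ^ (a + B.card))
      = (n:ℝ) * p ^ a * (1 - p) ^ k := by
    have : ∀ B ∈ (S \ A).powerset, (-1:ℝ) ^ B.card * ((n:ℝ) * p ^ (a + B.card))
        = (n:ℝ) * p ^ a * (-p) ^ B.card := by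
      intro B _
      rw [pow_add, neg_pow]
      ring
    rw [Finset.sum_congr rfl this, ← Finset.mul_sum, sum_pow_card', hcardSA]
    ring_nf
  have hsum2 : ∑ B ∈ (S \ A).powerset, δ * n * p ^ (a + B.card)
      = δ * n * p ^ a * (p + 1) ^ k := by
    have : ∀ B ∈ (S \ A).powerset, δ * (n:ℝ) * p ^ (a + B.card)
        = δ * n * p ^ a * p ^ B.card := by
      intro B _; rw [pow_add]; ring
    rw [Finset.sum_congr rfl this, ← Finset.mul_sum, sum_pow_card', hcardSA]
  rw [Finset.sum_sub_distrib, hsum1, hsum2]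
  -- final algebra
  have h1p : (0:ℝ) < 1 - p := by linarith
  have hpow : (p + 1) ^ k ≤ (1 / (1 - p)) ^ k := by
    apply pow_le_pow_left₀ (by linarith)
    rw [le_div_iff₀ h1p]
    nlinarith
  have hδn : δ * (n:ℝ) * p ^ a * (p + 1) ^ k ≤ (n:ℝ) * p ^ a * (δ / (1 - p) ^ k) := by
    calc δ * (n:ℝ) * p ^ a * (p + 1) ^ k
        ≤ δ * (n:ℝ) * p ^ a * (1 / (1 - p)) ^ k := by
          apply mul_le_mul_of_nonneg_left hpow
          positivity
      _ = (n:ℝ) * p ^ a * (δ / (1 - p) ^ k) := by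
          rw [div_pow, one_pow]
          field_simp
  nlinarith [hδn]
end

section
/- Let V be a finite set with |V| ≥ 3 and let S, T ⊆ V be disjoint subsets with |S| < |T|. Let G be the graph on vertex set V whose edge set consists of all pairs {x,y} with x ∈ S and y ∈ T, together with all pairs {x,y} with both x, y ∈ V ∖ S. Then G is Hamiltonian, i.e. G contains a cycle visiting every vertex of V exactly once. -/
open SimpleGraph List

namespace AuxHamAux

variable {V : Type*}

/-- Build a walk from a chain of adjacent vertices. -/
def mkWalk {G : SimpleGraph V} : (l : List V) → (a b : V) →
    List.Chain G.Adj a (l ++ [b]) → G.Walk a b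
  | [], _, _, h => SimpleGraph.Walk.cons ((List.isChain_cons_cons.mp h).1) SimpleGraph.Walk.nil
  | c :: l, _, b, h =>
    SimpleGraph.Walk.cons (List.chain_cons.mp h).1 (mkWalk l c b (List.chain_cons.mp h).2)

lemma mkWalk_support {G : SimpleGraph V} : ∀ (l : List V) (a b : V) (h),
    (mkWalk (G := G) l a b h).support = a :: (l ++ [b])
  | [], a, b, h => rfl
  | c :: l, a, b, h => by
    simp [mkWalk, mkWalk_support l c b]
    exact mkWalk_support l c b _

lemma mkWalk_edge_end {G : SimpleGraph V} : ∀ (l : List V) (a b z : V) (h),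
    b ∉ a :: l → s(b, z) ∈ (mkWalk (G := G) l a b h).edges →
      z = (a :: l).getLast (by simp)
  | [], a, b, z, h, hb, he => by
    simp only [mkWalk, SimpleGraph.Walk.edges_cons, SimpleGraph.Walk.edges_nil,
      List.mem_singleton] at he
    rcases Sym2.eq_iff.mp he with ⟨h1, h2⟩ | ⟨h1, h2⟩
    · exact absurd (by rw [h1]; exact List.mem_singleton_self a : b ∈ [a]) hb
    · simp [h2]
  | c :: l, a, b, z, h, hb, he => by
    simp only [mkWalk, SimpleGraph.Walk.edges_cons, List.mem_cons] at he
    rcases he with he | he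
    · rcases Sym2.eq_iff.mp he with ⟨h1, h2⟩ | ⟨h1, h2⟩
      · exact absurd (show b ∈ a :: c :: l by rw [h1]; exact List.mem_cons_self) hb
      · exact absurd (show b ∈ a :: c :: l by
          rw [h1]; exact List.mem_cons_of_mem _ (List.mem_cons_self)) hb
    · have hb' : b ∉ c :: l := fun hmem => hb (List.mem_cons_of_mem a hmem)
      have := mkWalk_edge_end l c b z _ hb' he
      rw [this, List.getLast_cons (l := c :: l) (by simp)]

/-- A Hamiltonian cycle from a nodup list covering all vertices with a closed chain. -/
lemma ham_of_list [Fintype V] [DecidableEq V] {G : SimpleGraph V} (a b : V) (l : List V)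
    (hnd : (a :: b :: l).Nodup) (hall : ∀ v : V, v ∈ a :: b :: l) (hl : l ≠ [])
    (hc : List.Chain G.Adj a ((b :: l) ++ [a])) :
    ∃ c : G.Walk a a, c.IsHamiltonianCycle := by
  obtain ⟨hab, hc2⟩ := List.chain_cons.mp hc
  refine ⟨SimpleGraph.Walk.cons hab (mkWalk l b a hc2), ?_⟩
  have hsup : (mkWalk (G := G) l b a hc2).support = b :: (l ++ [a]) := mkWalk_support l b a hc2
  have hperm : (b :: (l ++ [a])) ~ a :: b :: l := by
    have h1 : (b :: l) ++ [a] ~ [a] ++ (b :: l) := List.perm_append_comm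
    simpa using h1
  have hnd' : (b :: (l ++ [a])).Nodup := hperm.nodup_iff.mpr hnd
  rw [SimpleGraph.Walk.isHamiltonianCycle_iff_isCycle_and_support_count_tail_eq_one]
  constructor
  · rw [SimpleGraph.Walk.cons_isCycle_iff]
    refine ⟨SimpleGraph.Walk.IsPath.mk' (by rw [hsup]; exact hnd'), ?_⟩
    intro he
    have hanotin : a ∉ b :: l := (List.nodup_cons.mp hnd).1
    have hz := mkWalk_edge_end l b a b hc2 hanotin he
    rw [List.getLast_cons hl] at hz
    have : b ∈ l := hz ▸ List.getLast_mem hl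
    exact (List.nodup_cons.mp (List.nodup_cons.mp hnd).2).1 this
  · intro v
    rw [SimpleGraph.Walk.support_cons, List.tail_cons, hsup]
    exact List.count_eq_one_of_mem hnd' (hperm.mem_iff.mpr (hall v))

/-- Interleave two lists. -/
def weave : List V → List V → List V
  | s :: sl, t :: tl => s :: t :: weave sl tl
  | [], tl => tl
  | sl, [] => sl

lemma weave_perm : ∀ (l₁ l₂ : List V), weave l₁ l₂ ~ l₁ ++ l₂
  | [], l₂ => by simp [weave]
  | s :: l₁, [] => by simp [weave]
  | s :: l₁, t :: l₂ => by
    have ih := weave_perm l₁ l₂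
    calc s :: t :: weave l₁ l₂ ~ s :: t :: (l₁ ++ l₂) := (ih.cons t).cons s
      _ ~ s :: (l₁ ++ t :: l₂) := (List.perm_middle.symm).cons s

lemma weave_append_head : ∀ {l₁ l₂ rest : List V}, l₁.length = l₂.length → ∀ {y : V},
    y ∈ (weave l₁ l₂ ++ rest).head? → y ∈ l₁ ∨ y ∈ rest.head?
  | [], [], rest, _, y, hy => Or.inr (by simpa [weave] using hy)
  | [], t :: l₂, rest, hlen, y, hy => by simp at hlen
  | s :: l₁, [], rest, hlen, y, hy => by simp at hlen
  | s :: l₁, t :: l₂, rest, _, y, hy => by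
    left
    simp only [weave, List.cons_append, List.head?_cons, Option.mem_def,
      Option.some.injEq] at hy
    rw [hy]
    exact List.mem_cons_self

lemma chain'_weave_append {R : V → V → Prop} : ∀ (l₁ l₂ rest : List V),
    l₁.length = l₂.length →
    (∀ s ∈ l₁, ∀ t ∈ l₂, R s t ∧ R t s) →
    (∀ t ∈ l₂, ∀ y ∈ rest.head?, R t y) →
    rest.Chain' R →
    (weave l₁ l₂ ++ rest).Chain' R
  | [], [], rest, _, _, _, hrest => by simpa [weave] using hrest
  | [], t :: l₂, rest, hlen, _, _, _ => by simp at hlen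
  | s :: l₁, [], rest, hlen, _, _, _ => by simp at hlen
  | s :: l₁, t :: l₂, rest, hlen, hcross, hlink, hrest => by
    have ih := chain'_weave_append l₁ l₂ rest (by simpa using hlen)
      (fun s hs t ht => hcross s (List.mem_cons_of_mem _ hs) t (List.mem_cons_of_mem _ ht))
      (fun t ht y hy => hlink t (List.mem_cons_of_mem _ ht) y hy) hrest
    show List.Chain' R (s :: t :: (weave l₁ l₂ ++ rest))
    unfold List.Chain'
    rw [List.isChain_cons_cons]
    refine ⟨(hcross s (List.mem_cons_self) t (List.mem_cons_self)).1, ?_⟩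
    rw [List.isChain_cons]
    refine ⟨?_, ih⟩
    intro y hy
    rcases weave_append_head (by simpa using hlen) hy with h | h
    · exact (hcross y (List.mem_cons_of_mem _ h) t (List.mem_cons_self)).2
    · exact hlink t (List.mem_cons_self) y h

end AuxHamAux

open AuxHamAux

/-- The auxiliary graph (complete bipartite between disjoint `S` and `T` plus a complete graph
on the complement of `S`) is Hamiltonian whenever `|S| < |T|` and `|V| ≥ 3`. -/
theorem auxiliary_graph_hamiltonian {V : Type*} [Fintype V] [DecidableEq V]
    (h3 : 3 ≤ Fintype.card V) (S T : Finset V) (hST : Disjoint S T)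
    (hcard : S.card < T.card) (G : SimpleGraph V)
    (hG : ∀ x y : V, G.Adj x y ↔ x ≠ y ∧
      ((x ∈ S ∧ y ∈ T) ∨ (y ∈ S ∧ x ∈ T) ∨ (x ∉ S ∧ y ∉ S))) :
    ∃ a : V, ∃ c : G.Walk a a, c.IsHamiltonianCycle := by
  classical
  have adjST : ∀ x ∈ S, ∀ y ∈ T, G.Adj x y := by
    intro x hx y hy
    exact (hG x y).mpr ⟨fun h => Finset.disjoint_left.mp hST hx (h ▸ hy), Or.inl ⟨hx, hy⟩⟩
  have adjTS : ∀ x ∈ T, ∀ y ∈ S, G.Adj x y := fun x hx y hy => (adjST y hy x hx).symm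
  have adjNN : ∀ x y : V, x ∉ S → y ∉ S → x ≠ y → G.Adj x y := fun x y hx hy hne =>
    (hG x y).mpr ⟨hne, Or.inr (Or.inr ⟨hx, hy⟩)⟩
  set sl := S.toList with hsl_def
  set tl := T.toList with htl_def
  set rl := (Finset.univ \ (S ∪ T)).toList with hrl_def
  set k := S.card with hk_def
  have hktl : k < tl.length := by rw [htl_def, Finset.length_toList]; exact hcard
  have hsl_len : sl.length = k := by rw [hsl_def, Finset.length_toList]
  have hslS : ∀ x ∈ sl, x ∈ S := fun x hx => Finset.mem_toList.mp hx
  have htlT : ∀ x ∈ tl, x ∈ T := fun x hx => Finset.mem_toList.mp hx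
  have hrlR : ∀ x ∈ rl, x ∉ S ∧ x ∉ T := by
    intro x hx
    have h := Finset.mem_toList.mp hx
    rw [Finset.mem_sdiff, Finset.mem_union] at h
    exact ⟨fun h' => h.2 (Or.inl h'), fun h' => h.2 (Or.inr h')⟩
  have hTnotS : ∀ x ∈ T, x ∉ S := fun x hx => Finset.disjoint_right.mp hST hx
  set L := weave sl (tl.take k) ++ (rl ++ tl.drop k) with hL_def
  have hperm : L ~ Finset.univ.toList := by
    refine Multiset.coe_eq_coe.mp ?_
    have h1 : ((weave sl (tl.take k) : List V) : Multiset V) = ↑sl + ↑(tl.take k) := by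
      rw [Multiset.coe_eq_coe.mpr (weave_perm sl (tl.take k))]
      simp
    have htd : (↑(tl.take k) : Multiset V) + ↑(tl.drop k) = ↑tl := by
      rw [Multiset.coe_add]
      congr 1
      exact List.take_append_drop k tl
    have hst : (S.val : Multiset V) + T.val = (S ∪ T).val := by
      rw [← Finset.disjUnion_eq_union S T hST]; rfl
    have huniv : ((S ∪ T).val : Multiset V) + (Finset.univ \ (S ∪ T)).val =
        Finset.univ.val := by
      rw [Finset.sdiff_val]
      exact add_tsub_cancel_of_le (Finset.val_le_iff.mpr (Finset.subset_univ _))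
    calc (↑L : Multiset V) = ↑sl + ↑(tl.take k) + (↑rl + ↑(tl.drop k)) := by
          rw [hL_def, ← Multiset.coe_add, h1, ← Multiset.coe_add]
      _ = (↑sl + ↑tl) + ↑rl := by rw [← htd]; abel
      _ = Finset.univ.val := by
          rw [hsl_def, htl_def, hrl_def, Finset.coe_toList, Finset.coe_toList,
            Finset.coe_toList, hst, huniv]
      _ = ((Finset.univ.toList : List V) : Multiset V) := by rw [Finset.coe_toList]
  have hndL : L.Nodup := hperm.nodup_iff.mpr (Finset.nodup_toList _)
  have hallL : ∀ v : V, v ∈ L := fun v =>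
    hperm.mem_iff.mpr (Finset.mem_toList.mpr (Finset.mem_univ v))
  have hlenL : L.length = Fintype.card V := by
    rw [hperm.length_eq, Finset.length_toList, Finset.card_univ]
  have htd_ne : tl.drop k ≠ [] := by
    intro h
    have h2 := (List.length_drop : (tl.drop k).length = tl.length - k)
    rw [h] at h2
    simp at h2
    omega
  obtain ⟨a, l₀, hLal⟩ : ∃ a l₀, L = a :: l₀ := by
    cases hLe : L with
    | nil => rw [hLe] at hlenL; simp at hlenL; omega
    | cons a l₀ => exact ⟨a, l₀, rfl⟩
  have hl₀_ne : l₀ ≠ [] := by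
    intro h
    rw [hLal, h] at hlenL
    simp at hlenL
    omega
  -- a ∈ S if sl nonempty, otherwise a ∉ S and a ≠ last of L
  have hchain : List.Chain' G.Adj (L ++ [a]) := by
    have hrw : L ++ [a] = weave sl (tl.take k) ++ ((rl ++ tl.drop k) ++ [a]) := by
      rw [hL_def, List.append_assoc]
    have hndrtd : (rl ++ tl.drop k).Nodup := hndL.of_append_right
    have hnodtl : tl.Nodup := by rw [htl_def]; exact Finset.nodup_toList _
    have hdisj_td : List.Disjoint (tl.take k) (tl.drop k) :=
      List.disjoint_of_nodup_append (by rw [List.take_append_drop]; exact hnodtl)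
    have hmem_rtd : ∀ y ∈ rl ++ tl.drop k, y ∉ S := by
      intro y hy
      rcases List.mem_append.mp hy with h | h
      · exact (hrlR y h).1
      · exact hTnotS y (htlT y (List.mem_of_mem_drop h))
    rw [hrw]
    apply chain'_weave_append
    · rw [hsl_len, List.length_take]; omega
    · intro s hs t ht
      have hsS := hslS s hs
      have htT := htlT t (List.mem_of_mem_take ht)
      exact ⟨adjST s hsS t htT, adjTS t htT s hsS⟩
    · intro t ht y hy
      have htT := htlT t (List.mem_of_mem_take ht)
      have hy' : y ∈ rl ++ tl.drop k := by
        rw [List.head?_append_of_ne_nil _ (fun h => htd_ne (List.append_eq_nil_iff.mp h).2)] at hy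
        exact List.mem_of_mem_head? hy
      refine adjNN t y (hTnotS t htT) (hmem_rtd y hy') ?_
      intro he
      rcases List.mem_append.mp hy' with h | h
      · exact (hrlR y h).2 (he ▸ htT)
      · exact hdisj_td (he ▸ ht) h
    · unfold List.Chain'
      rw [List.isChain_append]
      refine ⟨?_, List.isChain_singleton a, ?_⟩
      · apply List.Pairwise.isChain
        refine hndrtd.imp_of_mem ?_
        intro x y hx hy hne
        exact adjNN x y (hmem_rtd x hx) (hmem_rtd y hy) hne
      · intro x hx y hy
        rw [List.head?_cons, Option.mem_def, Option.some.injEq] at hy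
        subst hy
        have hx' : x ∈ (tl.drop k).getLast? := by
          rwa [List.getLast?_append_of_ne_nil _ htd_ne] at hx
        have hxT : x ∈ T := htlT x (List.mem_of_mem_drop (List.mem_of_mem_getLast? hx'))
        rcases List.eq_nil_or_concat sl with hsl0 | ⟨sl', s, hsl'⟩
        · -- S is empty : a ∉ S, x ∉ S, x ≠ a
          have hk0 : k = 0 := by rw [← hsl_len, hsl0]; rfl
          have hLrtd : L = rl ++ tl.drop k := by
            rw [hL_def, hsl0, hk0]
            simp [weave]
          have haS : a ∉ S := hmem_rtd a (by rw [← hLrtd, hLal]; exact List.mem_cons_self)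
          refine adjNN x a (hTnotS x hxT) haS ?_
          intro he
          -- x is the last of L, a is the head; L is nodup with l₀ ≠ []
          have hxlast : x ∈ L.getLast? := by
            rw [hLrtd, List.getLast?_append_of_ne_nil _ htd_ne]
            exact hx'
          rw [hLal] at hxlast
          have : x = (a :: l₀).getLast (by simp) := by
            rw [List.getLast?_eq_getLast_of_ne_nil (by simp)] at hxlast
            exact (Option.mem_some_iff.mp hxlast).symm
          rw [List.getLast_cons hl₀_ne] at this
          have hxl₀ : x ∈ l₀ := this ▸ List.getLast_mem hl₀_ne
          have : a ∉ l₀ := (List.nodup_cons.mp (hLal ▸ hndL)).1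
          exact this (he ▸ hxl₀)
        · -- S nonempty : a is the head of sl, hence a ∈ S
          have hkpos : 0 < k := by
            rw [← hsl_len, hsl']
            simp
          have haS : a ∈ S := by
            obtain ⟨s₀, sl₀, hsl₀⟩ : ∃ s₀ sl₀, sl = s₀ :: sl₀ := by
              cases h : sl with
              | nil => rw [h] at hsl'; simp at hsl'
              | cons s₀ sl₀ => exact ⟨s₀, sl₀, rfl⟩
            obtain ⟨t₀, tl₀, htl₀⟩ : ∃ t₀ tl₀, tl.take k = t₀ :: tl₀ := by
              cases h : tl.take k with
              | nil =>
                have := (List.length_take : (tl.take k).length = min k tl.length)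
                rw [h] at this
                simp at this
                omega
              | cons t₀ tl₀ => exact ⟨t₀, tl₀, rfl⟩
            have : L = s₀ :: (t₀ :: weave sl₀ tl₀ ++ (rl ++ tl.drop k)) := by
              rw [hL_def, hsl₀, htl₀]
              rfl
            rw [hLal] at this
            have ha : a = s₀ := by injection this with h1 _
            rw [ha]
            exact hslS s₀ (hsl₀ ▸ List.mem_cons_self)
          exact adjTS x hxT a haS
  -- assemble
  obtain ⟨b, l, hl₀⟩ : ∃ b l, l₀ = b :: l := by
    cases h : l₀ with
    | nil => exact absurd h hl₀_ne
    | cons b l => exact ⟨b, l, rfl⟩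
  have hLabl : L = a :: b :: l := by rw [hLal, hl₀]
  have hlne : l ≠ [] := by
    intro h
    rw [hLabl, h] at hlenL
    simp at hlenL
    omega
  have hcc : List.Chain G.Adj a ((b :: l) ++ [a]) := by
    have h := hchain
    rw [hLabl] at h
    exact h
  obtain ⟨c, hc⟩ := ham_of_list a b l (hLabl ▸ hndL) (fun v => hLabl ▸ hallL v) hlne hcc
  exact ⟨a, c, hc⟩
end

section
/- Let G be a Hamiltonian graph on a finite vertex set V, and let S, T ⊆ V be disjoint sets such that S is an independent set in G and every neighbor of every vertex of S lies in T. Then |S| ≤ |T|; moreover, if additionally S ∪ T ≠ V and S is nonempty, then |S| < |T|. -/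
open List

/-- From a Hamiltonian cycle we extract a list of all vertices, without duplicates,
such that consecutive entries (cyclically) are adjacent. -/
lemma exists_cyclic_list {V : Type*} [Fintype V] [DecidableEq V]
    (G : SimpleGraph V) (hG : ∃ a : V, ∃ c : G.Walk a a, c.IsHamiltonianCycle) :
    ∃ l : List V, l.Nodup ∧ (∀ v, v ∈ l) ∧
      ∀ i, (h : i < l.length) →
        G.Adj (l[i]'h) (l[(i+1) % l.length]'(Nat.mod_lt _ (Nat.lt_of_le_of_lt (Nat.zero_le _) h))) := by
  obtain ⟨a, c, hc⟩ := hG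
  refine ⟨c.support.tail, ?_, ?_, ?_⟩
  · have h1 : ∀ v, c.support.tail.count v = 1 := by
      intro v
      have := hc.isHamiltonian_tail v
      rwa [SimpleGraph.Walk.support_tail_of_not_nil c hc.1.not_nil] at this
    exact List.nodup_iff_count_le_one.2 fun v => le_of_eq (h1 v)
  · intro v
    have h1 : c.support.tail.count v = 1 := by
      have := hc.isHamiltonian_tail v
      rwa [SimpleGraph.Walk.support_tail_of_not_nil c hc.1.not_nil] at this
    exact List.count_pos_iff.1 (by omega)
  · intro i h
    set l := c.support.tail with hl
    have hsup : c.support = a :: l := c.support_eq_cons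
    have hne : l ≠ [] := by
      intro hnil
      exact absurd h (by simp [hnil])
    have hlast : l.getLast hne = a := by
      show c.support.tail.getLast hne = a
      rw [List.getLast_tail]
      exact c.getLast_support
    have hchain : List.Chain' G.Adj (a :: l) := by
      rw [← hsup]; exact c.isChain_adj_support
    have hch := List.isChain_iff_getElem.1 hchain
    have gcongr : ∀ (i j : ℕ) (hi : i < l.length) (hj : j < l.length), i = j →
        l[i]'hi = l[j]'hj := by
      rintro i j hi hj rfl; rfl
    have hcons : (a :: l).length - 1 = l.length := by simp
    by_cases hi : i + 1 < l.length
    · have key := hch (i+1) (by simpa using by omega)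
      simp only [List.get_eq_getElem, List.getElem_cons_succ] at key
      rw [gcongr ((i+1) % l.length) (i+1) _ hi (Nat.mod_eq_of_lt hi)]
      exact key
    · have hi' : i + 1 = l.length := by omega
      have key := hch 0 (by simpa using by omega)
      simp only [List.get_eq_getElem, List.getElem_cons_succ, List.getElem_cons_zero] at key
      have h0 : 0 < l.length := by omega
      rw [gcongr ((i+1) % l.length) 0 _ h0 (by rw [hi']; simp)]
      have e3 : l[i]'h = a := by
        rw [gcongr i (l.length - 1) h (by omega) (by omega)]
        have := hlast
        rw [List.getLast_eq_getElem hne] at this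
        exact this
      rw [e3]
      exact key

/-- In a Hamiltonian graph, if `S` is an independent set all of whose neighbors lie in a set `T`
disjoint from `S`, then `|S| ≤ |T|`; moreover `|S| < |T|` if additionally `S ∪ T ≠ V` and
`S ≠ ∅`. -/
theorem hamiltonian_independent_set_bound {V : Type*} [Fintype V] [DecidableEq V]
    (G : SimpleGraph V) (hG : ∃ a : V, ∃ c : G.Walk a a, c.IsHamiltonianCycle)
    (S T : Finset V) (hST : Disjoint S T)
    (hind : ∀ x ∈ S, ∀ y ∈ S, ¬ G.Adj x y)
    (hnbr : ∀ v ∈ S, ∀ w : V, G.Adj v w → w ∈ T) :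
    S.card ≤ T.card ∧
      ((S ∪ T ≠ Finset.univ ∧ S.Nonempty) → S.card < T.card) := by
  obtain ⟨l, nd, hmem, hadj⟩ := exists_cyclic_list G hG
  set n := l.length with hn
  have hidx : ∀ v : V, l.idxOf v < n := fun v => List.idxOf_lt_length_iff.2 (hmem v)
  -- the successor function along the cycle
  set σ : V → V := fun v => l[(l.idxOf v + 1) % n]'(Nat.mod_lt _ (Nat.lt_of_le_of_lt (Nat.zero_le _) (hidx v))) with hσ
  have hadjσ : ∀ v, G.Adj v (σ v) := by
    intro v
    have := hadj (l.idxOf v) (hidx v)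
    rwa [List.getElem_idxOf (hidx v)] at this
  have hidxσ : ∀ j, (hj : j < n) → l.idxOf (l[j]'hj) = j := fun j hj =>
    nd.idxOf_getElem j hj
  have hinj : Function.Injective σ := by
    intro u v huv
    have hu := hidx u
    have hv := hidx v
    simp only [hσ] at huv
    have h1 : (l.idxOf u + 1) % n = (l.idxOf v + 1) % n := by
      have := congrArg (l.idxOf ·) huv
      simpa [hidxσ] using this
    have hu1 : (l.idxOf u + 1) % n = if l.idxOf u + 1 = n then 0 else l.idxOf u + 1 := by
      split
      · simp [*]
      · exact Nat.mod_eq_of_lt (by omega)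
    have hv1 : (l.idxOf v + 1) % n = if l.idxOf v + 1 = n then 0 else l.idxOf v + 1 := by
      split
      · simp [*]
      · exact Nat.mod_eq_of_lt (by omega)
    have h2 : l.idxOf u = l.idxOf v := by
      rw [hu1, hv1] at h1
      split_ifs at h1 <;> omega
    have := (List.idxOf_inj (hmem u)).1 h2
    exact this
  have himg : S.image σ ⊆ T := by
    intro t ht
    obtain ⟨s, hs, rfl⟩ := Finset.mem_image.1 ht
    exact hnbr s hs _ (hadjσ s)
  have hcard : S.card = (S.image σ).card := (Finset.card_image_of_injective S hinj).symm
  constructor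
  · rw [hcard]; exact Finset.card_le_card himg
  rintro ⟨hU, s₀, hs₀⟩
  -- pick a vertex outside S ∪ T
  obtain ⟨v₀, hv₀⟩ : ∃ v, v ∉ S ∪ T := by
    by_contra hcon
    push_neg at hcon
    exact hU (Finset.eq_univ_iff_forall.2 hcon)
  have hv₀S : v₀ ∉ S := fun h => hv₀ (Finset.mem_union_left _ h)
  have hv₀T : v₀ ∉ T := fun h => hv₀ (Finset.mem_union_right _ h)
  -- iterate formula
  have hiter : ∀ m, σ^[m] v₀ = l[(l.idxOf v₀ + m) % n]'(Nat.mod_lt _ (Nat.lt_of_le_of_lt (Nat.zero_le _) (hidx v₀))) := by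
    intro m
    induction m with
    | zero => simp [Nat.mod_eq_of_lt (hidx v₀), List.getElem_idxOf (hidx v₀)]
    | succ m ih =>
      rw [Function.iterate_succ_apply', ih]
      simp only [hσ]
      congr 1
      rw [hidxσ _ (Nat.mod_lt _ (Nat.lt_of_le_of_lt (Nat.zero_le _) (hidx v₀)))]
      rw [Nat.mod_add_mod, Nat.add_assoc]
  have hpos : 0 < n := Nat.lt_of_le_of_lt (Nat.zero_le _) (hidx v₀)
  -- some iterate lands in S
  have hex : ∃ m, σ^[m] v₀ ∈ S := by
    refine ⟨n + l.idxOf s₀ - l.idxOf v₀, ?_⟩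
    rw [hiter]
    have h1 : (l.idxOf v₀ + (n + l.idxOf s₀ - l.idxOf v₀)) % n = l.idxOf s₀ := by
      have := hidx v₀
      have := hidx s₀
      rw [show l.idxOf v₀ + (n + l.idxOf s₀ - l.idxOf v₀) = l.idxOf s₀ + n by omega]
      simp [Nat.mod_eq_of_lt (hidx s₀)]
    have : l[(l.idxOf v₀ + (n + l.idxOf s₀ - l.idxOf v₀)) % n]'(Nat.mod_lt _ hpos)
        = l[l.idxOf s₀]'(hidx s₀) := by
      congr 1
    rw [this, List.getElem_idxOf (hidx s₀)]
    exact hs₀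
  classical
  set k := Nat.find hex with hk
  have hkS : σ^[k] v₀ ∈ S := Nat.find_spec hex
  have hmin : ∀ j < k, σ^[j] v₀ ∉ S := fun j hj => Nat.find_min hex hj
  have hk0 : k ≠ 0 := by
    intro h
    rw [h] at hkS
    exact hv₀S hkS
  set p := σ^[k-1] v₀ with hp
  have hps : σ p = σ^[k] v₀ := by
    rw [hp, ← Function.iterate_succ_apply' σ (k-1) v₀]
    congr 1
    omega
  have hpT : p ∈ T := by
    have hadjp : G.Adj (σ^[k] v₀) p := by
      rw [← hps]; exact (hadjσ p).symm
    exact hnbr _ hkS p hadjp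
  have hpimg : p ∉ S.image σ := by
    intro hcon
    obtain ⟨s', hs', hs'e⟩ := Finset.mem_image.1 hcon
    by_cases hk1 : k = 1
    · have : p = v₀ := by rw [hp, hk1]; simp
      rw [this] at hs'e
      have : v₀ ∈ T := hnbr s' hs' v₀ (hs'e ▸ hadjσ s')
      exact hv₀T this
    · have hk2 : 2 ≤ k := by omega
      have : σ (σ^[k-2] v₀) = σ s' := by
        rw [hs'e, hp, ← Function.iterate_succ_apply' σ (k-2) v₀]
        congr 1
        omega
      have he := hinj this
      rw [← he] at hs'
      exact hmin (k-2) (by omega) hs'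
  have hsub : insert p (S.image σ) ⊆ T := by
    intro x hx
    rcases Finset.mem_insert.1 hx with rfl | hx
    · exact hpT
    · exact himg hx
  have := Finset.card_le_card hsub
  rw [Finset.card_insert_of_notMem hpimg] at this
  omega
end
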